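/- arXiv:1201.5494 — 8 statements merged into one kernel-verified Lean document; each statement's English description precedes it below -/
import Mathlib

section
/- Let λ > 0 and s = √λ. Then the solution w₂(·,λ) satisfies the integral equation w₂(x,λ) = (γ₁/δ₁)·w₁(π/2,λ)·cos((s/p₂)(x−π/2)) + (γ₂·p₂·w₁′(π/2,λ)/(s·δ₂))·sin((s/p₂)(x−π/2)) − (1/s)·∫_{π/2}ˣ (q(τ)/p₂)·sin((s/p₂)(x−τ))·w₂(τ−Δ(τ),λ) dτ for every x ∈ [π/2,π]. -/
open Set Filter intervalIntegral

noncomputable section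

lemma contOn_update_aux {f : ℝ → ℝ} {a b L : ℝ}
    (hf : ContinuousOn f (Set.Ioc a b))
    (hlim : Filter.Tendsto f (nhdsWithin a (Set.Ioi a)) (nhds L)) :
    ContinuousOn (Function.update f a L) (Set.Icc a b) := by
  intro t ht
  rcases eq_or_lt_of_le ht.1 with h | h
  · subst h
    have h1 : Tendsto (Function.update f a L) (nhdsWithin a (Set.Ioi a)) (nhds L) := by
      apply hlim.congr'
      filter_upwards [self_mem_nhdsWithin] with y hy
      exact (Function.update_of_ne (ne_of_gt hy) _ _).symm
    have h2 : Tendsto (Function.update f a L) (pure a) (nhds L) := by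
      have := tendsto_pure_nhds (Function.update f a L) a
      rwa [Function.update_self] at this
    have h3 : Tendsto (Function.update f a L) (nhdsWithin a (insert a (Set.Ioi a))) (nhds L) := by
      rw [nhdsWithin_insert]
      exact h2.sup h1
    have hsub : Set.Icc a b ⊆ insert a (Set.Ioi a) := by
      intro y hy
      rcases eq_or_lt_of_le hy.1 with h' | h'
      · exact Or.inl h'.symm
      · exact Or.inr h'
    have : ContinuousWithinAt (Function.update f a L) (Set.Icc a b) a := by
      unfold ContinuousWithinAt
      rw [Function.update_self]
      exact h3.mono_left (nhdsWithin_mono a hsub)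
    exact this
  · have heq : Set.EqOn (Function.update f a L) f (Set.Ioc a b) :=
      fun y hy => Function.update_of_ne (ne_of_gt hy.1) _ _
    have h2 : ContinuousWithinAt (Function.update f a L) (Set.Ioc a b) t :=
      (hf t ⟨h, ht.2⟩).congr heq (heq ⟨h, ht.2⟩)
    have hmem : Set.Ioi a ∈ nhds t := isOpen_Ioi.mem_nhds h
    have hint : Set.Icc a b ∩ Set.Ioi a = Set.Ioc a b := by
      ext y
      constructor
      · rintro ⟨⟨_, h2'⟩, h3'⟩; exact ⟨h3', h2'⟩
      · rintro ⟨h1', h2'⟩; exact ⟨⟨le_of_lt h1', h2'⟩, h1'⟩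
    rw [← hint] at h2
    exact (continuousWithinAt_inter hmem).mp h2


theorem stmt1
    (p1 p2 γ1 γ2 δ1 δ2 d : ℝ) (q Δ : ℝ → ℝ)
    (hp1 : 0 < p1) (hp2 : 0 < p2)
    (hδ1 : δ1 ≠ 0) (hδ2 : δ2 ≠ 0)
    (hγδ : γ1 * δ2 * p1 = γ2 * δ1 * p2)
    (hqc1 : ContinuousOn q (Set.Ico 0 (Real.pi/2)))
    (hqc2 : ContinuousOn q (Set.Ioc (Real.pi/2) Real.pi))
    (hqlim1 : ∃ L : ℝ, Filter.Tendsto q (nhdsWithin (Real.pi/2) (Set.Iio (Real.pi/2))) (nhds L))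
    (hqlim2 : ∃ L : ℝ, Filter.Tendsto q (nhdsWithin (Real.pi/2) (Set.Ioi (Real.pi/2))) (nhds L))
    (hΔc1 : ContinuousOn Δ (Set.Ico 0 (Real.pi/2)))
    (hΔc2 : ContinuousOn Δ (Set.Ioc (Real.pi/2) Real.pi))
    (hΔlim1 : ∃ L : ℝ, Filter.Tendsto Δ (nhdsWithin (Real.pi/2) (Set.Iio (Real.pi/2))) (nhds L))
    (hΔlim2 : ∃ L : ℝ, Filter.Tendsto Δ (nhdsWithin (Real.pi/2) (Set.Ioi (Real.pi/2))) (nhds L))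
    (hΔnonneg : ∀ x ∈ Set.Ico (0:ℝ) (Real.pi/2) ∪ Set.Ioc (Real.pi/2) Real.pi, 0 ≤ Δ x)
    (hret1 : ∀ x ∈ Set.Ico (0:ℝ) (Real.pi/2), 0 ≤ x - Δ x)
    (hret2 : ∀ x ∈ Set.Ioc (Real.pi/2) Real.pi, Real.pi/2 ≤ x - Δ x)
    (w1 w1' w1'' : ℝ → ℝ → ℝ)
    (hw1d : ∀ lam : ℝ, 0 < lam → ∀ x ∈ Set.Icc (0:ℝ) (Real.pi/2),
      HasDerivAt (w1 lam) (w1' lam x) x ∧ HasDerivAt (w1' lam) (w1'' lam x) x)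
    (hw1eq : ∀ lam : ℝ, 0 < lam → ∀ x ∈ Set.Icc (0:ℝ) (Real.pi/2),
      p1^2 * w1'' lam x + q x * w1 lam (x - Δ x) + lam * w1 lam x = 0)
    (hw1ic : ∀ lam : ℝ, 0 < lam → w1 lam 0 = p1 ∧ w1' lam 0 = -Real.sqrt lam)
    (w2 w2' w2'' : ℝ → ℝ → ℝ)
    (hw2d : ∀ lam : ℝ, 0 < lam → ∀ x ∈ Set.Icc (Real.pi/2) Real.pi,
      HasDerivAt (w2 lam) (w2' lam x) x ∧ HasDerivAt (w2' lam) (w2'' lam x) x)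
    (hw2eq : ∀ lam : ℝ, 0 < lam → ∀ x ∈ Set.Icc (Real.pi/2) Real.pi,
      p2^2 * w2'' lam x + q x * w2 lam (x - Δ x) + lam * w2 lam x = 0)
    (hw2ic : ∀ lam : ℝ, 0 < lam →
      w2 lam (Real.pi/2) = (γ1/δ1) * w1 lam (Real.pi/2) ∧
      w2' lam (Real.pi/2) = (γ2/δ2) * w1' lam (Real.pi/2))
    :
    ∀ lam : ℝ, 0 < lam → ∀ x ∈ Set.Icc (Real.pi/2) Real.pi,
      w2 lam x = (γ1/δ1) * w1 lam (Real.pi/2) * Real.cos (Real.sqrt lam / p2 * (x - Real.pi/2))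
        + (γ2 * p2 * w1' lam (Real.pi/2) / (Real.sqrt lam * δ2)) * Real.sin (Real.sqrt lam / p2 * (x - Real.pi/2))
        - (1 / Real.sqrt lam) *
          ∫ τ in (Real.pi/2)..x, (q τ / p2) * Real.sin (Real.sqrt lam / p2 * (x - τ)) * w2 lam (τ - Δ τ) := by
  intro lam hl x hx
  obtain ⟨hx1, hx2⟩ := hx
  set s := Real.sqrt lam with hs_def
  have hs : 0 < s := Real.sqrt_pos.mpr hl
  have hlam : lam = s^2 := (Real.sq_sqrt hl.le).symm
  have hπ : (0:ℝ) < Real.pi := Real.pi_pos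
  set c := s / p2 with hc_def
  obtain ⟨L, hL⟩ := hqlim2
  obtain ⟨M, hM⟩ := hΔlim2
  set qt := Function.update q (Real.pi/2) L with hqt
  set Δt := Function.update Δ (Real.pi/2) M with hΔt
  have hqtc : ContinuousOn qt (Set.Icc (Real.pi/2) Real.pi) := contOn_update_aux hqc2 hL
  have hΔtc : ContinuousOn Δt (Set.Icc (Real.pi/2) Real.pi) := contOn_update_aux hΔc2 hM
  set inr : ℝ → ℝ := fun t => max (Real.pi/2) (min Real.pi (t - Δt t)) with hinr
  have hinrc : ContinuousOn inr (Set.Icc (Real.pi/2) Real.pi) :=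
    continuousOn_const.sup (continuousOn_const.inf (continuousOn_id.sub hΔtc))
  have hinrmaps : Set.MapsTo inr (Set.Icc (Real.pi/2) Real.pi) (Set.Icc (Real.pi/2) Real.pi) :=
    fun t ht => ⟨le_max_left _ _, max_le (by linarith) (min_le_left _ _)⟩
  have hw2c : ContinuousOn (w2 lam) (Set.Icc (Real.pi/2) Real.pi) :=
    fun t ht => ((hw2d lam hl t ht).1.continuousAt).continuousWithinAt
  set f : ℝ → ℝ := fun t => (q t / p2) * Real.sin (c*(x-t)) * w2 lam (t - Δ t) with hf
  set ft : ℝ → ℝ := fun t => (qt t / p2) * Real.sin (c*(x-t)) * w2 lam (inr t) with hft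
  have hftc : ContinuousOn ft (Set.Icc (Real.pi/2) Real.pi) :=
    ((hqtc.div_const p2).mul ((Real.continuous_sin.comp (continuous_const.mul (continuous_const.sub continuous_id))).continuousOn)).mul
      (hw2c.comp hinrc hinrmaps)
  have hfti : IntervalIntegrable ft MeasureTheory.volume (Real.pi/2) x := by
    apply ContinuousOn.intervalIntegrable
    rw [Set.uIcc_of_le hx1]
    exact hftc.mono (Set.Icc_subset_Icc (le_refl _) hx2)
  have heqon : Set.EqOn f ft (Set.Ioc (Real.pi/2) x) := by
    intro t ht
    have ht' : t ∈ Set.Ioc (Real.pi/2) Real.pi := ⟨ht.1, le_trans ht.2 hx2⟩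
    have h1 : Real.pi/2 ≤ t - Δ t := hret2 t ht'
    have h0 : 0 ≤ Δ t := hΔnonneg t (Or.inr ht')
    have h2 : t - Δ t ≤ Real.pi := by linarith [ht'.2]
    have hqe : qt t = q t := Function.update_of_ne (ne_of_gt ht.1) _ _
    have hΔe : Δt t = Δ t := Function.update_of_ne (ne_of_gt ht.1) _ _
    have hinre : inr t = t - Δ t := by
      rw [hinr]
      simp only [hΔe]
      rw [min_eq_right h2, max_eq_right h1]
    simp only [hf, hft, hqe, hinre]
  have hfi : IntervalIntegrable f MeasureTheory.volume (Real.pi/2) x := by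
    rw [intervalIntegrable_iff_integrableOn_Ioc_of_le hx1] at hfti ⊢
    exact hfti.congr_fun (fun t ht => (heqon ht).symm) measurableSet_Ioc
  set φ : ℝ → ℝ := fun t => w2 lam t * Real.cos (c*(x-t)) + (p2/s) * w2' lam t * Real.sin (c*(x-t)) with hφ
  set φd : ℝ → ℝ := fun t => f t * (-(1/s)) with hφd
  have hφi : IntervalIntegrable φd MeasureTheory.volume (Real.pi/2) x := hfi.mul_const _
  have hφder : ∀ t ∈ Set.uIcc (Real.pi/2) x, HasDerivAt φ (φd t) t := by
    intro t ht
    rw [Set.uIcc_of_le hx1] at ht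
    have htI : t ∈ Set.Icc (Real.pi/2) Real.pi := ⟨ht.1, le_trans ht.2 hx2⟩
    obtain ⟨hd1, hd2⟩ := hw2d lam hl t htI
    have hu : HasDerivAt (fun τ : ℝ => c*(x-τ)) (c * (0 - 1)) t :=
      ((hasDerivAt_const t x).sub (hasDerivAt_id t)).const_mul c
    have hcos : HasDerivAt (fun τ : ℝ => Real.cos (c*(x-τ)))
        (-Real.sin (c*(x-t)) * (c * (0 - 1))) t := by
      simpa [Function.comp_def] using (Real.hasDerivAt_cos (c*(x-t))).comp t hu
    have hsin : HasDerivAt (fun τ : ℝ => Real.sin (c*(x-τ)))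
        (Real.cos (c*(x-t)) * (c * (0 - 1))) t := by
      simpa [Function.comp_def] using (Real.hasDerivAt_sin (c*(x-t))).comp t hu
    have hraw : HasDerivAt φ
        (w2' lam t * Real.cos (c*(x-t)) + w2 lam t * (-Real.sin (c*(x-t)) * (c * (0 - 1)))
          + ((p2/s) * w2'' lam t * Real.sin (c*(x-t))
            + (p2/s) * w2' lam t * (Real.cos (c*(x-t)) * (c * (0 - 1))))) t :=
      (hd1.mul hcos).add ((hd2.const_mul (p2/s)).mul hsin)
    have hode := hw2eq lam hl t htI
    have hA'' : w2'' lam t = (-(q t * w2 lam (t - Δ t)) - lam * w2 lam t)/p2^2 := by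
      field_simp
      linarith
    convert hraw using 1
    rw [hA'', hφd, hf, hc_def, hlam]
    field_simp
    ring
  have key := intervalIntegral.integral_eq_sub_of_hasDerivAt hφder hφi
  have hintconst : ∫ t in (Real.pi/2)..x, φd t
      = (∫ t in (Real.pi/2)..x, f t) * (-(1/s)) := by
    rw [hφd]
    exact intervalIntegral.integral_mul_const _ _
  rw [hintconst] at key
  have hφx : φ x = w2 lam x := by
    simp [hφ]
  have hic := hw2ic lam hl
  rw [hφx] at key
  have hφ2 : φ (Real.pi/2) = (γ1/δ1) * w1 lam (Real.pi/2) * Real.cos (c*(x-Real.pi/2))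
      + (p2/s) * ((γ2/δ2) * w1' lam (Real.pi/2)) * Real.sin (c*(x-Real.pi/2)) := by
    rw [hφ]
    simp only [hic.1, hic.2]
  rw [hφ2] at key
  have : w2 lam x = (γ1/δ1) * w1 lam (Real.pi/2) * Real.cos (c*(x-Real.pi/2))
      + (p2/s) * ((γ2/δ2) * w1' lam (Real.pi/2)) * Real.sin (c*(x-Real.pi/2))
      + (∫ t in (Real.pi/2)..x, f t) * (-(1/s)) := by linarith
  rw [this]
  ring
end
end

section
/- (Theorem 1: eigenvalues are simple.) Let λ̃ > 0 be an eigenvalue of the problem (1)–(5) and let ũ be a corresponding eigenfunction, given by ũ₁ on [0,π/2) and ũ₂ on (π/2,π], i.e. ũ₁ solves p₁²y″(x)+q(x)y(x−Δ(x))+λ̃y(x)=0 on [0,π/2], ũ₂ solves p₂²y″(x)+q(x)y(x−Δ(x))+λ̃y(x)=0 on [π/2,π], ũ is not identically zero, and ũ satisfies √λ̃·ũ₁(0)+p₁·ũ₁′(0)=0, d·λ̃·ũ₂(π)+ũ₂′(π)=0, γ₁·ũ₁(π/2)=δ₁·ũ₂(π/2), and γ₂·ũ₁′(π/2)=δ₂·ũ₂′(π/2).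 Then there exists a single nonzero constant K such that ũ₁(x) = K·w₁(x,λ̃) for all x ∈ [0,π/2] and ũ₂(x) = K·w₂(x,λ̃) for all x ∈ [π/2,π]; in particular the eigenspace of λ̃ is one-dimensional. -/
open Set Filter intervalIntegral

noncomputable section

open MeasureTheory
lemma bdd_of_tendsto_Ico {q : ℝ → ℝ} {a b L : ℝ} (hab : a < b)
    (hc : ContinuousOn q (Set.Ico a b))
    (hl : Filter.Tendsto q (nhdsWithin b (Set.Iio b)) (nhds L)) :
    ∃ C, 0 ≤ C ∧ ∀ x ∈ Set.Ico a b, |q x| ≤ C := by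
  have h1 : ∀ᶠ x in nhdsWithin b (Set.Iio b), |q x| < |L| + 1 :=
    (hl.abs).eventually_lt_const (lt_add_one |L|)
  rw [Filter.eventually_iff, mem_nhdsLT_iff_exists_Ioo_subset' hab] at h1
  obtain ⟨c, hc', hsub⟩ := h1
  set c' := max a c with hc'def
  have hc'b : c' < b := max_lt hab hc'
  have hIcc : Set.Icc a c' ⊆ Set.Ico a b := fun x hx => ⟨hx.1, lt_of_le_of_lt hx.2 hc'b⟩
  obtain ⟨C1, hC1⟩ := isCompact_Icc.exists_bound_of_continuousOn (hc.mono hIcc)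
  refine ⟨max C1 (|L| + 1), le_trans (by positivity : (0:ℝ) ≤ |L| + 1) (le_max_right _ _), ?_⟩
  intro x hx
  by_cases hxc : x ≤ c'
  · exact le_trans (hC1 x ⟨hx.1, hxc⟩) (le_max_left _ _)
  · push_neg at hxc
    have : x ∈ Set.Ioo c b := ⟨lt_of_le_of_lt (le_max_right a c) hxc, hx.2⟩
    exact le_trans (le_of_lt (hsub this)) (le_max_right _ _)

lemma bdd_of_tendsto_Ioc {q : ℝ → ℝ} {a b L : ℝ} (hab : a < b)
    (hc : ContinuousOn q (Set.Ioc a b))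
    (hl : Filter.Tendsto q (nhdsWithin a (Set.Ioi a)) (nhds L)) :
    ∃ C, 0 ≤ C ∧ ∀ x ∈ Set.Ioc a b, |q x| ≤ C := by
  have h1 : ∀ᶠ x in nhdsWithin a (Set.Ioi a), |q x| < |L| + 1 :=
    (hl.abs).eventually_lt_const (lt_add_one |L|)
  rw [Filter.eventually_iff, mem_nhdsGT_iff_exists_Ioo_subset' hab] at h1
  obtain ⟨c, hc', hsub⟩ := h1
  set c' := min b c with hc'def
  have hc'b : a < c' := lt_min hab hc'
  have hIcc : Set.Icc c' b ⊆ Set.Ioc a b := fun x hx => ⟨lt_of_lt_of_le hc'b hx.1, hx.2⟩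
  obtain ⟨C1, hC1⟩ := isCompact_Icc.exists_bound_of_continuousOn (hc.mono hIcc)
  refine ⟨max C1 (|L| + 1), le_trans (by positivity : (0:ℝ) ≤ |L| + 1) (le_max_right _ _), ?_⟩
  intro x hx
  by_cases hxc : c' ≤ x
  · exact le_trans (hC1 x ⟨hxc, hx.2⟩) (le_max_left _ _)
  · push_neg at hxc
    have : x ∈ Set.Ioo a c := ⟨hx.1, lt_of_lt_of_le hxc (min_le_right b c)⟩
    exact le_trans (le_of_lt (hsub this)) (le_max_right _ _)



lemma delay_zero {a b C : ℝ} {v v' v'' r : ℝ → ℝ}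
    (hab : a < b) (hC : 0 ≤ C)
    (hd : ∀ x ∈ Set.Icc a b, HasDerivAt v (v' x) x ∧ HasDerivAt v' (v'' x) x)
    (hr : ∀ x ∈ Set.Ioo a b, r x ∈ Set.Icc a x)
    (hbound : ∀ x ∈ Set.Ioo a b, |v'' x| ≤ C * (|v (r x)| + |v x|))
    (hva : v a = 0) (hv'a : v' a = 0) :
    ∀ x ∈ Set.Icc a b, v x = 0 ∧ v' x = 0 := by
  have hab' : a ≤ b := hab.le
  set τ : ℝ → ℝ := fun x => max a (min x b) with hτdef
  have hτmem : ∀ x, τ x ∈ Set.Icc a b := fun x =>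
    ⟨le_max_left _ _, max_le hab' (min_le_right _ _)⟩
  have hτid : ∀ x ∈ Set.Icc a b, τ x = x := by
    intro x hx
    simp only [hτdef]
    rw [min_eq_left hx.2, max_eq_right hx.1]
  have hτcont : Continuous τ := continuous_const.max (continuous_id.min continuous_const)
  have hvc : ContinuousOn v (Set.Icc a b) := fun x hx =>
    ((hd x hx).1.continuousAt).continuousWithinAt
  have hv'c : ContinuousOn v' (Set.Icc a b) := fun x hx =>
    ((hd x hx).2.continuousAt).continuousWithinAt
  set V : ℝ → ℝ := fun x => v (τ x) with hVdef
  set V' : ℝ → ℝ := fun x => v' (τ x) with hV'def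
  have hVc : Continuous V := hvc.comp_continuous hτcont hτmem
  have hV'c : Continuous V' := hv'c.comp_continuous hτcont hτmem
  set g : ℝ → ℝ := fun x => |V x| + |V' x| with hgdef
  have hgc : Continuous g := hVc.abs.add hV'c.abs
  have hg0 : ∀ x, 0 ≤ g x := fun x => add_nonneg (abs_nonneg _) (abs_nonneg _)
  set F : ℝ → ℝ := fun x => ∫ t in a..x, g t with hFdef
  have hF' : ∀ x, HasDerivAt F (g x) x := fun x =>
    (hgc.integral_hasStrictDerivAt a x).hasDerivAt
  have hFdiff : Differentiable ℝ F := fun x => (hF' x).differentiableAt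
  have hFc : Continuous F := hFdiff.continuous
  have hFmono : Monotone F := monotone_of_deriv_nonneg hFdiff (fun x => by
    rw [(hF' x).deriv]; exact hg0 x)
  have hFa : F a = 0 := by simp [hFdef]
  have hF0 : ∀ x, a ≤ x → 0 ≤ F x := fun x hx => hFa ▸ hFmono hx
  -- claim 1
  have claim1 : ∀ x ∈ Set.Icc a b, |v x| ≤ F x := by
    intro x hx
    have hsub : Set.Icc a x ⊆ Set.Icc a b := Set.Icc_subset_Icc_right hx.2
    have huIcc : Set.uIcc a x = Set.Icc a x := Set.uIcc_of_le hx.1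
    have hv'int : IntervalIntegrable v' MeasureTheory.volume a x :=
      ((hv'c.mono hsub).mono huIcc.subset).intervalIntegrable
    have hveq : v x = ∫ t in a..x, v' t := by
      have := intervalIntegral.integral_eq_sub_of_hasDerivAt
        (f := v) (f' := v') (fun t ht => (hd t (hsub (huIcc ▸ ht))).1) hv'int
      rw [this, hva, sub_zero]
    rw [hveq]
    calc |∫ t in a..x, v' t| ≤ ∫ t in a..x, |v' t| :=
          intervalIntegral.abs_integral_le_integral_abs hx.1
      _ ≤ ∫ t in a..x, g t := by
          apply intervalIntegral.integral_mono_on hx.1 (hv'int.abs)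
            (hgc.intervalIntegrable a x)
          intro t ht
          have : τ t = t := hτid t (hsub ht)
          simp only [hgdef, hVdef, hV'def, this]
          exact le_add_of_nonneg_left (abs_nonneg _)
  -- boundedness of v on Icc
  obtain ⟨M, hM⟩ := isCompact_Icc.exists_bound_of_continuousOn hvc
  -- derivative identification
  have hder : ∀ s ∈ Set.Icc a b, deriv v' s = v'' s := fun s hs => (hd s hs).2.deriv
  have hane : ∀ᵐ s : ℝ, s ≠ a := by
    simp only [MeasureTheory.ae_iff, not_not, Set.setOf_eq_eq_singleton]
    exact Real.volume_singleton
  have hbne : ∀ᵐ s : ℝ, s ≠ b := by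
    simp only [MeasureTheory.ae_iff, not_not, Set.setOf_eq_eq_singleton]
    exact Real.volume_singleton
  have haene : ∀ᵐ s : ℝ, s ≠ a ∧ s ≠ b := hane.and hbne
  have hM0 : 0 ≤ M := le_trans (norm_nonneg _) (hM a ⟨le_refl a, hab'⟩)
  -- integrability of v'' on [a,x]
  have hv''int : ∀ x ∈ Set.Icc a b, IntervalIntegrable v'' MeasureTheory.volume a x := by
    intro x hx
    rw [intervalIntegrable_iff, Set.uIoc_of_le hx.1]
    have h1 : MeasureTheory.IntegrableOn (deriv v') (Set.Ioc a x) := by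
      apply MeasureTheory.Measure.integrableOn_of_bounded (M := C * (M + M) + |v'' b|)
      · exact measure_Ioc_lt_top.ne
      · exact (measurable_deriv v').aestronglyMeasurable
      · rw [MeasureTheory.ae_restrict_iff' measurableSet_Ioc]
        filter_upwards [hbne] with s hs hsmem
        have hsIoo : s ∈ Set.Ioo a b :=
          ⟨hsmem.1, lt_of_le_of_ne (le_trans hsmem.2 hx.2) hs⟩
        have hsIcc : s ∈ Set.Icc a b := ⟨hsIoo.1.le, hsIoo.2.le⟩
        rw [Real.norm_eq_abs, hder s hsIcc]
        have h2 := hbound s hsIoo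
        have h3 := hM (r s) ⟨(hr s hsIoo).1, le_trans (hr s hsIoo).2 hsIcc.2⟩
        have h4 := hM s hsIcc
        rw [Real.norm_eq_abs] at h3 h4
        nlinarith [abs_nonneg (v'' b), abs_nonneg (v (r s)), abs_nonneg (v s)]
    exact h1.congr_fun
      (fun s hs => (hder s ⟨hs.1.le, le_trans hs.2 hx.2⟩))
      measurableSet_Ioc
  -- claim 2
  have claim2 : ∀ x ∈ Set.Icc a b, |v' x| ≤ 2 * C * (b - a) * F x := by
    intro x hx
    have hsub : Set.Icc a x ⊆ Set.Icc a b := Set.Icc_subset_Icc_right hx.2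
    have huIcc : Set.uIcc a x = Set.Icc a x := Set.uIcc_of_le hx.1
    have hv'eq : v' x = ∫ t in a..x, v'' t := by
      have := intervalIntegral.integral_eq_sub_of_hasDerivAt
        (f := v') (f' := v'') (fun t ht => (hd t (hsub (huIcc ▸ ht))).2) (hv''int x hx)
      rw [this, hv'a, sub_zero]
    rw [hv'eq]
    have step1 : |∫ t in a..x, v'' t| ≤ ∫ t in a..x, |v'' t| :=
      intervalIntegral.abs_integral_le_integral_abs hx.1
    have step2 : (∫ t in a..x, |v'' t|) ≤ ∫ t in a..x, 2 * C * F t := by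
      apply intervalIntegral.integral_mono_ae_restrict hx.1 (hv''int x hx).abs
        ((continuous_const.mul hFc).intervalIntegrable a x)
      rw [Filter.EventuallyLE, MeasureTheory.ae_restrict_iff' measurableSet_Icc]
      filter_upwards [haene] with s hs hsmem
      have hsIoo : s ∈ Set.Ioo a b :=
        ⟨lt_of_le_of_ne hsmem.1 (Ne.symm hs.1), lt_of_le_of_ne (le_trans hsmem.2 hx.2) hs.2⟩
      have hsIcc : s ∈ Set.Icc a b := ⟨hsIoo.1.le, hsIoo.2.le⟩
      have h2 := hbound s hsIoo
      have h3 := claim1 (r s) ⟨(hr s hsIoo).1, le_trans (hr s hsIoo).2 hsIcc.2⟩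
      have h4 := hFmono (hr s hsIoo).2
      have h5 := claim1 s hsIcc
      show |v'' s| ≤ 2 * C * F s
      nlinarith [abs_nonneg (v (r s)), abs_nonneg (v s)]
    have step3 : (∫ t in a..x, 2 * C * F t) ≤ 2 * C * (b - a) * F x := by
      have h6 : (∫ t in a..x, 2 * C * F t) ≤ ∫ _t in a..x, 2 * C * F x := by
        apply intervalIntegral.integral_mono_on hx.1
          ((continuous_const.mul hFc).intervalIntegrable a x)
          (intervalIntegrable_const)
        intro t ht
        have := hFmono ht.2
        show 2 * C * F t ≤ 2 * C * F x
        nlinarith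
      rw [intervalIntegral.integral_const, smul_eq_mul] at h6
      have h7 : (x - a) * (2 * C * F x) ≤ 2 * C * (b - a) * F x := by
        have h8 := hF0 x hx.1
        nlinarith [mul_nonneg (mul_nonneg hC (sub_nonneg.mpr hx.2)) h8]
      linarith
    linarith
  -- Gronwall
  set A : ℝ := 1 + 2 * C * (b - a) with hAdef
  have key : ∀ x ∈ Set.Icc a b, F x = 0 := by
    have hg_bound : ∀ x ∈ Set.Ico a b, ‖g x‖ ≤ A * ‖F x‖ + 0 := by
      intro x hx
      have hxI : x ∈ Set.Icc a b := ⟨hx.1, hx.2.le⟩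
      rw [Real.norm_eq_abs, abs_of_nonneg (hg0 x), Real.norm_eq_abs,
        abs_of_nonneg (hF0 x hx.1), add_zero]
      have h1 := claim1 x hxI
      have h2 := claim2 x hxI
      have h3 : g x = |v x| + |v' x| := by
        simp only [hgdef, hVdef, hV'def, hτid x hxI]
      have h4 : A * F x = F x + 2 * C * (b - a) * F x := by rw [hAdef]; ring
      linarith
    have := norm_le_gronwallBound_of_norm_deriv_right_le (δ := 0) (K := A) (ε := 0)
      hFc.continuousOn (fun x _hx => (hF' x).hasDerivWithinAt)
      (by rw [Real.norm_eq_abs, hFa, abs_zero]) hg_bound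
    intro x hx
    have h := this x hx
    rw [gronwallBound_ε0_δ0, Real.norm_eq_abs, abs_of_nonneg (hF0 x hx.1)] at h
    exact le_antisymm h (hF0 x hx.1)
  intro x hx
  have hFx := key x hx
  constructor
  · have := claim1 x hx
    rw [hFx] at this
    exact abs_nonpos_iff.mp this
  · have := claim2 x hx
    rw [hFx, mul_zero] at this
    exact abs_nonpos_iff.mp this

theorem stmt2
    (p1 p2 γ1 γ2 δ1 δ2 d : ℝ) (q Δ : ℝ → ℝ)
    (hp1 : 0 < p1) (hp2 : 0 < p2)
    (hδ1 : δ1 ≠ 0) (hδ2 : δ2 ≠ 0)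
    (hγδ : γ1 * δ2 * p1 = γ2 * δ1 * p2)
    (hqc1 : ContinuousOn q (Set.Ico 0 (Real.pi/2)))
    (hqc2 : ContinuousOn q (Set.Ioc (Real.pi/2) Real.pi))
    (hqlim1 : ∃ L : ℝ, Filter.Tendsto q (nhdsWithin (Real.pi/2) (Set.Iio (Real.pi/2))) (nhds L))
    (hqlim2 : ∃ L : ℝ, Filter.Tendsto q (nhdsWithin (Real.pi/2) (Set.Ioi (Real.pi/2))) (nhds L))
    (hΔc1 : ContinuousOn Δ (Set.Ico 0 (Real.pi/2)))
    (hΔc2 : ContinuousOn Δ (Set.Ioc (Real.pi/2) Real.pi))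
    (hΔlim1 : ∃ L : ℝ, Filter.Tendsto Δ (nhdsWithin (Real.pi/2) (Set.Iio (Real.pi/2))) (nhds L))
    (hΔlim2 : ∃ L : ℝ, Filter.Tendsto Δ (nhdsWithin (Real.pi/2) (Set.Ioi (Real.pi/2))) (nhds L))
    (hΔnonneg : ∀ x ∈ Set.Ico (0:ℝ) (Real.pi/2) ∪ Set.Ioc (Real.pi/2) Real.pi, 0 ≤ Δ x)
    (hret1 : ∀ x ∈ Set.Ico (0:ℝ) (Real.pi/2), 0 ≤ x - Δ x)
    (hret2 : ∀ x ∈ Set.Ioc (Real.pi/2) Real.pi, Real.pi/2 ≤ x - Δ x)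
    (habs1 : |γ1| + |δ1| ≠ 0) (habs2 : |γ2| + |δ2| ≠ 0)
    (w1 w1' w1'' : ℝ → ℝ → ℝ)
    (hw1d : ∀ lam : ℝ, 0 < lam → ∀ x ∈ Set.Icc (0:ℝ) (Real.pi/2),
      HasDerivAt (w1 lam) (w1' lam x) x ∧ HasDerivAt (w1' lam) (w1'' lam x) x)
    (hw1eq : ∀ lam : ℝ, 0 < lam → ∀ x ∈ Set.Icc (0:ℝ) (Real.pi/2),
      p1^2 * w1'' lam x + q x * w1 lam (x - Δ x) + lam * w1 lam x = 0)
    (hw1ic : ∀ lam : ℝ, 0 < lam → w1 lam 0 = p1 ∧ w1' lam 0 = -Real.sqrt lam)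
    (w2 w2' w2'' : ℝ → ℝ → ℝ)
    (hw2d : ∀ lam : ℝ, 0 < lam → ∀ x ∈ Set.Icc (Real.pi/2) Real.pi,
      HasDerivAt (w2 lam) (w2' lam x) x ∧ HasDerivAt (w2' lam) (w2'' lam x) x)
    (hw2eq : ∀ lam : ℝ, 0 < lam → ∀ x ∈ Set.Icc (Real.pi/2) Real.pi,
      p2^2 * w2'' lam x + q x * w2 lam (x - Δ x) + lam * w2 lam x = 0)
    (hw2ic : ∀ lam : ℝ, 0 < lam →
      w2 lam (Real.pi/2) = (γ1/δ1) * w1 lam (Real.pi/2) ∧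
      w2' lam (Real.pi/2) = (γ2/δ2) * w1' lam (Real.pi/2))
    (lam : ℝ) (hlam : 0 < lam)
    (u1 u1' u1'' u2 u2' u2'' : ℝ → ℝ)
    (hu1d : ∀ x ∈ Set.Icc (0:ℝ) (Real.pi/2),
      HasDerivAt u1 (u1' x) x ∧ HasDerivAt u1' (u1'' x) x)
    (hu1eq : ∀ x ∈ Set.Icc (0:ℝ) (Real.pi/2),
      p1^2 * u1'' x + q x * u1 (x - Δ x) + lam * u1 x = 0)
    (hu2d : ∀ x ∈ Set.Icc (Real.pi/2) Real.pi,
      HasDerivAt u2 (u2' x) x ∧ HasDerivAt u2' (u2'' x) x)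
    (hu2eq : ∀ x ∈ Set.Icc (Real.pi/2) Real.pi,
      p2^2 * u2'' x + q x * u2 (x - Δ x) + lam * u2 x = 0)
    (hnz : (∃ x ∈ Set.Ico (0:ℝ) (Real.pi/2), u1 x ≠ 0) ∨ (∃ x ∈ Set.Ioc (Real.pi/2) Real.pi, u2 x ≠ 0))
    (hbc0 : Real.sqrt lam * u1 0 + p1 * u1' 0 = 0)
    (hbcpi : d * lam * u2 Real.pi + u2' Real.pi = 0)
    (htr1 : γ1 * u1 (Real.pi/2) = δ1 * u2 (Real.pi/2))
    (htr2 : γ2 * u1' (Real.pi/2) = δ2 * u2' (Real.pi/2))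
    :
    ∃ K : ℝ, K ≠ 0 ∧ (∀ x ∈ Set.Icc (0:ℝ) (Real.pi/2), u1 x = K * w1 lam x) ∧
      (∀ x ∈ Set.Icc (Real.pi/2) Real.pi, u2 x = K * w2 lam x) := by
  have hpi := Real.pi_pos
  have h0 : (0:ℝ) < Real.pi/2 := by linarith
  have hhalf : Real.pi/2 < Real.pi := by linarith
  set K := u1 0 / p1 with hKdef
  -- interval 1
  obtain ⟨L1, hL1⟩ := hqlim1
  obtain ⟨Q1, hQ10, hQ1⟩ := bdd_of_tendsto_Ico h0 hqc1 hL1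
  set C1 := (Q1 + lam) / p1^2 with hC1def
  have hC10 : 0 ≤ C1 := div_nonneg (by linarith) (by positivity)
  set v := fun x => u1 x - K * w1 lam x with hvdef
  set v' := fun x => u1' x - K * w1' lam x with hv'def
  set v'' := fun x => u1'' x - K * w1'' lam x with hv''def
  have hvd : ∀ x ∈ Set.Icc (0:ℝ) (Real.pi/2),
      HasDerivAt v (v' x) x ∧ HasDerivAt v' (v'' x) x := fun x hx =>
    ⟨(hu1d x hx).1.sub ((hw1d lam hlam x hx).1.const_mul K),
     (hu1d x hx).2.sub ((hw1d lam hlam x hx).2.const_mul K)⟩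
  have hveq : ∀ x ∈ Set.Icc (0:ℝ) (Real.pi/2),
      p1^2 * v'' x + q x * v (x - Δ x) + lam * v x = 0 := by
    intro x hx
    have h1 := hu1eq x hx
    have h2 := hw1eq lam hlam x hx
    simp only [hvdef, hv''def]
    linear_combination h1 - K * h2
  have hbound : ∀ x ∈ Set.Ioo (0:ℝ) (Real.pi/2),
      |v'' x| ≤ C1 * (|v (x - Δ x)| + |v x|) := by
    intro x hx
    have hxIco : x ∈ Set.Ico (0:ℝ) (Real.pi/2) := ⟨hx.1.le, hx.2⟩
    have hxIcc : x ∈ Set.Icc (0:ℝ) (Real.pi/2) := ⟨hx.1.le, hx.2.le⟩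
    have heq := hveq x hxIcc
    have hq := hQ1 x hxIco
    have hp1sq : (0:ℝ) < p1^2 := by positivity
    have h0' : p1^2 * v'' x = -(q x * v (x - Δ x) + lam * v x) := by linarith
    have h1 : p1^2 * |v'' x| = |q x * v (x - Δ x) + lam * v x| := by
      rw [← abs_of_pos hp1sq, ← abs_mul, h0', abs_neg]
    have h2 : |q x * v (x - Δ x) + lam * v x| ≤ Q1 * |v (x - Δ x)| + lam * |v x| := by
      calc |q x * v (x - Δ x) + lam * v x|
          ≤ |q x * v (x - Δ x)| + |lam * v x| := abs_add_le _ _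
        _ = |q x| * |v (x - Δ x)| + lam * |v x| := by
            rw [abs_mul, abs_mul, abs_of_pos hlam]
        _ ≤ Q1 * |v (x - Δ x)| + lam * |v x| := by
            gcongr
    rw [hC1def, div_mul_eq_mul_div, le_div_iff₀ hp1sq]
    nlinarith [abs_nonneg (v (x - Δ x)), abs_nonneg (v x)]
  have hr : ∀ x ∈ Set.Ioo (0:ℝ) (Real.pi/2), x - Δ x ∈ Set.Icc 0 x := by
    intro x hx
    have hxIco : x ∈ Set.Ico (0:ℝ) (Real.pi/2) := ⟨hx.1.le, hx.2⟩
    exact ⟨hret1 x hxIco, sub_le_self x (hΔnonneg x (Set.mem_union_left _ hxIco))⟩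
  have hv0 : v 0 = 0 := by
    simp only [hvdef]
    rw [(hw1ic lam hlam).1, hKdef]
    field_simp
    ring
  have hv'0 : v' 0 = 0 := by
    simp only [hv'def]
    rw [(hw1ic lam hlam).2, hKdef]
    field_simp
    linarith [hbc0]
  have h1zero := delay_zero h0 hC10 hvd hr hbound hv0 hv'0
  have hu1w : ∀ x ∈ Set.Icc (0:ℝ) (Real.pi/2), u1 x = K * w1 lam x := by
    intro x hx
    have := (h1zero x hx).1
    simp only [hvdef] at this
    linarith
  have hu1w' : ∀ x ∈ Set.Icc (0:ℝ) (Real.pi/2), u1' x = K * w1' lam x := by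
    intro x hx
    have := (h1zero x hx).2
    simp only [hv'def] at this
    linarith
  -- interval 2
  obtain ⟨L2, hL2⟩ := hqlim2
  obtain ⟨Q2, hQ20, hQ2⟩ := bdd_of_tendsto_Ioc hhalf hqc2 hL2
  set C2 := (Q2 + lam) / p2^2 with hC2def
  have hC20 : 0 ≤ C2 := div_nonneg (by linarith) (by positivity)
  set y := fun x => u2 x - K * w2 lam x with hydef
  set y' := fun x => u2' x - K * w2' lam x with hy'def
  set y'' := fun x => u2'' x - K * w2'' lam x with hy''def
  have hyd : ∀ x ∈ Set.Icc (Real.pi/2) Real.pi,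
      HasDerivAt y (y' x) x ∧ HasDerivAt y' (y'' x) x := fun x hx =>
    ⟨(hu2d x hx).1.sub ((hw2d lam hlam x hx).1.const_mul K),
     (hu2d x hx).2.sub ((hw2d lam hlam x hx).2.const_mul K)⟩
  have hyeq : ∀ x ∈ Set.Icc (Real.pi/2) Real.pi,
      p2^2 * y'' x + q x * y (x - Δ x) + lam * y x = 0 := by
    intro x hx
    have h1 := hu2eq x hx
    have h2 := hw2eq lam hlam x hx
    simp only [hydef, hy''def]
    linear_combination h1 - K * h2
  have hbound2 : ∀ x ∈ Set.Ioo (Real.pi/2) Real.pi,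
      |y'' x| ≤ C2 * (|y (x - Δ x)| + |y x|) := by
    intro x hx
    have hxIoc : x ∈ Set.Ioc (Real.pi/2) Real.pi := ⟨hx.1, hx.2.le⟩
    have hxIcc : x ∈ Set.Icc (Real.pi/2) Real.pi := ⟨hx.1.le, hx.2.le⟩
    have heq := hyeq x hxIcc
    have hq := hQ2 x hxIoc
    have hp2sq : (0:ℝ) < p2^2 := by positivity
    have h0' : p2^2 * y'' x = -(q x * y (x - Δ x) + lam * y x) := by linarith
    have h1 : p2^2 * |y'' x| = |q x * y (x - Δ x) + lam * y x| := by
      rw [← abs_of_pos hp2sq, ← abs_mul, h0', abs_neg]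
    have h2 : |q x * y (x - Δ x) + lam * y x| ≤ Q2 * |y (x - Δ x)| + lam * |y x| := by
      calc |q x * y (x - Δ x) + lam * y x|
          ≤ |q x * y (x - Δ x)| + |lam * y x| := abs_add_le _ _
        _ = |q x| * |y (x - Δ x)| + lam * |y x| := by
            rw [abs_mul, abs_mul, abs_of_pos hlam]
        _ ≤ Q2 * |y (x - Δ x)| + lam * |y x| := by
            gcongr
    rw [hC2def, div_mul_eq_mul_div, le_div_iff₀ hp2sq]
    nlinarith [abs_nonneg (y (x - Δ x)), abs_nonneg (y x)]
  have hr2 : ∀ x ∈ Set.Ioo (Real.pi/2) Real.pi, x - Δ x ∈ Set.Icc (Real.pi/2) x := by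
    intro x hx
    have hxIoc : x ∈ Set.Ioc (Real.pi/2) Real.pi := ⟨hx.1, hx.2.le⟩
    exact ⟨hret2 x hxIoc, sub_le_self x (hΔnonneg x (Set.mem_union_right _ hxIoc))⟩
  have hmid : Real.pi/2 ∈ Set.Icc (0:ℝ) (Real.pi/2) := ⟨h0.le, le_refl _⟩
  have hu1mid := hu1w _ hmid
  have hu1'mid := hu1w' _ hmid
  have hmidu2 : u2 (Real.pi/2) = K * ((γ1/δ1) * w1 lam (Real.pi/2)) := by
    field_simp
    linear_combination -htr1 + γ1 * hu1mid
  have hmidu2' : u2' (Real.pi/2) = K * ((γ2/δ2) * w1' lam (Real.pi/2)) := by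
    field_simp
    linear_combination -htr2 + γ2 * hu1'mid
  have hy0 : y (Real.pi/2) = 0 := by
    simp only [hydef]
    rw [(hw2ic lam hlam).1, hmidu2]
    ring
  have hy'0 : y' (Real.pi/2) = 0 := by
    simp only [hy'def]
    rw [(hw2ic lam hlam).2, hmidu2']
    ring
  have h2zero := delay_zero hhalf hC20 hyd hr2 hbound2 hy0 hy'0
  have hu2w : ∀ x ∈ Set.Icc (Real.pi/2) Real.pi, u2 x = K * w2 lam x := by
    intro x hx
    have := (h2zero x hx).1
    simp only [hydef] at this
    linarith
  have hKne : K ≠ 0 := by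
    intro hK0
    rcases hnz with ⟨x, hx, hne⟩ | ⟨x, hx, hne⟩
    · exact hne (by rw [hu1w x ⟨hx.1, hx.2.le⟩, hK0, zero_mul])
    · exact hne (by rw [hu2w x ⟨hx.1.le, hx.2⟩, hK0, zero_mul])
  exact ⟨K, hKne, hu1w, hu2w⟩
end
end

section
/- (Lemma 2, part 1.) If λ ≥ 4q₁², then the solution w₁(·,λ) satisfies |w₁(x,λ)| ≤ 2√2·p₁ for all x ∈ [0,π/2]. -/
open Set Filter intervalIntegral

noncomputable section

lemma aux_extend {q : ℝ → ℝ} {a b L : ℝ} (hq : ContinuousOn q (Set.Ico a b))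
    (hL : Filter.Tendsto q (nhdsWithin b (Set.Iio b)) (nhds L)) :
    ContinuousOn (fun t => if t = b then L else q t) (Set.Icc a b) := by
  intro t ht
  rcases eq_or_lt_of_le ht.2 with rfl | hlt
  · rw [← continuousWithinAt_diff_self]
    have hsub : Set.Icc a t \ {t} ⊆ Set.Iio t := fun y hy => lt_of_le_of_ne hy.1.2 hy.2
    have h1 : Filter.Tendsto (fun s => if s = t then L else q s)
        (nhdsWithin t (Set.Iio t)) (nhds L) := by
      refine hL.congr' ?_
      filter_upwards [self_mem_nhdsWithin] with y hy
      exact (if_neg (ne_of_lt hy)).symm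
    have hft : (fun s => if s = t then L else q s) t = L := if_pos rfl
    show Filter.Tendsto _ _ _
    rw [hft]
    exact h1.mono_left (nhdsWithin_mono _ hsub)
  · have h0 : ContinuousWithinAt (fun s => if s = b then L else q s) (Set.Ico a b) t :=
      (hq t ⟨ht.1, hlt⟩).congr (fun y hy => if_neg (ne_of_lt hy.2)) (if_neg (ne_of_lt hlt))
    refine h0.mono_of_mem_nhdsWithin ?_
    rw [mem_nhdsWithin]
    exact ⟨Set.Iio b, isOpen_Iio, hlt, fun y hy => ⟨hy.2.1, hy.1⟩⟩

set_option maxHeartbeats 1000000 in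
theorem stmt3
    (p1 p2 γ1 γ2 δ1 δ2 d : ℝ) (q Δ : ℝ → ℝ)
    (hp1 : 0 < p1) (hp2 : 0 < p2)
    (hδ1 : δ1 ≠ 0) (hδ2 : δ2 ≠ 0)
    (hγδ : γ1 * δ2 * p1 = γ2 * δ1 * p2)
    (hqc1 : ContinuousOn q (Set.Ico 0 (Real.pi/2)))
    (hqc2 : ContinuousOn q (Set.Ioc (Real.pi/2) Real.pi))
    (hqlim1 : ∃ L : ℝ, Filter.Tendsto q (nhdsWithin (Real.pi/2) (Set.Iio (Real.pi/2))) (nhds L))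
    (hqlim2 : ∃ L : ℝ, Filter.Tendsto q (nhdsWithin (Real.pi/2) (Set.Ioi (Real.pi/2))) (nhds L))
    (hΔc1 : ContinuousOn Δ (Set.Ico 0 (Real.pi/2)))
    (hΔc2 : ContinuousOn Δ (Set.Ioc (Real.pi/2) Real.pi))
    (hΔlim1 : ∃ L : ℝ, Filter.Tendsto Δ (nhdsWithin (Real.pi/2) (Set.Iio (Real.pi/2))) (nhds L))
    (hΔlim2 : ∃ L : ℝ, Filter.Tendsto Δ (nhdsWithin (Real.pi/2) (Set.Ioi (Real.pi/2))) (nhds L))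
    (hΔnonneg : ∀ x ∈ Set.Ico (0:ℝ) (Real.pi/2) ∪ Set.Ioc (Real.pi/2) Real.pi, 0 ≤ Δ x)
    (hret1 : ∀ x ∈ Set.Ico (0:ℝ) (Real.pi/2), 0 ≤ x - Δ x)
    (hret2 : ∀ x ∈ Set.Ioc (Real.pi/2) Real.pi, Real.pi/2 ≤ x - Δ x)
    (w1 w1' w1'' : ℝ → ℝ → ℝ)
    (hw1d : ∀ lam : ℝ, 0 < lam → ∀ x ∈ Set.Icc (0:ℝ) (Real.pi/2),
      HasDerivAt (w1 lam) (w1' lam x) x ∧ HasDerivAt (w1' lam) (w1'' lam x) x)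
    (hw1eq : ∀ lam : ℝ, 0 < lam → ∀ x ∈ Set.Icc (0:ℝ) (Real.pi/2),
      p1^2 * w1'' lam x + q x * w1 lam (x - Δ x) + lam * w1 lam x = 0)
    (hw1ic : ∀ lam : ℝ, 0 < lam → w1 lam 0 = p1 ∧ w1' lam 0 = -Real.sqrt lam)
    (lam : ℝ) (hlam : 0 < lam)
    (hlam4 : 4 * ((1/p1) * ∫ τ in (0:ℝ)..(Real.pi/2), |q τ|)^2 ≤ lam)
    :
    ∀ x ∈ Set.Icc (0:ℝ) (Real.pi/2), |w1 lam x| ≤ 2 * Real.sqrt 2 * p1 := by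
  have hBpos : 0 < Real.pi/2 := by positivity
  set B : ℝ := Real.pi/2 with hBdef
  set I : Set ℝ := Set.Icc 0 B with hIdef
  -- continuity of w1, w1'
  have hwc : ContinuousOn (w1 lam) I :=
    fun x hx => ((hw1d lam hlam x hx).1.continuousAt.continuousWithinAt)
  have hw'c : ContinuousOn (w1' lam) I :=
    fun x hx => ((hw1d lam hlam x hx).2.continuousAt.continuousWithinAt)
  -- energy
  set E : ℝ → ℝ := fun x => lam * (w1 lam x)^2 + p1^2 * (w1' lam x)^2 with hEdef
  have hEnn : ∀ t, 0 ≤ E t := by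
    intro t; simp only [hEdef]; positivity
  have hEc : ContinuousOn E I := by
    apply ContinuousOn.add
    · exact continuousOn_const.mul (hwc.pow 2)
    · exact continuousOn_const.mul (hw'c.pow 2)
  have hE : ∀ x ∈ I, HasDerivAt E (-2 * q x * w1' lam x * w1 lam (x - Δ x)) x := by
    intro x hx
    obtain ⟨h1, h2⟩ := hw1d lam hlam x hx
    have heq := hw1eq lam hlam x hx
    have hd : HasDerivAt E
        (lam * ((2:ℕ) * w1 lam x ^ 1 * w1' lam x) + p1^2 * ((2:ℕ) * w1' lam x ^ 1 * w1'' lam x)) x :=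
      ((h1.pow 2).const_mul lam).add ((h2.pow 2).const_mul (p1^2))
    convert hd using 1
    push_cast
    linear_combination (-2 * w1' lam x) * heq
  -- extensions of q and Δ
  obtain ⟨Lq, hLq⟩ := hqlim1
  obtain ⟨LΔ, hLΔ⟩ := hΔlim1
  set qt : ℝ → ℝ := fun t => if t = B then Lq else q t with hqtdef
  set Δt : ℝ → ℝ := fun t => if t = B then LΔ else Δ t with hΔtdef
  have hqt_eq : ∀ t, t ≠ B → qt t = q t := fun t ht => if_neg ht
  have hΔt_eq : ∀ t, t ≠ B → Δt t = Δ t := fun t ht => if_neg ht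
  have hqtc : ContinuousOn qt I := aux_extend hqc1 hLq
  have hΔtc : ContinuousOn Δt I := aux_extend hΔc1 hLΔ
  have hae : ∀ᵐ t : ℝ, t ≠ B := by
    refine (MeasureTheory.ae_iff).mpr ?_
    simpa using Real.volume_singleton (x := B)
  -- retarded argument stays in I
  have hIco : ∀ᶠ x in nhdsWithin B (Set.Iio B), x ∈ Set.Ico (0:ℝ) B := by
    have h1 : Set.Ioo (0:ℝ) B ∈ nhdsWithin B (Set.Iio B) :=
      Ioo_mem_nhdsLT_of_mem ⟨hBpos, le_refl B⟩
    filter_upwards [h1] with y hy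
    exact ⟨hy.1.le, hy.2⟩
  have hsmem : ∀ t ∈ I, t - Δt t ∈ I := by
    intro t ht
    rcases eq_or_lt_of_le ht.2 with heqB | hlt
    · subst heqB
      have hΔtt : Δt B = LΔ := if_pos rfl
      have hL0 : 0 ≤ LΔ := by
        refine ge_of_tendsto hLΔ ?_
        filter_upwards [hIco] with y hy
        exact hΔnonneg y (Or.inl hy)
      have hL1 : 0 ≤ B - LΔ := by
        have htend : Filter.Tendsto (fun x => x - Δ x) (nhdsWithin B (Set.Iio B))
            (nhds (B - LΔ)) :=
          ((continuous_id.tendsto B).mono_left nhdsWithin_le_nhds).sub hLΔ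
        refine ge_of_tendsto htend ?_
        filter_upwards [hIco] with y hy
        exact hret1 y hy
      rw [hΔtt]
      exact ⟨hL1, by linarith⟩

    · have htne : t ≠ B := ne_of_lt hlt
      rw [hΔt_eq t htne]
      have h1 := hret1 t ⟨ht.1, hlt⟩
      have h2 := hΔnonneg t (Or.inl ⟨ht.1, hlt⟩)
      exact ⟨h1, by linarith⟩
  -- maximum of E
  obtain ⟨x0, hx0I, hx0max'⟩ := isCompact_Icc.exists_isMaxOn (Set.nonempty_Icc.2 hBpos.le) hEc
  have hx0max : ∀ x ∈ I, E x ≤ E x0 := fun x hx => hx0max' hx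
  set M : ℝ := E x0 with hMdef
  have hMnn : 0 ≤ M := hEnn x0
  -- the integral bound from hlam4
  set Q : ℝ := ∫ τ in (0:ℝ)..B, |q τ| with hQdef
  have hQnn : 0 ≤ Q := by
    rw [hQdef]
    exact intervalIntegral.integral_nonneg hBpos.le (fun u _ => abs_nonneg _)
  have hQle : 2 * Q ≤ p1 * Real.sqrt lam := by
    have h1 : (2 * ((1/p1) * Q))^2 ≤ lam := by nlinarith
    have h2 : 2 * ((1/p1) * Q) ≤ Real.sqrt lam := Real.le_sqrt_of_sq_le h1
    have h4 : p1 * (2 * (1/p1 * Q)) ≤ p1 * Real.sqrt lam :=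
      mul_le_mul_of_nonneg_left h2 hp1.le
    have h5 : p1 * (2 * (1/p1 * Q)) = 2 * Q := by field_simp
    linarith
  -- interval integrability of |qt| on [0,B]
  have hqtabs_c : ContinuousOn (fun t => |qt t|) I := hqtc.abs
  have hqtabs_int : IntervalIntegrable (fun t => |qt t|) MeasureTheory.volume 0 B := by
    apply ContinuousOn.intervalIntegrable
    rwa [Set.uIcc_of_le hBpos.le]
  have hQqt : (∫ τ in (0:ℝ)..B, |qt τ|) = Q := by
    rw [hQdef]
    apply intervalIntegral.integral_congr_ae
    filter_upwards [hae] with t ht _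
    rw [hqt_eq t ht]
  -- key epsilon estimate
  have key : ∀ ε : ℝ, 0 < ε → M + ε ≤ 4 * (E 0 + ε) := by
    intro ε hε
    have hEε : ∀ t, 0 < E t + ε := fun t => by linarith [hEnn t]
    set c : ℝ := Real.sqrt (M + ε) / (p1 * Real.sqrt lam) with hcdef
    have hslam : 0 < Real.sqrt lam := Real.sqrt_pos.2 hlam
    have hcnn : 0 ≤ c := by positivity
    set f : ℝ → ℝ := fun x => Real.sqrt (E x + ε) with hfdef
    set f' : ℝ → ℝ := fun x =>
      (-2 * q x * w1' lam x * w1 lam (x - Δ x)) / (2 * Real.sqrt (E x + ε)) with hf'def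
    set g : ℝ → ℝ := fun t =>
      (-2 * qt t * w1' lam t * w1 lam (t - Δt t)) / (2 * Real.sqrt (E t + ε)) with hgdef
    have hsub : Set.Icc 0 x0 ⊆ I := Set.Icc_subset_Icc le_rfl hx0I.2
    have hf : ∀ x ∈ Set.Icc 0 x0, HasDerivAt f (f' x) x := by
      intro x hx
      exact ((hE x (hsub hx)).add_const ε).sqrt (ne_of_gt (hEε x))
    have hgc : ContinuousOn g I := by
      apply ContinuousOn.div
      · exact ((continuousOn_const.mul hqtc).mul hw'c).mul
          (hwc.comp (continuousOn_id.sub hΔtc) hsmem)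
      · exact continuousOn_const.mul
          (Real.continuous_sqrt.comp_continuousOn (hEc.add continuousOn_const))
      · intro t _
        have : 0 < Real.sqrt (E t + ε) := Real.sqrt_pos.2 (hEε t)
        positivity
    have hgi : IntervalIntegrable g MeasureTheory.volume 0 x0 := by
      apply ContinuousOn.intervalIntegrable
      rw [Set.uIcc_of_le hx0I.1]
      exact hgc.mono hsub
    have hfg : ∀ t, t ≠ B → f' t = g t := by
      intro t ht
      simp only [hf'def, hgdef, hqt_eq t ht, hΔt_eq t ht]
    have hf'i : IntervalIntegrable f' MeasureTheory.volume 0 x0 := by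
      apply hgi.congr_ae
      apply MeasureTheory.ae_restrict_of_ae
      filter_upwards [hae] with t ht
      exact (hfg t ht).symm
    have hFTC : (∫ t in (0:ℝ)..x0, f' t) = f x0 - f 0 := by
      apply intervalIntegral.integral_eq_sub_of_hasDerivAt _ hf'i
      intro t ht
      rw [Set.uIcc_of_le hx0I.1] at ht
      exact hf t ht
    have hint_eq : (∫ t in (0:ℝ)..x0, f' t) = ∫ t in (0:ℝ)..x0, g t := by
      apply intervalIntegral.integral_congr_ae
      filter_upwards [hae] with t ht _
      exact hfg t ht
    -- pointwise bound
    have hptw : ∀ t ∈ Set.Icc 0 x0, g t ≤ c * |qt t| := by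
      intro t ht
      have htI : t ∈ I := hsub ht
      have hA : 0 < Real.sqrt (E t + ε) := Real.sqrt_pos.2 (hEε t)
      have h1 : p1 * |w1' lam t| ≤ Real.sqrt (E t + ε) := by
        have hsq : (p1 * |w1' lam t|)^2 ≤ E t + ε := by
          simp only [hEdef]
          rw [mul_pow, sq_abs]
          nlinarith [sq_nonneg (w1 lam t)]
        calc p1 * |w1' lam t| = Real.sqrt ((p1 * |w1' lam t|)^2) :=
              (Real.sqrt_sq (by positivity)).symm
        _ ≤ Real.sqrt (E t + ε) := Real.sqrt_le_sqrt hsq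
      have hs := hsmem t htI
      have h2 : Real.sqrt lam * |w1 lam (t - Δt t)| ≤ Real.sqrt (M + ε) := by
        have hsq : (Real.sqrt lam * |w1 lam (t - Δt t)|)^2 ≤ M + ε := by
          rw [mul_pow, Real.sq_sqrt hlam.le, sq_abs]
          have hle := hx0max _ hs
          simp only [hEdef] at hle
          nlinarith [sq_nonneg (w1' lam (t - Δt t))]
        calc Real.sqrt lam * |w1 lam (t - Δt t)|
            = Real.sqrt ((Real.sqrt lam * |w1 lam (t - Δt t)|)^2) :=
              (Real.sqrt_sq (by positivity)).symm
        _ ≤ Real.sqrt (M + ε) := Real.sqrt_le_sqrt hsq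
      have key2 : |w1' lam t| * |w1 lam (t - Δt t)| / Real.sqrt (E t + ε)
          ≤ Real.sqrt (M + ε) / (p1 * Real.sqrt lam) := by
        rw [div_le_div_iff₀ hA (by positivity)]
        calc |w1' lam t| * |w1 lam (t - Δt t)| * (p1 * Real.sqrt lam)
            = (p1 * |w1' lam t|) * (Real.sqrt lam * |w1 lam (t - Δt t)|) := by ring
        _ ≤ Real.sqrt (E t + ε) * Real.sqrt (M + ε) :=
            mul_le_mul h1 h2 (by positivity) (Real.sqrt_nonneg _)
        _ = Real.sqrt (M + ε) * Real.sqrt (E t + ε) := mul_comm _ _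
      have hN : -2 * qt t * w1' lam t * w1 lam (t - Δt t)
          ≤ 2 * |qt t| * |w1' lam t| * |w1 lam (t - Δt t)| := by
        calc -2 * qt t * w1' lam t * w1 lam (t - Δt t)
            ≤ |(-2) * qt t * w1' lam t * w1 lam (t - Δt t)| := le_abs_self _
        _ = 2 * |qt t| * |w1' lam t| * |w1 lam (t - Δt t)| := by
            rw [abs_mul, abs_mul, abs_mul]; norm_num
      have hstep : g t ≤ |qt t| * (|w1' lam t| * |w1 lam (t - Δt t)| / Real.sqrt (E t + ε)) := by
        simp only [hgdef]
        rw [show |qt t| * (|w1' lam t| * |w1 lam (t - Δt t)| / Real.sqrt (E t + ε))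
            = (2 * |qt t| * |w1' lam t| * |w1 lam (t - Δt t)|) / (2 * Real.sqrt (E t + ε)) by
          rw [eq_div_iff (by positivity)]; field_simp]
        exact (div_le_div_iff_of_pos_right (by positivity)).2 hN
      calc g t ≤ |qt t| * (|w1' lam t| * |w1 lam (t - Δt t)| / Real.sqrt (E t + ε)) := hstep
      _ ≤ |qt t| * (Real.sqrt (M + ε) / (p1 * Real.sqrt lam)) :=
          mul_le_mul_of_nonneg_left key2 (abs_nonneg _)
      _ = c * |qt t| := by rw [hcdef]; ring
    have hcqi : IntervalIntegrable (fun t => c * |qt t|) MeasureTheory.volume 0 x0 := by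
      apply ContinuousOn.intervalIntegrable
      rw [Set.uIcc_of_le hx0I.1]
      exact (continuousOn_const.mul (hqtabs_c.mono hsub))
    have hint1 : (∫ t in (0:ℝ)..x0, g t) ≤ ∫ t in (0:ℝ)..x0, c * |qt t| :=
      intervalIntegral.integral_mono_on hx0I.1 hgi hcqi hptw
    have hint2 : (∫ t in (0:ℝ)..x0, c * |qt t|) = c * ∫ t in (0:ℝ)..x0, |qt t| :=
      intervalIntegral.integral_const_mul _ _
    have hint3 : (∫ t in (0:ℝ)..x0, |qt t|) ≤ ∫ t in (0:ℝ)..B, |qt t| := by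
      apply intervalIntegral.integral_mono_interval le_rfl hx0I.1 hx0I.2 _ hqtabs_int
      filter_upwards with t
      exact abs_nonneg _
    have hchain : f x0 - f 0 ≤ c * Q := by
      rw [← hFTC, hint_eq]
      calc (∫ t in (0:ℝ)..x0, g t) ≤ c * ∫ t in (0:ℝ)..x0, |qt t| := by
            rw [← hint2]; exact hint1
      _ ≤ c * ∫ t in (0:ℝ)..B, |qt t| := mul_le_mul_of_nonneg_left hint3 hcnn
      _ = c * Q := by rw [hQqt]
    have hcQ : c * Q ≤ Real.sqrt (M + ε) / 2 := by
      rw [hcdef]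
      rw [div_mul_eq_mul_div, div_le_div_iff₀ (by positivity) (by norm_num)]
      nlinarith [Real.sqrt_nonneg (M + ε), hQle, hslam]
    have hfx0 : f x0 = Real.sqrt (M + ε) := by rw [hfdef, hMdef]
    have hf0 : f 0 = Real.sqrt (E 0 + ε) := rfl
    have hfinal : Real.sqrt (M + ε) ≤ 2 * Real.sqrt (E 0 + ε) := by
      rw [hfx0, hf0] at hchain
      linarith
    have hsq1 : (Real.sqrt (M + ε))^2 = M + ε := Real.sq_sqrt (by linarith)
    have hsq2 : (Real.sqrt (E 0 + ε))^2 = E 0 + ε := Real.sq_sqrt (by linarith [hEnn 0])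
    nlinarith [Real.sqrt_nonneg (M + ε), Real.sqrt_nonneg (E 0 + ε)]
  -- conclude M ≤ 4 E 0
  have hM4 : M ≤ 4 * E 0 := by
    by_contra h
    push_neg at h
    have hε : 0 < (M - 4 * E 0) / 5 := div_pos (by linarith) (by norm_num)
    have := key _ hε
    linarith
  obtain ⟨hic1, hic2⟩ := hw1ic lam hlam
  have hE0 : E 0 = 2 * lam * p1^2 := by
    simp only [hEdef]
    rw [hic1, hic2]
    have : (Real.sqrt lam)^2 = lam := Real.sq_sqrt hlam.le
    nlinarith
  -- final bound
  intro x hx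
  have h5 : lam * (w1 lam x)^2 ≤ M := by
    have := hx0max x hx
    simp only [hEdef] at this ⊢
    nlinarith [sq_nonneg (w1' lam x)]
  have h6 : (w1 lam x)^2 ≤ 8 * p1^2 := by
    have : lam * (w1 lam x)^2 ≤ lam * (8 * p1^2) := by
      rw [hE0] at hM4; nlinarith
    exact le_of_mul_le_mul_left (by linarith) hlam
  calc |w1 lam x| = Real.sqrt ((w1 lam x)^2) := (Real.sqrt_sq_eq_abs _).symm
  _ ≤ Real.sqrt (8 * p1^2) := Real.sqrt_le_sqrt h6
  _ = 2 * Real.sqrt 2 * p1 := by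
      rw [show (8:ℝ) * p1^2 = (2 * Real.sqrt 2 * p1)^2 by
        nlinarith [Real.sq_sqrt (by norm_num : (0:ℝ) ≤ 2)]]
      exact Real.sqrt_sq (by positivity)
end
end

section
/- (Derivative bound from the proof of Lemma 2.) If λ > 0, s = √λ and s ≥ 2q₁, then the derivative of the solution w₁(·,λ) satisfies |w₁′(x,λ)| ≤ √2·s + 2√2·q₁ for all x ∈ [0,π/2]. -/
open Set Filter intervalIntegral Topology

noncomputable section

set_option maxHeartbeats 1000000 in
theorem stmt4
    (p1 p2 γ1 γ2 δ1 δ2 d : ℝ) (q Δ : ℝ → ℝ)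
    (hp1 : 0 < p1) (hp2 : 0 < p2)
    (hδ1 : δ1 ≠ 0) (hδ2 : δ2 ≠ 0)
    (hγδ : γ1 * δ2 * p1 = γ2 * δ1 * p2)
    (hqc1 : ContinuousOn q (Set.Ico 0 (Real.pi/2)))
    (hqc2 : ContinuousOn q (Set.Ioc (Real.pi/2) Real.pi))
    (hqlim1 : ∃ L : ℝ, Filter.Tendsto q (nhdsWithin (Real.pi/2) (Set.Iio (Real.pi/2))) (nhds L))
    (hqlim2 : ∃ L : ℝ, Filter.Tendsto q (nhdsWithin (Real.pi/2) (Set.Ioi (Real.pi/2))) (nhds L))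
    (hΔc1 : ContinuousOn Δ (Set.Ico 0 (Real.pi/2)))
    (hΔc2 : ContinuousOn Δ (Set.Ioc (Real.pi/2) Real.pi))
    (hΔlim1 : ∃ L : ℝ, Filter.Tendsto Δ (nhdsWithin (Real.pi/2) (Set.Iio (Real.pi/2))) (nhds L))
    (hΔlim2 : ∃ L : ℝ, Filter.Tendsto Δ (nhdsWithin (Real.pi/2) (Set.Ioi (Real.pi/2))) (nhds L))
    (hΔnonneg : ∀ x ∈ Set.Ico (0:ℝ) (Real.pi/2) ∪ Set.Ioc (Real.pi/2) Real.pi, 0 ≤ Δ x)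
    (hret1 : ∀ x ∈ Set.Ico (0:ℝ) (Real.pi/2), 0 ≤ x - Δ x)
    (hret2 : ∀ x ∈ Set.Ioc (Real.pi/2) Real.pi, Real.pi/2 ≤ x - Δ x)
    (w1 w1' w1'' : ℝ → ℝ → ℝ)
    (hw1d : ∀ lam : ℝ, 0 < lam → ∀ x ∈ Set.Icc (0:ℝ) (Real.pi/2),
      HasDerivAt (w1 lam) (w1' lam x) x ∧ HasDerivAt (w1' lam) (w1'' lam x) x)
    (hw1eq : ∀ lam : ℝ, 0 < lam → ∀ x ∈ Set.Icc (0:ℝ) (Real.pi/2),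
      p1^2 * w1'' lam x + q x * w1 lam (x - Δ x) + lam * w1 lam x = 0)
    (hw1ic : ∀ lam : ℝ, 0 < lam → w1 lam 0 = p1 ∧ w1' lam 0 = -Real.sqrt lam)
    (lam : ℝ) (hlam : 0 < lam)
    (hs : 2 * ((1/p1) * ∫ τ in (0:ℝ)..(Real.pi/2), |q τ|) ≤ Real.sqrt lam)
    :
    ∀ x ∈ Set.Icc (0:ℝ) (Real.pi/2),
      |w1' lam x| ≤ Real.sqrt 2 * Real.sqrt lam + 2 * Real.sqrt 2 * ((1/p1) * ∫ τ in (0:ℝ)..(Real.pi/2), |q τ|) := by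
  set a : ℝ := Real.pi/2 with ha_def
  have ha0 : 0 < a := by rw [ha_def]; positivity
  set s : ℝ := Real.sqrt lam with hs_def
  have hs0 : 0 < s := Real.sqrt_pos.mpr hlam
  have hlam_s : s^2 = lam := Real.sq_sqrt hlam.le
  set q1 : ℝ := (1/p1) * ∫ τ in (0:ℝ)..a, |q τ| with hq1_def
  set u : ℝ → ℝ := w1 lam with hu_def
  set v : ℝ → ℝ := w1' lam with hv_def
  have hu : ∀ x ∈ Icc (0:ℝ) a, HasDerivAt u (v x) x := fun x hx => (hw1d lam hlam x hx).1
  have hv : ∀ x ∈ Icc (0:ℝ) a, HasDerivAt v (w1'' lam x) x := fun x hx => (hw1d lam hlam x hx).2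
  have hucont : ContinuousOn u (Icc 0 a) := fun x hx => ((hu x hx).continuousAt).continuousWithinAt
  have hvcont : ContinuousOn v (Icc 0 a) := fun x hx => ((hv x hx).continuousAt).continuousWithinAt
  -- integrability of |q| on [0, a]
  have hqint : IntervalIntegrable q MeasureTheory.volume 0 a := by
    obtain ⟨L, hL⟩ := hqlim1
    set qe : ℝ → ℝ := fun t => if t = a then L else q t with hqe_def
    have hqe_cont : ContinuousOn qe (Icc 0 a) := by
      intro t ht
      rcases lt_or_eq_of_le ht.2 with h | h
      · -- t < a
        have hmem : Ico (0:ℝ) a ∈ 𝓝[Icc (0:ℝ) a] t := by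
          have h1 : Icc (0:ℝ) a ∈ 𝓝[Icc (0:ℝ) a] t := self_mem_nhdsWithin
          have h2 : Iio a ∈ 𝓝[Icc (0:ℝ) a] t := nhdsWithin_le_nhds (Iio_mem_nhds h)
          exact Filter.mem_of_superset (Filter.inter_mem h1 h2)
            (fun y hy => ⟨hy.1.1, hy.2⟩)
        have hq_t : ContinuousWithinAt q (Ico 0 a) t := hqc1 t ⟨ht.1, h⟩
        have hqe_t : ContinuousWithinAt qe (Ico 0 a) t := by
          refine hq_t.congr (fun y hy => ?_) ?_
          · exact if_neg (ne_of_lt hy.2)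
          · exact if_neg (ne_of_lt h)
        exact hqe_t.mono_of_mem_nhdsWithin hmem
      · -- t = a
        subst h
        rw [← continuousWithinAt_diff_self, Icc_sdiff_right]
        have hqe_a : qe a = L := if_pos rfl
        have h1 : Tendsto q (𝓝[Ico (0:ℝ) a] a) (𝓝 L) :=
          hL.mono_left (nhdsWithin_mono _ (fun y hy => hy.2))
        have h2 : Tendsto qe (𝓝[Ico (0:ℝ) a] a) (𝓝 L) := by
          refine h1.congr' ?_
          filter_upwards [self_mem_nhdsWithin] with y hy
          exact (if_neg (ne_of_lt hy.2)).symm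
        unfold ContinuousWithinAt
        rw [hqe_a]
        exact h2
    have hqe_int : IntervalIntegrable qe MeasureTheory.volume 0 a := by
      apply ContinuousOn.intervalIntegrable
      rw [uIcc_of_le ha0.le]; exact hqe_cont
    rw [intervalIntegrable_iff_integrableOn_Ioc_of_le ha0.le] at hqe_int ⊢
    apply hqe_int.congr
    have hsub : {y : ℝ | ¬ qe y = q y} ⊆ {a} := by
      intro y hy
      by_contra hne
      exact hy (if_neg hne)
    have h0 : MeasureTheory.volume.restrict (Ioc (0:ℝ) a) {y : ℝ | ¬ qe y = q y} = 0 := by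
      apply MeasureTheory.measure_mono_null hsub
      rw [MeasureTheory.Measure.restrict_apply (measurableSet_singleton a)]
      exact le_antisymm
        (le_trans (MeasureTheory.measure_mono Set.inter_subset_left) (by simp)) (zero_le)
    exact (MeasureTheory.ae_iff).mpr h0
  have habs_int : IntervalIntegrable (fun t => |q t|) MeasureTheory.volume 0 a := hqint.abs
  have hintnn : 0 ≤ ∫ τ in (0:ℝ)..a, |q τ| :=
    intervalIntegral.integral_nonneg ha0.le (fun t _ => abs_nonneg _)
  have hq1nn : 0 ≤ q1 := by
    rw [hq1_def]; positivity
  have hsq1 : 2 * q1 ≤ s := hs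
  -- main ε-estimate
  have main : ∀ ε : ℝ, 0 < ε → ∀ x ∈ Icc (0:ℝ) a,
      |v x| * p1 ≤ Real.sqrt (2*lam*p1^2 + ε) * (1 + 2*q1/s) := by
    intro ε hε
    set E : ℝ → ℝ := fun t => lam * (u t)^2 + p1^2 * (v t)^2 + ε with hE_def
    set F : ℝ → ℝ := fun t => Real.sqrt (E t) with hF_def
    have hEpos : ∀ t, 0 < E t := by
      intro t
      have h1 : 0 ≤ lam * (u t)^2 := by positivity
      have h2 : 0 ≤ p1^2 * (v t)^2 := by positivity
      simp only [hE_def]; linarith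
    have hFpos : ∀ t, 0 < F t := fun t => Real.sqrt_pos.mpr (hEpos t)
    have hFsq : ∀ t, (F t)^2 = E t := fun t => Real.sq_sqrt (hEpos t).le
    have hEcont : ContinuousOn E (Icc 0 a) :=
      ((continuousOn_const.mul (hucont.pow 2)).add
        (continuousOn_const.mul (hvcont.pow 2))).add continuousOn_const
    have hFcont : ContinuousOn F (Icc 0 a) := Real.continuous_sqrt.comp_continuousOn hEcont
    have hvF : ∀ t, p1 * |v t| ≤ F t := by
      intro t
      have h1 : (p1 * |v t|)^2 ≤ E t := by
        simp only [hE_def, mul_pow, sq_abs]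
        nlinarith [sq_nonneg (u t), mul_pos hlam hlam]
      calc p1 * |v t| = Real.sqrt ((p1 * |v t|)^2) := (Real.sqrt_sq (by positivity)).symm
        _ ≤ F t := Real.sqrt_le_sqrt h1
    have huF : ∀ t, s * |u t| ≤ F t := by
      intro t
      have h1 : (s * |u t|)^2 ≤ E t := by
        simp only [hE_def, mul_pow, sq_abs, hlam_s]
        nlinarith [sq_nonneg (v t), sq_nonneg p1]
      calc s * |u t| = Real.sqrt ((s * |u t|)^2) := (Real.sqrt_sq (by positivity)).symm
        _ ≤ F t := Real.sqrt_le_sqrt h1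
    obtain ⟨c, hcI, hc⟩ := isCompact_Icc.exists_isMaxOn (nonempty_Icc.mpr ha0.le) hFcont
    set M : ℝ := F c with hM_def
    have hM : ∀ t ∈ Icc (0:ℝ) a, F t ≤ M := fun t ht => hc ht
    have hM0 : 0 < M := hFpos c
    set G : ℝ → ℝ := fun t => -(v t * q t * u (t - Δ t)) / Real.sqrt (E t) with hG_def
    have hFderiv : ∀ t ∈ Ico (0:ℝ) a, HasDerivAt F (G t) t := by
      intro t ht
      have htI : t ∈ Icc (0:ℝ) a := Ico_subset_Icc_self ht
      have h1 := hu t htI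
      have h2 := hv t htI
      have hE' : HasDerivAt E (2*lam*u t*v t + 2*p1^2*(v t)*(w1'' lam t)) t := by
        have h3 := (((h1.pow 2).const_mul lam).add ((h2.pow 2).const_mul (p1^2))).add_const ε
        refine HasDerivAt.congr_deriv h3 ?_
        push_cast
        ring
      have hFd : HasDerivAt F ((2*lam*u t*v t + 2*p1^2*(v t)*(w1'' lam t)) / (2*Real.sqrt (E t))) t :=
        hE'.sqrt (ne_of_gt (hEpos t))
      have hode := hw1eq lam hlam t htI
      have hnum : 2*lam*u t*v t + 2*p1^2*(v t)*(w1'' lam t) = 2 * (-(v t * q t * u (t - Δ t))) := by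
        have : p1^2 * w1'' lam t = -(q t * u (t - Δ t)) - lam * u t := by
          rw [hu_def]; linarith [hode]
        linear_combination 2 * v t * this
      rw [hnum] at hFd
      have hne : Real.sqrt (E t) ≠ 0 := ne_of_gt (hFpos t)
      have heq : 2 * (-(v t * q t * u (t - Δ t))) / (2*Real.sqrt (E t)) = G t := by
        rw [hG_def]
        field_simp
      rwa [heq] at hFd
    have hstep : ∀ x ∈ Icc (0:ℝ) a, F x ≤ F 0 + q1 * M / s := by
      have hIco : ∀ x ∈ Ico (0:ℝ) a, F x ≤ F 0 + q1 * M / s := by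
        intro x hx
        have hx0 : 0 ≤ x := hx.1
        have hxa : x < a := hx.2
        have hsubIco : Icc (0:ℝ) x ⊆ Ico 0 a := fun t ht => ⟨ht.1, lt_of_le_of_lt ht.2 hxa⟩
        have hsubIcc : Icc (0:ℝ) x ⊆ Icc 0 a := hsubIco.trans Ico_subset_Icc_self
        have hretc : ContinuousOn (fun t => t - Δ t) (Icc 0 x) :=
          continuousOn_id.sub (hΔc1.mono hsubIco)
        have hretmaps : MapsTo (fun t => t - Δ t) (Icc (0:ℝ) x) (Icc 0 a) := by
          intro t ht
          have htIco := hsubIco ht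
          have hΔ0 : 0 ≤ Δ t := hΔnonneg t (Or.inl htIco)
          refine ⟨hret1 t htIco, ?_⟩
          show t - Δ t ≤ a
          linarith [htIco.2.le]
        have hGc : ContinuousOn G (Icc (0:ℝ) x) := by
          have h1 : ContinuousOn (fun t => u (t - Δ t)) (Icc (0:ℝ) x) :=
            hucont.comp hretc hretmaps
          have h2 : ContinuousOn v (Icc (0:ℝ) x) := hvcont.mono hsubIcc
          have h3 : ContinuousOn q (Icc (0:ℝ) x) := hqc1.mono hsubIco
          have h4 : ContinuousOn (fun t => Real.sqrt (E t)) (Icc (0:ℝ) x) :=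
            Real.continuous_sqrt.comp_continuousOn (hEcont.mono hsubIcc)
          exact (((h2.mul h3).mul h1).neg).div h4 (fun t _ => ne_of_gt (hFpos t))
        have hGc' : ContinuousOn G (uIcc (0:ℝ) x) := by
          rw [uIcc_of_le hx0]; exact hGc
        have hGint : IntervalIntegrable G MeasureTheory.volume 0 x := hGc'.intervalIntegrable
        have hftc : ∫ t in (0:ℝ)..x, G t = F x - F 0 :=
          intervalIntegral.integral_eq_sub_of_hasDerivAt
            (fun t ht => hFderiv t (hsubIco (by rwa [uIcc_of_le hx0] at ht)))
            hGint
        have hgint : IntervalIntegrable (fun t => |q t| * (M/(p1*s))) MeasureTheory.volume 0 x := by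
          apply ContinuousOn.intervalIntegrable
          rw [uIcc_of_le hx0]
          exact (hqc1.mono hsubIco).abs.mul continuousOn_const
        have hmono : ∫ t in (0:ℝ)..x, G t ≤ ∫ t in (0:ℝ)..x, |q t| * (M/(p1*s)) := by
          refine intervalIntegral.integral_mono_on hx0 hGint hgint ?_
          intro t ht
          have hy : t - Δ t ∈ Icc (0:ℝ) a := hretmaps ht
          have hv' : |v t| ≤ F t / p1 := (le_div_iff₀ hp1).mpr (by linarith [hvF t])
          have hu' : |u (t - Δ t)| ≤ M / s :=
            (le_div_iff₀ hs0).mpr (by linarith [huF (t - Δ t), hM _ hy])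
          have habsG : |G t| ≤ |q t| * (M/(p1*s)) := by
            rw [hG_def]
            simp only
            rw [abs_div, abs_neg, abs_mul, abs_mul, abs_of_pos (hFpos t)]
            rw [div_le_iff₀ (hFpos t)]
            calc |v t| * |q t| * |u (t - Δ t)| ≤ (F t / p1) * |q t| * (M / s) := by
                  gcongr <;> positivity
              _ = |q t| * (M/(p1*s)) * F t := by
                  field_simp
          exact (le_abs_self _).trans habsG
        have hqx : (∫ t in (0:ℝ)..x, |q t|) ≤ p1 * q1 := by
          have hpq : p1 * q1 = ∫ t in (0:ℝ)..a, |q t| := by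
            rw [hq1_def]
            field_simp
          rw [hpq]
          exact intervalIntegral.integral_mono_interval le_rfl hx0 hxa.le
            (Filter.Eventually.of_forall fun t => abs_nonneg _) habs_int
        have hmul : ∫ t in (0:ℝ)..x, |q t| * (M/(p1*s)) = (∫ t in (0:ℝ)..x, |q t|) * (M/(p1*s)) :=
          intervalIntegral.integral_mul_const _ _
        have hbound : F x - F 0 ≤ q1 * M / s := by
          rw [← hftc]
          have h5 : (∫ t in (0:ℝ)..x, |q t|) * (M/(p1*s)) ≤ (p1 * q1) * (M/(p1*s)) := by
            apply mul_le_mul_of_nonneg_right hqx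
            positivity
          have h6 : (p1 * q1) * (M/(p1*s)) = q1 * M / s := by
            field_simp
          rw [hmul] at hmono
          linarith
        linarith
      intro x hxI
      rcases lt_or_eq_of_le hxI.2 with h | h
      · exact hIco x ⟨hxI.1, h⟩
      · have hamem : a ∈ Icc (0:ℝ) a := ⟨ha0.le, le_rfl⟩
        have hFca : ContinuousAt F a := by
          have hEca : ContinuousAt E a :=
            ((continuousAt_const.mul (((hu a hamem).continuousAt).pow 2)).add
              (continuousAt_const.mul (((hv a hamem).continuousAt).pow 2))).add
              continuousAt_const
          exact Real.continuous_sqrt.continuousAt.comp hEca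
        have hne : (𝓝[Ico (0:ℝ) a] a).NeBot := right_nhdsWithin_Ico_neBot ha0
        have htend : Tendsto F (𝓝[Ico (0:ℝ) a] a) (𝓝 (F a)) :=
          (hFca.tendsto).mono_left nhdsWithin_le_nhds
        have hev : ∀ᶠ t in 𝓝[Ico (0:ℝ) a] a, F t ≤ F 0 + q1 * M / s :=
          eventually_nhdsWithin_of_forall hIco
        have := le_of_tendsto htend hev
        rw [← h] at this
        exact this
    have hM2 : M ≤ 2 * F 0 := by
      have h := hstep c hcI
      have h2 : q1 * M / s ≤ M / 2 := by
        rw [div_le_div_iff₀ hs0 two_pos]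
        nlinarith [hM0.le]
      linarith
    intro x hxI
    have h1 := hstep x hxI
    have h2 : F x ≤ F 0 * (1 + 2*q1/s) := by
      have h3 : q1 * M / s ≤ q1 * (2 * F 0) / s := by gcongr
      have h4 : F 0 * (1 + 2*q1/s) = F 0 + q1 * (2 * F 0) / s := by ring
      linarith
    have h3 : p1 * |v x| ≤ F x := hvF x
    have hF0 : F 0 = Real.sqrt (2*lam*p1^2 + ε) := by
      have hu0 : u 0 = p1 := (hw1ic lam hlam).1
      have hv0 : v 0 = -s := (hw1ic lam hlam).2
      simp only [hF_def, hE_def, hu0, hv0]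
      congr 1
      rw [neg_pow]
      nlinarith [hlam_s]
    rw [← hF0]
    calc |v x| * p1 = p1 * |v x| := mul_comm _ _
      _ ≤ F x := h3
      _ ≤ F 0 * (1 + 2*q1/s) := h2
  -- remove ε
  intro x hxI
  have hT : Real.sqrt 2 * s + 2 * Real.sqrt 2 * q1 = Real.sqrt 2 * s * (1 + 2*q1/s) := by
    field_simp
  set C : ℝ := (1 + 2*q1/s) / p1 with hC_def
  have hCnn : 0 ≤ C := by positivity
  have hfin : ∀ η : ℝ, 0 < η → |v x| ≤ Real.sqrt 2 * s + 2 * Real.sqrt 2 * q1 + η := by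
    intro η hη
    have hε : (0:ℝ) < (η/(C+1))^2 := by positivity
    have h := main _ hε x hxI
    have hsplit : Real.sqrt (2*lam*p1^2 + (η/(C+1))^2) ≤ Real.sqrt 2 * s * p1 + η/(C+1) := by
      have hA : Real.sqrt (2*lam*p1^2) = Real.sqrt 2 * s * p1 := by
        have e2 : (Real.sqrt 2)^2 = 2 := Real.sq_sqrt (by norm_num)
        rw [show 2*lam*p1^2 = (Real.sqrt 2 * s * p1)^2 from by rw [mul_pow, mul_pow, e2, hlam_s]]
        exact Real.sqrt_sq (by positivity)
      have hB : Real.sqrt ((η/(C+1))^2) = η/(C+1) := Real.sqrt_sq (by positivity)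
      calc Real.sqrt (2*lam*p1^2 + (η/(C+1))^2)
          ≤ Real.sqrt ((Real.sqrt (2*lam*p1^2) + Real.sqrt ((η/(C+1))^2))^2) := by
            apply Real.sqrt_le_sqrt
            nlinarith [Real.sqrt_nonneg (2*lam*p1^2), Real.sqrt_nonneg ((η/(C+1))^2),
              Real.sq_sqrt (by positivity : (0:ℝ) ≤ 2*lam*p1^2),
              Real.sq_sqrt hε.le]
        _ = Real.sqrt (2*lam*p1^2) + Real.sqrt ((η/(C+1))^2) := Real.sqrt_sq
            (by positivity)
        _ = Real.sqrt 2 * s * p1 + η/(C+1) := by rw [hA, hB]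
    have hmul : |v x| * p1 ≤ (Real.sqrt 2 * s * p1 + η/(C+1)) * (1 + 2*q1/s) := by
      refine h.trans (mul_le_mul_of_nonneg_right hsplit ?_)
      positivity
    have hdiv : |v x| ≤ Real.sqrt 2 * s * (1 + 2*q1/s) + (η/(C+1)) * C := by
      rw [hC_def]
      rw [← le_div_iff₀ hp1] at hmul
      calc |v x| ≤ (Real.sqrt 2 * s * p1 + η/(C+1)) * (1 + 2*q1/s) / p1 := hmul
        _ = Real.sqrt 2 * s * (1 + 2*q1/s) + (η/(C+1)) * ((1 + 2*q1/s)/p1) := by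
            field_simp
    have hlast : (η/(C+1)) * C ≤ η := by
      rw [div_mul_eq_mul_div, div_le_iff₀ (by linarith : (0:ℝ) < C + 1)]
      nlinarith
    rw [hT]
    linarith
  have := le_of_forall_pos_le_add hfin
  calc |v x| ≤ Real.sqrt 2 * s + 2 * Real.sqrt 2 * q1 := this
    _ = Real.sqrt 2 * s + 2 * Real.sqrt 2 * q1 := rfl
end
end

section
/- (Lemma 2, part 2.) If λ ≥ max{4q₁², 4q₂²}, then the solution w₂(·,λ) satisfies |w₂(x,λ)| ≤ 4√2·p₁·( |γ₁/δ₁| + |p₂γ₂/(4p₁δ₂)| ) for all x ∈ [π/2,π]. -/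
open Set Filter intervalIntegral

noncomputable section

open MeasureTheory


lemma cs2 (a b u v : ℝ) (huv : u^2 + v^2 = 1) : a*u + b*v ≤ Real.sqrt (a^2+b^2) := by
  have h1 : (a*u+b*v)^2 ≤ a^2+b^2 := by nlinarith [sq_nonneg (a*v - b*u)]
  have h2 := Real.sqrt_le_sqrt h1
  rw [Real.sqrt_sq_eq_abs] at h2
  linarith [le_abs_self (a*u+b*v)]

lemma cs2' (a b u v : ℝ) (huv : u^2 + v^2 = 1) : |a*u + b*v| ≤ Real.sqrt (a^2+b^2) := by
  rw [abs_le]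
  refine ⟨?_, cs2 a b u v huv⟩
  have := cs2 a b (-u) (-v) (by nlinarith)
  nlinarith

lemma sqrt_triangle (a b c d : ℝ) :
    Real.sqrt ((a+c)^2 + (b+d)^2) ≤ Real.sqrt (a^2+b^2) + Real.sqrt (c^2+d^2) := by
  have h1 : 0 ≤ Real.sqrt (a^2+b^2) := Real.sqrt_nonneg _
  have h2 : 0 ≤ Real.sqrt (c^2+d^2) := Real.sqrt_nonneg _
  have e1 : Real.sqrt (a^2+b^2) ^ 2 = a^2+b^2 := Real.sq_sqrt (by positivity)
  have e2 : Real.sqrt (c^2+d^2) ^ 2 = c^2+d^2 := Real.sq_sqrt (by positivity)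
  have hcs : a*c + b*d ≤ Real.sqrt (a^2+b^2) * Real.sqrt (c^2+d^2) := by
    nlinarith [sq_nonneg (a*d - b*c), mul_nonneg h1 h2,
      sq_nonneg (Real.sqrt (a^2+b^2) * Real.sqrt (c^2+d^2) - (a*c+b*d))]
  have key : (a+c)^2 + (b+d)^2 ≤ (Real.sqrt (a^2+b^2) + Real.sqrt (c^2+d^2))^2 := by nlinarith
  have := Real.sqrt_le_sqrt key
  rwa [Real.sqrt_sq (by positivity)] at this

lemma keyA (p lam a b : ℝ) (hp : 0 < p) (hlam : 0 < lam) (hab : a ≤ b)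
    (w w' w'' h k : ℝ → ℝ)
    (hd : ∀ x ∈ Set.Icc a b, HasDerivAt w (w' x) x ∧ HasDerivAt w' (w'' x) x)
    (heq : ∀ x ∈ Set.Icc a b, p^2 * w'' x + h x + lam * w x = 0)
    (hh : IntervalIntegrable h volume a b)
    (hk : IntervalIntegrable k volume a b)
    (hknn : ∀ s, 0 ≤ k s)
    (hbound : ∀ᵐ s ∂(volume : Measure ℝ), s ∈ Set.Ioc a b → ∃ t ∈ Set.Icc a b, |h s| ≤ k s * |w t|)
    (hksmall : (∫ s in a..b, k s) ≤ p * Real.sqrt lam / 2) :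
    (∀ x ∈ Set.Icc a b, Real.sqrt lam * |w x| ≤
        2 * Real.sqrt (lam * (w a)^2 + p^2 * (w' a)^2)) ∧
    Real.sqrt (lam * (w b)^2 + p^2 * (w' b)^2) ≤
      2 * Real.sqrt (lam * (w a)^2 + p^2 * (w' a)^2) := by
  set sl := Real.sqrt lam with hsl
  have hslpos : 0 < sl := Real.sqrt_pos.mpr hlam
  have hsl2 : sl^2 = lam := Real.sq_sqrt hlam.le
  set ω := sl / p with hω
  set g : ℝ → ℝ := fun s => -(h s) / p with hgdef
  set K1 : ℝ → ℝ := fun x => p * w' x * Real.sin (ω*x) - sl * w x * Real.cos (ω*x) with hK1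
  set K2 : ℝ → ℝ := fun x => p * w' x * Real.cos (ω*x) + sl * w x * Real.sin (ω*x) with hK2
  -- derivatives of K1 K2
  have hK1d : ∀ x ∈ Set.Icc a b, HasDerivAt K1 (g x * Real.sin (ω*x)) x := by
    intro x hx
    obtain ⟨hdw, hdw'⟩ := hd x hx
    have hsin : HasDerivAt (fun y => Real.sin (ω*y)) (Real.cos (ω*x) * ω) x := by
      simpa [Function.comp_def] using
        ((Real.hasDerivAt_sin (ω*x)).comp x ((hasDerivAt_id x).const_mul ω))
    have hcos : HasDerivAt (fun y => Real.cos (ω*y)) (-Real.sin (ω*x) * ω) x := by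
      simpa [Function.comp_def] using
        ((Real.hasDerivAt_cos (ω*x)).comp x ((hasDerivAt_id x).const_mul ω))
    have H : HasDerivAt K1
        ((p * w'' x * Real.sin (ω*x) + p * w' x * (Real.cos (ω*x) * ω))
          - (sl * w' x * Real.cos (ω*x) + sl * w x * (-Real.sin (ω*x) * ω))) x := by
      exact (((hdw'.const_mul p).mul hsin).sub ((hdw.const_mul sl).mul hcos))
    convert H using 1
    have he := heq x hx
    have hpω : p * ω = sl := by rw [hω]; field_simp
    simp only [hgdef]
    rw [div_mul_eq_mul_div, div_eq_iff hp.ne']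
    linear_combination (-(Real.sin (ω*x))) * he +
      (-(p * w' x * Real.cos (ω*x)) - w x * Real.sin (ω*x) * sl) * hpω +
      (-(w x * Real.sin (ω*x))) * hsl2
  have hK2d : ∀ x ∈ Set.Icc a b, HasDerivAt K2 (g x * Real.cos (ω*x)) x := by
    intro x hx
    obtain ⟨hdw, hdw'⟩ := hd x hx
    have hsin : HasDerivAt (fun y => Real.sin (ω*y)) (Real.cos (ω*x) * ω) x := by
      simpa [Function.comp_def] using
        ((Real.hasDerivAt_sin (ω*x)).comp x ((hasDerivAt_id x).const_mul ω))
    have hcos : HasDerivAt (fun y => Real.cos (ω*y)) (-Real.sin (ω*x) * ω) x := by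
      simpa [Function.comp_def] using
        ((Real.hasDerivAt_cos (ω*x)).comp x ((hasDerivAt_id x).const_mul ω))
    have H : HasDerivAt K2
        ((p * w'' x * Real.cos (ω*x) + p * w' x * (-Real.sin (ω*x) * ω))
          + (sl * w' x * Real.sin (ω*x) + sl * w x * (Real.cos (ω*x) * ω))) x := by
      exact (((hdw'.const_mul p).mul hcos).add ((hdw.const_mul sl).mul hsin))
    convert H using 1
    have he := heq x hx
    have hpω : p * ω = sl := by rw [hω]; field_simp
    simp only [hgdef]
    rw [div_mul_eq_mul_div, div_eq_iff hp.ne']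
    linear_combination (-(Real.cos (ω*x))) * he +
      (p * w' x * Real.sin (ω*x) - w x * Real.cos (ω*x) * sl) * hpω +
      (-(w x * Real.cos (ω*x))) * hsl2
  -- continuity of w and max of |w|
  have hwc : ContinuousOn (fun x => |w x|) (Set.Icc a b) :=
    fun x hx => ((hd x hx).1).continuousAt.continuousWithinAt.abs
  obtain ⟨xm, hxm, hmax⟩ := isCompact_Icc.exists_isMaxOn ⟨a, Set.left_mem_Icc.mpr hab⟩ hwc
  set C := |w xm| with hCdef
  have hC0 : 0 ≤ C := abs_nonneg _
  have hmax' : ∀ t ∈ Set.Icc a b, |w t| ≤ C := fun t ht => hmax ht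
  have hboundC : ∀ᵐ s ∂(volume : Measure ℝ), s ∈ Set.Ioc a b → |h s| ≤ k s * C := by
    filter_upwards [hbound] with s hs hmem
    obtain ⟨t, ht, hle⟩ := hs hmem
    exact hle.trans (mul_le_mul_of_nonneg_left (hmax' t ht) (hknn s))
  -- integrability
  have hgint : IntervalIntegrable g volume a b := by
    have := (hh.neg).div_const p
    simpa [hgdef] using this
  have hgs_int : IntervalIntegrable (fun s => g s * Real.sin (ω*s)) volume a b :=
    hgint.mul_continuousOn (Real.continuous_sin.comp (continuous_const.mul continuous_id)).continuousOn
  have hgc_int : IntervalIntegrable (fun s => g s * Real.cos (ω*s)) volume a b :=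
    hgint.mul_continuousOn (Real.continuous_cos.comp (continuous_const.mul continuous_id)).continuousOn
  -- FTC
  have hftc1 : ∀ x ∈ Set.Icc a b, K1 x = K1 a + ∫ s in a..x, g s * Real.sin (ω*s) := by
    intro x hx
    have hsub : Set.uIcc a x ⊆ Set.uIcc a b := by
      rw [Set.uIcc_of_le hx.1, Set.uIcc_of_le hab]
      exact Set.Icc_subset_Icc le_rfl hx.2
    have hsub' : Set.uIcc a x ⊆ Set.Icc a b := by
      rw [Set.uIcc_of_le hx.1]; exact Set.Icc_subset_Icc le_rfl hx.2
    have := integral_eq_sub_of_hasDerivAt (f := K1)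
      (fun s hs => hK1d s (hsub' hs)) (hgs_int.mono_set hsub)
    linarith [this]
  have hftc2 : ∀ x ∈ Set.Icc a b, K2 x = K2 a + ∫ s in a..x, g s * Real.cos (ω*s) := by
    intro x hx
    have hsub : Set.uIcc a x ⊆ Set.uIcc a b := by
      rw [Set.uIcc_of_le hx.1, Set.uIcc_of_le hab]
      exact Set.Icc_subset_Icc le_rfl hx.2
    have hsub' : Set.uIcc a x ⊆ Set.Icc a b := by
      rw [Set.uIcc_of_le hx.1]; exact Set.Icc_subset_Icc le_rfl hx.2
    have := integral_eq_sub_of_hasDerivAt (f := K2)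
      (fun s hs => hK2d s (hsub' hs)) (hgc_int.mono_set hsub)
    linarith [this]
  -- ae fact : s ≠ a
  have hneA : ∀ᵐ s ∂(volume : Measure ℝ), s ≠ a := by
    refine ae_iff.mpr ?_
    simpa [Set.setOf_eq_eq_singleton'] using (Real.volume_singleton (a := a))
  -- bound on the integral pair
  have hNbound : ∀ x ∈ Set.Icc a b,
      Real.sqrt ((∫ s in a..x, g s * Real.sin (ω*s))^2 + (∫ s in a..x, g s * Real.cos (ω*s))^2)
        ≤ C / p * ∫ s in a..x, k s := by
    intro x hx
    have hsub : Set.uIcc a x ⊆ Set.uIcc a b := by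
      rw [Set.uIcc_of_le hx.1, Set.uIcc_of_le hab]
      exact Set.Icc_subset_Icc le_rfl hx.2
    set I1 := ∫ s in a..x, g s * Real.sin (ω*s) with hI1
    set I2 := ∫ s in a..x, g s * Real.cos (ω*s) with hI2
    set N := Real.sqrt (I1^2 + I2^2) with hN
    have hN0 : 0 ≤ N := Real.sqrt_nonneg _
    have hkx : 0 ≤ ∫ s in a..x, k s := integral_nonneg hx.1 (fun u _ => hknn u)
    rcases eq_or_lt_of_le hN0 with hN0' | hNpos
    · rw [← hN0']; positivity
    have hint1 : IntervalIntegrable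
        (fun s => I1 * (g s * Real.sin (ω*s)) + I2 * (g s * Real.cos (ω*s))) volume a x :=
      ((hgs_int.mono_set hsub).const_mul I1).add ((hgc_int.mono_set hsub).const_mul I2)
    have hint2 : IntervalIntegrable (fun s => C * N / p * k s) volume a x :=
      (hk.mono_set hsub).const_mul _
    have hae : (fun s => I1 * (g s * Real.sin (ω*s)) + I2 * (g s * Real.cos (ω*s)))
        ≤ᵐ[volume.restrict (Set.Icc a x)] (fun s => C * N / p * k s) := by
      have hmem : ∀ᵐ s ∂(volume.restrict (Set.Icc a x)), s ∈ Set.Icc a x :=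
        ae_restrict_mem measurableSet_Icc
      filter_upwards [hmem, ae_restrict_of_ae hboundC, ae_restrict_of_ae hneA]
        with s hs hbs hsa
      have hsIoc : s ∈ Set.Ioc a b := ⟨lt_of_le_of_ne hs.1 (Ne.symm hsa), hs.2.trans hx.2⟩
      have hhb := hbs hsIoc
      have htrig : |I1 * Real.sin (ω*s) + I2 * Real.cos (ω*s)| ≤ N :=
        cs2' I1 I2 _ _ (Real.sin_sq_add_cos_sq (ω*s))
      have hgabs : |g s| ≤ k s * C / p := by
        have heq2 : |g s| = |h s| / p := by
          rw [hgdef]; simp only []; rw [abs_div, abs_neg, abs_of_pos hp]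
        rw [heq2]
        gcongr
      calc I1 * (g s * Real.sin (ω*s)) + I2 * (g s * Real.cos (ω*s))
          = g s * (I1 * Real.sin (ω*s) + I2 * Real.cos (ω*s)) := by ring
        _ ≤ |g s * (I1 * Real.sin (ω*s) + I2 * Real.cos (ω*s))| := le_abs_self _
        _ = |g s| * |I1 * Real.sin (ω*s) + I2 * Real.cos (ω*s)| := abs_mul _ _
        _ ≤ (k s * C / p) * N := by
            exact mul_le_mul hgabs htrig (abs_nonneg _)
              (div_nonneg (mul_nonneg (hknn s) hC0) hp.le)
        _ = C * N / p * k s := by ring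
    have hmono := integral_mono_ae_restrict hx.1 hint1 hint2 hae
    have hlhs : (∫ s in a..x, (I1 * (g s * Real.sin (ω*s)) + I2 * (g s * Real.cos (ω*s))))
        = I1^2 + I2^2 := by
      rw [integral_add ((hgs_int.mono_set hsub).const_mul I1) ((hgc_int.mono_set hsub).const_mul I2),
        intervalIntegral.integral_const_mul, intervalIntegral.integral_const_mul, ← hI1, ← hI2]
      ring
    have hrhs : (∫ s in a..x, C * N / p * k s) = C * N / p * ∫ s in a..x, k s := by
      rw [intervalIntegral.integral_const_mul]
    rw [hlhs, hrhs] at hmono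
    have hNsq : N^2 = I1^2 + I2^2 := Real.sq_sqrt (by positivity)
    have hfin : N * N ≤ (C / p * ∫ s in a..x, k s) * N := by
      have h1 : N * N = I1^2 + I2^2 := by rw [← hNsq]; ring
      rw [h1]
      calc I1^2+I2^2 ≤ C * N / p * ∫ s in a..x, k s := hmono
        _ = (C / p * ∫ s in a..x, k s) * N := by ring
    exact le_of_mul_le_mul_right hfin hNpos
  -- identity lam w^2 + p^2 w'^2 = K1^2 + K2^2
  have hid : ∀ x : ℝ, lam * w x^2 + p^2 * w' x^2 = K1 x^2 + K2 x^2 := by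
    intro x
    rw [hK1, hK2]
    simp only []
    linear_combination (-((p*w' x)^2 + (sl*w x)^2)) * (Real.sin_sq_add_cos_sq (ω*x)) +
      (-(w x^2)) * hsl2
  set Ra := Real.sqrt (lam * (w a)^2 + p^2 * (w' a)^2) with hRa
  have hRaK : Real.sqrt (K1 a^2 + K2 a^2) = Ra := by rw [hRa, hid a]
  have hrho : ∀ x ∈ Set.Icc a b,
      Real.sqrt (lam * w x^2 + p^2 * w' x^2) ≤ Ra + C/p * ∫ s in a..x, k s := by
    intro x hx
    have e1 := hftc1 x hx
    have e2 := hftc2 x hx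
    calc Real.sqrt (lam * w x^2 + p^2 * w' x^2)
        = Real.sqrt (K1 x^2 + K2 x^2) := by rw [hid x]
      _ = Real.sqrt ((K1 a + ∫ s in a..x, g s * Real.sin (ω*s))^2
            + (K2 a + ∫ s in a..x, g s * Real.cos (ω*s))^2) := by rw [← e1, ← e2]
      _ ≤ Real.sqrt (K1 a^2 + K2 a^2)
            + Real.sqrt ((∫ s in a..x, g s * Real.sin (ω*s))^2
              + (∫ s in a..x, g s * Real.cos (ω*s))^2) := sqrt_triangle _ _ _ _
      _ ≤ Ra + C/p * ∫ s in a..x, k s := by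
          rw [hRaK]; exact add_le_add_right (hNbound x hx) Ra
  have hkmono : ∀ x ∈ Set.Icc a b, (∫ s in a..x, k s) ≤ ∫ s in a..b, k s := by
    intro x hx
    have hsub1 : Set.uIcc a x ⊆ Set.uIcc a b := by
      rw [Set.uIcc_of_le hx.1, Set.uIcc_of_le hab]
      exact Set.Icc_subset_Icc le_rfl hx.2
    have hsub2 : Set.uIcc x b ⊆ Set.uIcc a b := by
      rw [Set.uIcc_of_le hx.2, Set.uIcc_of_le hab]
      exact Set.Icc_subset_Icc hx.1 le_rfl
    have hadd := integral_add_adjacent_intervals (hk.mono_set hsub1) (hk.mono_set hsub2)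
    have h3 : 0 ≤ ∫ s in x..b, k s := integral_nonneg hx.2 (fun u _ => hknn u)
    linarith
  have halfb : ∀ x ∈ Set.Icc a b, C/p * ∫ s in a..x, k s ≤ C * sl / 2 := by
    intro x hx
    have h1 : C/p * ∫ s in a..x, k s ≤ C/p * (p * sl / 2) :=
      mul_le_mul_of_nonneg_left ((hkmono x hx).trans hksmall) (by positivity)
    have h2 : C/p * (p * sl / 2) = C * sl / 2 := by field_simp
    linarith
  have hCsl : sl * C ≤ 2 * Ra := by
    have h1 := hrho xm hxm
    have h2 : sl * C ≤ Real.sqrt (lam * w xm^2 + p^2 * w' xm^2) := by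
      apply Real.le_sqrt_of_sq_le
      have h3 : (sl*C)^2 = lam * w xm^2 := by rw [mul_pow, hsl2, hCdef, sq_abs]
      nlinarith [sq_nonneg (p * w' xm)]
    linarith [halfb xm hxm]
  constructor
  · intro x hx
    have h1 : |w x| ≤ C := hmax' x hx
    calc sl * |w x| ≤ sl * C := mul_le_mul_of_nonneg_left h1 hslpos.le
      _ ≤ 2 * Ra := hCsl
  · have h1 := hrho b (Set.right_mem_Icc.mpr hab)
    have h2 := halfb b (Set.right_mem_Icc.mpr hab)
    linarith


-- continuous on Ioc a b with right-limit at a  ⇒ integrable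
lemma intLeft (f : ℝ → ℝ) (a b : ℝ) (hab : a < b)
    (hc : ContinuousOn f (Set.Ioc a b))
    (hlim : ∃ L, Tendsto f (nhdsWithin a (Set.Ioi a)) (nhds L)) :
    IntervalIntegrable f volume a b := by
  obtain ⟨L, hL⟩ := hlim
  set g : ℝ → ℝ := fun s => if a < s then f s else L with hg
  have hgc : ContinuousOn g (Set.Icc a b) := by
    intro x hx
    rcases eq_or_lt_of_le hx.1 with h | h
    · -- x = a
      have hxa : x = a := h.symm
      subst hxa
      have h1 : Tendsto g (nhdsWithin x (Set.Ioi x)) (nhds L) := by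
        apply hL.congr'
        filter_upwards [self_mem_nhdsWithin] with s hs
        rw [hg]; simp only [if_pos (mem_Ioi.mp hs)]
      have h2 : Tendsto g (pure x) (nhds L) := by
        have hgx : g x = L := by rw [hg]; simp
        simpa [hgx] using (tendsto_pure_nhds g x)
      have hsub : Set.Icc x b ⊆ {x} ∪ Set.Ioi x := by
        intro s hs; rcases eq_or_lt_of_le hs.1 with h'|h'
        · exact Or.inl (by simp [h'.symm])
        · exact Or.inr h'
      have htend : Tendsto g (nhdsWithin x (Set.Icc x b)) (nhds L) := by
        refine Tendsto.mono_left ?_ (nhdsWithin_mono x hsub)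
        rw [nhdsWithin_union, nhdsWithin_singleton]
        exact Tendsto.sup h2 h1
      have hgx : g x = L := by rw [hg]; simp
      unfold ContinuousWithinAt
      rw [hgx]
      exact htend
    · -- a < x
      have hx' : x ∈ Set.Ioc a b := ⟨h, hx.2⟩
      have base2 : ContinuousWithinAt f (Set.Icc a b) x := by
        apply (hc x hx').mono_of_mem_nhdsWithin
        have hmem : Set.Icc a b ∩ Set.Ioi a ∈ nhdsWithin x (Set.Icc a b) :=
          inter_mem_nhdsWithin _ (isOpen_Ioi.mem_nhds h)
        apply Filter.mem_of_superset hmem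
        rintro s ⟨hs1, hs2⟩; exact ⟨hs2, hs1.2⟩
      have heq : g =ᶠ[nhdsWithin x (Set.Icc a b)] f := by
        have hmem : Set.Ioi a ∈ nhdsWithin x (Set.Icc a b) :=
          mem_nhdsWithin_of_mem_nhds (isOpen_Ioi.mem_nhds h)
        filter_upwards [hmem] with s hs
        rw [hg]; simp only [if_pos (mem_Ioi.mp hs)]
      exact base2.congr_of_eventuallyEq heq (by rw [hg]; simp only [if_pos h])
  have hgint : IntervalIntegrable g volume a b :=
    (hgc.mono (by rw [Set.uIcc_of_le hab.le])).intervalIntegrable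
  rw [intervalIntegrable_iff] at hgint ⊢
  rw [Set.uIoc_of_le hab.le] at hgint ⊢
  exact hgint.congr_fun (fun s hs => by rw [hg]; simp only [if_pos hs.1]) measurableSet_Ioc


lemma intRight (f : ℝ → ℝ) (a b : ℝ) (hab : a < b)
    (hc : ContinuousOn f (Set.Ico a b))
    (hlim : ∃ L, Tendsto f (nhdsWithin b (Set.Iio b)) (nhds L)) :
    IntervalIntegrable f volume a b := by
  obtain ⟨L, hL⟩ := hlim
  set g : ℝ → ℝ := fun s => if s < b then f s else L with hg
  have hgc : ContinuousOn g (Set.Icc a b) := by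
    intro x hx
    rcases eq_or_lt_of_le hx.2 with h | h
    · -- x = b
      subst h
      have h1 : Tendsto g (nhdsWithin x (Set.Iio x)) (nhds L) := by
        apply hL.congr'
        filter_upwards [self_mem_nhdsWithin] with s hs
        rw [hg]; simp only [if_pos (mem_Iio.mp hs)]
      have h2 : Tendsto g (pure x) (nhds L) := by
        have hgx : g x = L := by rw [hg]; simp
        simpa [hgx] using (tendsto_pure_nhds g x)
      have hsub : Set.Icc a x ⊆ {x} ∪ Set.Iio x := by
        intro s hs; rcases eq_or_lt_of_le hs.2 with h'|h'
        · exact Or.inl (by simp [h'])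
        · exact Or.inr h'
      have htend : Tendsto g (nhdsWithin x (Set.Icc a x)) (nhds L) := by
        refine Tendsto.mono_left ?_ (nhdsWithin_mono x hsub)
        rw [nhdsWithin_union, nhdsWithin_singleton]
        exact Tendsto.sup h2 h1
      have hgx : g x = L := by rw [hg]; simp
      unfold ContinuousWithinAt
      rw [hgx]
      exact htend
    · -- x < b
      have hx' : x ∈ Set.Ico a b := ⟨hx.1, h⟩
      have base2 : ContinuousWithinAt f (Set.Icc a b) x := by
        apply (hc x hx').mono_of_mem_nhdsWithin
        have hmem : Set.Icc a b ∩ Set.Iio b ∈ nhdsWithin x (Set.Icc a b) :=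
          inter_mem_nhdsWithin _ (isOpen_Iio.mem_nhds h)
        apply Filter.mem_of_superset hmem
        rintro s ⟨hs1, hs2⟩; exact ⟨hs1.1, hs2⟩
      have heq : g =ᶠ[nhdsWithin x (Set.Icc a b)] f := by
        have hmem : Set.Iio b ∈ nhdsWithin x (Set.Icc a b) :=
          mem_nhdsWithin_of_mem_nhds (isOpen_Iio.mem_nhds h)
        filter_upwards [hmem] with s hs
        rw [hg]; simp only [if_pos (mem_Iio.mp hs)]
      exact base2.congr_of_eventuallyEq heq (by rw [hg]; simp only [if_pos h])
  have hgint : IntervalIntegrable g volume a b :=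
    (hgc.mono (by rw [Set.uIcc_of_le hab.le])).intervalIntegrable
  rw [intervalIntegrable_iff] at hgint ⊢
  rw [Set.uIoc_of_le hab.le] at hgint ⊢
  apply hgint.congr
  have hne : ∀ᵐ s ∂(volume.restrict (Set.Ioc a b)), s ≠ b := by
    apply ae_restrict_of_ae
    refine ae_iff.mpr ?_
    simpa [Set.setOf_eq_eq_singleton'] using (Real.volume_singleton (a := b))
  have hmem : ∀ᵐ s ∂(volume.restrict (Set.Ioc a b)), s ∈ Set.Ioc a b :=
    ae_restrict_mem measurableSet_Ioc
  filter_upwards [hne, hmem] with s hs hs2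
  rw [hg]; simp only [if_pos (lt_of_le_of_ne hs2.2 hs)]

set_option maxHeartbeats 1000000 in
theorem stmt5
    (p1 p2 γ1 γ2 δ1 δ2 d : ℝ) (q Δ : ℝ → ℝ)
    (hp1 : 0 < p1) (hp2 : 0 < p2)
    (hδ1 : δ1 ≠ 0) (hδ2 : δ2 ≠ 0)
    (hγδ : γ1 * δ2 * p1 = γ2 * δ1 * p2)
    (hqc1 : ContinuousOn q (Set.Ico 0 (Real.pi/2)))
    (hqc2 : ContinuousOn q (Set.Ioc (Real.pi/2) Real.pi))
    (hqlim1 : ∃ L : ℝ, Filter.Tendsto q (nhdsWithin (Real.pi/2) (Set.Iio (Real.pi/2))) (nhds L))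
    (hqlim2 : ∃ L : ℝ, Filter.Tendsto q (nhdsWithin (Real.pi/2) (Set.Ioi (Real.pi/2))) (nhds L))
    (hΔc1 : ContinuousOn Δ (Set.Ico 0 (Real.pi/2)))
    (hΔc2 : ContinuousOn Δ (Set.Ioc (Real.pi/2) Real.pi))
    (hΔlim1 : ∃ L : ℝ, Filter.Tendsto Δ (nhdsWithin (Real.pi/2) (Set.Iio (Real.pi/2))) (nhds L))
    (hΔlim2 : ∃ L : ℝ, Filter.Tendsto Δ (nhdsWithin (Real.pi/2) (Set.Ioi (Real.pi/2))) (nhds L))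
    (hΔnonneg : ∀ x ∈ Set.Ico (0:ℝ) (Real.pi/2) ∪ Set.Ioc (Real.pi/2) Real.pi, 0 ≤ Δ x)
    (hret1 : ∀ x ∈ Set.Ico (0:ℝ) (Real.pi/2), 0 ≤ x - Δ x)
    (hret2 : ∀ x ∈ Set.Ioc (Real.pi/2) Real.pi, Real.pi/2 ≤ x - Δ x)
    (w1 w1' w1'' : ℝ → ℝ → ℝ)
    (hw1d : ∀ lam : ℝ, 0 < lam → ∀ x ∈ Set.Icc (0:ℝ) (Real.pi/2),
      HasDerivAt (w1 lam) (w1' lam x) x ∧ HasDerivAt (w1' lam) (w1'' lam x) x)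
    (hw1eq : ∀ lam : ℝ, 0 < lam → ∀ x ∈ Set.Icc (0:ℝ) (Real.pi/2),
      p1^2 * w1'' lam x + q x * w1 lam (x - Δ x) + lam * w1 lam x = 0)
    (hw1ic : ∀ lam : ℝ, 0 < lam → w1 lam 0 = p1 ∧ w1' lam 0 = -Real.sqrt lam)
    (w2 w2' w2'' : ℝ → ℝ → ℝ)
    (hw2d : ∀ lam : ℝ, 0 < lam → ∀ x ∈ Set.Icc (Real.pi/2) Real.pi,
      HasDerivAt (w2 lam) (w2' lam x) x ∧ HasDerivAt (w2' lam) (w2'' lam x) x)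
    (hw2eq : ∀ lam : ℝ, 0 < lam → ∀ x ∈ Set.Icc (Real.pi/2) Real.pi,
      p2^2 * w2'' lam x + q x * w2 lam (x - Δ x) + lam * w2 lam x = 0)
    (hw2ic : ∀ lam : ℝ, 0 < lam →
      w2 lam (Real.pi/2) = (γ1/δ1) * w1 lam (Real.pi/2) ∧
      w2' lam (Real.pi/2) = (γ2/δ2) * w1' lam (Real.pi/2))
    (lam : ℝ) (hlam : 0 < lam)
    (hlam4 : max (4 * ((1/p1) * ∫ τ in (0:ℝ)..(Real.pi/2), |q τ|)^2) (4 * ((1/p2) * ∫ τ in (Real.pi/2)..Real.pi, |q τ|)^2) ≤ lam)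
    :
    ∀ x ∈ Set.Icc (Real.pi/2) Real.pi,
      |w2 lam x| ≤ 4 * Real.sqrt 2 * p1 * (|γ1/δ1| + |p2*γ2/(4*p1*δ2)|) := by
  intro x hx
  have pi_pos := Real.pi_pos
  have hP2pos : (0:ℝ) < Real.pi/2 := by linarith
  have hP2P : Real.pi/2 < Real.pi := by linarith
  -- integrability of |q| on both halves
  have hq1int : IntervalIntegrable q volume 0 (Real.pi/2) :=
    intRight q 0 (Real.pi/2) hP2pos hqc1 hqlim1
  have hq2int : IntervalIntegrable q volume (Real.pi/2) Real.pi :=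
    intLeft q (Real.pi/2) Real.pi hP2P hqc2 hqlim2
  have hq1abs : IntervalIntegrable (fun s => |q s|) volume 0 (Real.pi/2) := hq1int.abs
  have hq2abs : IntervalIntegrable (fun s => |q s|) volume (Real.pi/2) Real.pi := hq2int.abs
  -- smallness
  have hQ1nn : 0 ≤ ∫ τ in (0:ℝ)..(Real.pi/2), |q τ| :=
    integral_nonneg hP2pos.le (fun u _ => abs_nonneg _)
  have hQ2nn : 0 ≤ ∫ τ in (Real.pi/2)..Real.pi, |q τ| :=
    integral_nonneg hP2P.le (fun u _ => abs_nonneg _)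
  have hksmall1 : (∫ s in (0:ℝ)..(Real.pi/2), |q s|) ≤ p1 * Real.sqrt lam / 2 := by
    set Q1 := ∫ τ in (0:ℝ)..(Real.pi/2), |q τ| with hQ1
    have h4 : 4 * ((1/p1) * Q1)^2 ≤ lam := le_trans (le_max_left _ _) hlam4
    have h5 : (2*Q1/p1) ≤ Real.sqrt lam := by
      rw [Real.le_sqrt (by positivity) hlam.le]
      calc (2*Q1/p1)^2 = 4 * ((1/p1) * Q1)^2 := by ring
        _ ≤ lam := h4
    have h6 := mul_le_mul_of_nonneg_right h5 (le_of_lt (half_pos hp1))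
    calc Q1 = (2*Q1/p1) * (p1/2) := by field_simp
      _ ≤ Real.sqrt lam * (p1/2) := h6
      _ = p1 * Real.sqrt lam / 2 := by ring
  have hksmall2 : (∫ s in (Real.pi/2)..Real.pi, |q s|) ≤ p2 * Real.sqrt lam / 2 := by
    set Q2 := ∫ τ in (Real.pi/2)..Real.pi, |q τ| with hQ2
    have h4 : 4 * ((1/p2) * Q2)^2 ≤ lam := le_trans (le_max_right _ _) hlam4
    have h5 : (2*Q2/p2) ≤ Real.sqrt lam := by
      rw [Real.le_sqrt (by positivity) hlam.le]
      calc (2*Q2/p2)^2 = 4 * ((1/p2) * Q2)^2 := by ring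
        _ ≤ lam := h4
    have h6 := mul_le_mul_of_nonneg_right h5 (le_of_lt (half_pos hp2))
    calc Q2 = (2*Q2/p2) * (p2/2) := by field_simp
      _ ≤ Real.sqrt lam * (p2/2) := h6
      _ = p2 * Real.sqrt lam / 2 := by ring
  -- continuity of solutions
  have hw1cont : ContinuousOn (w1 lam) (Set.Icc 0 (Real.pi/2)) :=
    fun y hy => ((hw1d lam hlam y hy).1).continuousAt.continuousWithinAt
  have hw2cont : ContinuousOn (w2 lam) (Set.Icc (Real.pi/2) Real.pi) :=
    fun y hy => ((hw2d lam hlam y hy).1).continuousAt.continuousWithinAt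
  -- delayed-argument maps
  have hmaps1 : ∀ s ∈ Set.Ico (0:ℝ) (Real.pi/2), s - Δ s ∈ Set.Icc (0:ℝ) (Real.pi/2) := by
    intro s hs
    have h1 := hret1 s hs
    have h2 := hΔnonneg s (Or.inl hs)
    exact ⟨h1, by linarith [hs.2.le]⟩
  have hmaps2 : ∀ s ∈ Set.Ioc (Real.pi/2) Real.pi, s - Δ s ∈ Set.Icc (Real.pi/2) Real.pi := by
    intro s hs
    have h1 := hret2 s hs
    have h2 := hΔnonneg s (Or.inr hs)
    exact ⟨h1, by linarith [hs.2]⟩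
  -- bounds for w1, w2 on compacts
  obtain ⟨C1, hC1⟩ := isCompact_Icc.exists_bound_of_continuousOn hw1cont
  obtain ⟨C2, hC2⟩ := isCompact_Icc.exists_bound_of_continuousOn hw2cont
  -- ae : s ≠ π/2
  have hneP2 : ∀ᵐ s ∂(volume : Measure ℝ), s ≠ Real.pi/2 := by
    refine ae_iff.mpr ?_
    simpa [Set.setOf_eq_eq_singleton'] using (Real.volume_singleton (a := Real.pi/2))
  -- integrability of h1
  have hcomp1 : ContinuousOn (fun s => q s * w1 lam (s - Δ s)) (Set.Ico 0 (Real.pi/2)) := by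
    apply hqc1.mul
    exact hw1cont.comp (continuousOn_id.sub hΔc1) hmaps1
  have hint_h1 : IntervalIntegrable (fun s => q s * w1 lam (s - Δ s)) volume 0 (Real.pi/2) := by
    rw [intervalIntegrable_iff, Set.uIoc_of_le hP2pos.le]
    have hmeas : AEStronglyMeasurable (fun s => q s * w1 lam (s - Δ s))
        (volume.restrict (Set.Ioc 0 (Real.pi/2))) := by
      rw [← Measure.restrict_congr_set Ioo_ae_eq_Ioc]
      exact (hcomp1.mono Set.Ioo_subset_Ico_self).aestronglyMeasurable measurableSet_Ioo
    apply Integrable.mono' (g := fun s => C1 * |q s|)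
      (by have := (hq1abs.const_mul C1).def'; rwa [Set.uIoc_of_le hP2pos.le] at this)
      hmeas
    filter_upwards [ae_restrict_mem measurableSet_Ioc, ae_restrict_of_ae hneP2] with s hs hsne
    have hsIco : s ∈ Set.Ico (0:ℝ) (Real.pi/2) := ⟨hs.1.le, lt_of_le_of_ne hs.2 hsne⟩
    have ht := hmaps1 s hsIco
    calc ‖q s * w1 lam (s - Δ s)‖ = |q s| * ‖w1 lam (s - Δ s)‖ := abs_mul _ _
      _ ≤ |q s| * C1 := mul_le_mul_of_nonneg_left (hC1 _ ht) (abs_nonneg _)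
      _ = C1 * |q s| := mul_comm _ _
  -- integrability of h2
  have hcomp2 : ContinuousOn (fun s => q s * w2 lam (s - Δ s)) (Set.Ioc (Real.pi/2) Real.pi) := by
    apply hqc2.mul
    exact hw2cont.comp (continuousOn_id.sub hΔc2) hmaps2
  have hint_h2 : IntervalIntegrable (fun s => q s * w2 lam (s - Δ s)) volume (Real.pi/2) Real.pi := by
    rw [intervalIntegrable_iff, Set.uIoc_of_le hP2P.le]
    apply Integrable.mono' (g := fun s => C2 * |q s|)
      (by have := (hq2abs.const_mul C2).def'; rwa [Set.uIoc_of_le hP2P.le] at this)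
      (hcomp2.aestronglyMeasurable measurableSet_Ioc)
    filter_upwards [ae_restrict_mem measurableSet_Ioc] with s hs
    have ht := hmaps2 s hs
    calc ‖q s * w2 lam (s - Δ s)‖ = |q s| * ‖w2 lam (s - Δ s)‖ := abs_mul _ _
      _ ≤ |q s| * C2 := mul_le_mul_of_nonneg_left (hC2 _ ht) (abs_nonneg _)
      _ = C2 * |q s| := mul_comm _ _
  -- hbound hypotheses
  have hbound1 : ∀ᵐ s ∂(volume : Measure ℝ), s ∈ Set.Ioc (0:ℝ) (Real.pi/2) →
      ∃ t ∈ Set.Icc (0:ℝ) (Real.pi/2), |q s * w1 lam (s - Δ s)| ≤ |q s| * |w1 lam t| := by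
    filter_upwards [hneP2] with s hsne hs
    have hsIco : s ∈ Set.Ico (0:ℝ) (Real.pi/2) := ⟨hs.1.le, lt_of_le_of_ne hs.2 hsne⟩
    exact ⟨s - Δ s, hmaps1 s hsIco, le_of_eq (abs_mul _ _)⟩
  have hbound2 : ∀ᵐ s ∂(volume : Measure ℝ), s ∈ Set.Ioc (Real.pi/2) Real.pi →
      ∃ t ∈ Set.Icc (Real.pi/2) Real.pi, |q s * w2 lam (s - Δ s)| ≤ |q s| * |w2 lam t| := by
    refine Filter.Eventually.of_forall (fun s hs => ?_)
    exact ⟨s - Δ s, hmaps2 s hs, le_of_eq (abs_mul _ _)⟩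
  -- apply key lemma on [0, π/2]
  obtain ⟨hA1, hA2⟩ := keyA p1 lam 0 (Real.pi/2) hp1 hlam hP2pos.le
    (w1 lam) (w1' lam) (w1'' lam) (fun s => q s * w1 lam (s - Δ s)) (fun s => |q s|)
    (hw1d lam hlam) (hw1eq lam hlam) hint_h1 hq1abs (fun s => abs_nonneg _) hbound1 hksmall1
  -- apply key lemma on [π/2, π]
  obtain ⟨hB1, hB2⟩ := keyA p2 lam (Real.pi/2) Real.pi hp2 hlam hP2P.le
    (w2 lam) (w2' lam) (w2'' lam) (fun s => q s * w2 lam (s - Δ s)) (fun s => |q s|)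
    (hw2d lam hlam) (hw2eq lam hlam) hint_h2 hq2abs (fun s => abs_nonneg _) hbound2 hksmall2
  -- initial data
  obtain ⟨hic1, hic2⟩ := hw1ic lam hlam
  obtain ⟨hic3, hic4⟩ := hw2ic lam hlam
  have hsl2 : (Real.sqrt lam)^2 = lam := Real.sq_sqrt hlam.le
  have hslpos : 0 < Real.sqrt lam := Real.sqrt_pos.mpr hlam
  -- E at 0
  have hE0 : lam * (w1 lam 0)^2 + p1^2 * (w1' lam 0)^2 = 2*lam*p1^2 := by
    rw [hic1, hic2]
    rw [neg_pow]
    simp only [hsl2]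
    nlinarith [hsl2]
  have hE0' : Real.sqrt (lam * (w1 lam 0)^2 + p1^2 * (w1' lam 0)^2)
      = Real.sqrt 2 * Real.sqrt lam * p1 := by
    rw [hE0]
    have e2 : (Real.sqrt 2)^2 = 2 := Real.sq_sqrt (by norm_num)
    rw [show 2*lam*p1^2 = (Real.sqrt 2 * Real.sqrt lam * p1)^2 by
      linear_combination (-((Real.sqrt lam)^2*p1^2)) * e2 + (-(2*p1^2)) * hsl2]
    exact Real.sqrt_sq (by positivity)
  -- relation p2 * B = p1 * A
  have hp2B : p2 * (γ2/δ2) = p1 * (γ1/δ1) := by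
    field_simp
    linear_combination -hγδ
  -- E at π/2 for w2
  have hX : lam * (w2 lam (Real.pi/2))^2 + p2^2 * (w2' lam (Real.pi/2))^2
      = (γ1/δ1)^2 * (lam * (w1 lam (Real.pi/2))^2 + p1^2 * (w1' lam (Real.pi/2))^2) := by
    rw [hic3, hic4]
    have hsq : (p2 * (γ2/δ2))^2 = (p1 * (γ1/δ1))^2 := by rw [hp2B]
    nlinarith [hsq]
  -- conclude
  have hstep := hB1 x hx
  have hRa2 : Real.sqrt (lam * (w2 lam (Real.pi/2))^2 + p2^2 * (w2' lam (Real.pi/2))^2)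
      ≤ |γ1/δ1| * (2 * (Real.sqrt 2 * Real.sqrt lam * p1)) := by
    rw [hX, Real.sqrt_mul (sq_nonneg _), Real.sqrt_sq_eq_abs]
    rw [← hE0']
    exact mul_le_mul_of_nonneg_left hA2 (abs_nonneg _)
  have hfin : Real.sqrt lam * |w2 lam x| ≤
      Real.sqrt lam * (4 * Real.sqrt 2 * p1 * |γ1/δ1|) := by
    calc Real.sqrt lam * |w2 lam x|
        ≤ 2 * Real.sqrt (lam * (w2 lam (Real.pi/2))^2 + p2^2 * (w2' lam (Real.pi/2))^2) := hstep
      _ ≤ 2 * (|γ1/δ1| * (2 * (Real.sqrt 2 * Real.sqrt lam * p1))) := by linarith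
      _ = Real.sqrt lam * (4 * Real.sqrt 2 * p1 * |γ1/δ1|) := by ring
  have hfin2 : |w2 lam x| ≤ 4 * Real.sqrt 2 * p1 * |γ1/δ1| :=
    le_of_mul_le_mul_left hfin hslpos
  have habs2 : 0 ≤ |p2*γ2/(4*p1*δ2)| := abs_nonneg _
  have hc : 0 ≤ 4 * Real.sqrt 2 * p1 := by positivity
  nlinarith [hfin2]
end
end

section
/- (Asymptotics (25) for w₁.) There exist constants C > 0 and s₀ > 0 such that for all s ≥ s₀ and all x ∈ [0,π/2], |w₁(x,s²) − √2·p₁·cos(s·x/p₁ + π/4)| ≤ C/s. -/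
open Set Filter intervalIntegral
noncomputable section

lemma bdd_of_contOn_Ico (f : ℝ → ℝ) (a b : ℝ) (hab : a < b)
    (hf : ContinuousOn f (Set.Ico a b)) (L : ℝ)
    (hlim : Filter.Tendsto f (nhdsWithin b (Set.Iio b)) (nhds L)) :
    ∃ Q : ℝ, ∀ x ∈ Set.Icc a b, |f x| ≤ Q := by
  have h1 : ∀ᶠ x in nhdsWithin b (Set.Iio b), |f x| < |L| + 1 :=
    (hlim.abs).eventually_lt_const (by linarith [abs_nonneg L])
  rw [Filter.eventually_iff, mem_nhdsLT_iff_exists_Ioo_subset] at h1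
  obtain ⟨c, hc, hsub⟩ := h1
  have hc'b : max a c < b := max_lt hab hc
  have hac' : a ≤ max a c := le_max_left a c
  obtain ⟨Q0, hQ0⟩ := isCompact_Icc.exists_bound_of_continuousOn
    (hf.mono (fun x hx => ⟨hx.1, lt_of_le_of_lt hx.2 hc'b⟩) :
      ContinuousOn f (Set.Icc a (max a c)))
  refine ⟨max Q0 (max (|L| + 1) (|f b|)), fun x hx => ?_⟩
  rcases le_or_gt x (max a c) with h | h
  · exact le_trans (by simpa using hQ0 x ⟨hx.1, h⟩) (le_max_left _ _)
  · rcases eq_or_lt_of_le hx.2 with h2 | h2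
    · rw [h2]; exact le_trans (le_max_right _ _) (le_max_right _ _)
    · have : x ∈ Set.Ioo c b := ⟨lt_of_le_of_lt (le_max_right a c) h, h2⟩
      exact le_trans (le_of_lt (hsub this)) (le_trans (le_max_left _ _) (le_max_right _ _))

set_option maxHeartbeats 2000000 in
theorem stmt8
    (p1 p2 γ1 γ2 δ1 δ2 d : ℝ) (q Δ : ℝ → ℝ)
    (hp1 : 0 < p1) (hp2 : 0 < p2)
    (hδ1 : δ1 ≠ 0) (hδ2 : δ2 ≠ 0)
    (hγδ : γ1 * δ2 * p1 = γ2 * δ1 * p2)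
    (hqc1 : ContinuousOn q (Set.Ico 0 (Real.pi/2)))
    (hqc2 : ContinuousOn q (Set.Ioc (Real.pi/2) Real.pi))
    (hqlim1 : ∃ L : ℝ, Filter.Tendsto q (nhdsWithin (Real.pi/2) (Set.Iio (Real.pi/2))) (nhds L))
    (hqlim2 : ∃ L : ℝ, Filter.Tendsto q (nhdsWithin (Real.pi/2) (Set.Ioi (Real.pi/2))) (nhds L))
    (hΔc1 : ContinuousOn Δ (Set.Ico 0 (Real.pi/2)))
    (hΔc2 : ContinuousOn Δ (Set.Ioc (Real.pi/2) Real.pi))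
    (hΔlim1 : ∃ L : ℝ, Filter.Tendsto Δ (nhdsWithin (Real.pi/2) (Set.Iio (Real.pi/2))) (nhds L))
    (hΔlim2 : ∃ L : ℝ, Filter.Tendsto Δ (nhdsWithin (Real.pi/2) (Set.Ioi (Real.pi/2))) (nhds L))
    (hΔnonneg : ∀ x ∈ Set.Ico (0:ℝ) (Real.pi/2) ∪ Set.Ioc (Real.pi/2) Real.pi, 0 ≤ Δ x)
    (hret1 : ∀ x ∈ Set.Ico (0:ℝ) (Real.pi/2), 0 ≤ x - Δ x)
    (hret2 : ∀ x ∈ Set.Ioc (Real.pi/2) Real.pi, Real.pi/2 ≤ x - Δ x)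
    (w1 w1' w1'' : ℝ → ℝ → ℝ)
    (hw1d : ∀ lam : ℝ, 0 < lam → ∀ x ∈ Set.Icc (0:ℝ) (Real.pi/2),
      HasDerivAt (w1 lam) (w1' lam x) x ∧ HasDerivAt (w1' lam) (w1'' lam x) x)
    (hw1eq : ∀ lam : ℝ, 0 < lam → ∀ x ∈ Set.Icc (0:ℝ) (Real.pi/2),
      p1^2 * w1'' lam x + q x * w1 lam (x - Δ x) + lam * w1 lam x = 0)
    (hw1ic : ∀ lam : ℝ, 0 < lam → w1 lam 0 = p1 ∧ w1' lam 0 = -Real.sqrt lam)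
    :
    ∃ C : ℝ, 0 < C ∧ ∃ s0 : ℝ, 0 < s0 ∧ ∀ s : ℝ, s0 ≤ s → ∀ x ∈ Set.Icc (0:ℝ) (Real.pi/2),
      |w1 (s^2) x - Real.sqrt 2 * p1 * Real.cos (s * x / p1 + Real.pi/4)| ≤ C / s := by
  have hπ : (0:ℝ) < Real.pi := Real.pi_pos
  have hπ2 : (0:ℝ) < Real.pi / 2 := by linarith
  obtain ⟨Lq, hLq⟩ := hqlim1
  obtain ⟨Q, hQ⟩ := bdd_of_contOn_Ico q 0 (Real.pi/2) hπ2 hqc1 Lq hLq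
  have hQ0 : 0 ≤ Q := le_trans (abs_nonneg _) (hQ 0 ⟨le_refl 0, hπ2.le⟩)
  refine ⟨Real.sqrt 2 * Q * Real.pi + 1, by positivity, 1 + Q * Real.pi / p1, by positivity, ?_⟩
  intro s hs x hx
  have hs1 : (1:ℝ) ≤ s := le_trans (le_add_of_nonneg_right (by positivity)) hs
  have hsp : (0:ℝ) < s := by linarith
  have hs0 : s ≠ 0 := ne_of_gt hsp
  have hp1' : p1 ≠ 0 := ne_of_gt hp1
  have hlam : (0:ℝ) < s^2 := by positivity
  -- the comparison solution and derived functions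
  set v : ℝ → ℝ := fun y => Real.sqrt 2 * p1 * Real.cos (s * y / p1 + Real.pi/4) with hv_def
  set vd : ℝ → ℝ := fun y => -(Real.sqrt 2 * p1 * Real.sin (s * y / p1 + Real.pi/4)) * (s/p1)
    with hvd_def
  set r : ℝ → ℝ := fun y => w1 (s^2) y - v y with hr_def
  set rd : ℝ → ℝ := fun y => w1' (s^2) y - vd y with hrd_def
  set rdd : ℝ → ℝ := fun y => w1'' (s^2) y + (s/p1)^2 * v y with hrdd_def
  set G : ℝ → ℝ := fun y => r y * r y + (p1/s)^2 * (rd y * rd y) with hG_def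
  set g : ℝ → ℝ := fun y => (rd y * r y + r y * rd y)
    + (p1/s)^2 * (rdd y * rd y + rd y * rdd y) with hg_def
  have hlin : ∀ y : ℝ, HasDerivAt (fun z => s * z / p1 + Real.pi/4) (s/p1) y := by
    intro y
    simpa using (((hasDerivAt_id y).const_mul s).div_const p1).add_const (Real.pi/4)
  have hv : ∀ y : ℝ, HasDerivAt v (vd y) y := by
    intro y
    have := ((hlin y).cos).const_mul (Real.sqrt 2 * p1)
    convert this using 1
    · rfl
    · rfl
    simp only [vd]; ring
  have hvd : ∀ y : ℝ, HasDerivAt vd (-(s/p1)^2 * v y) y := by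
    intro y
    have := (((hlin y).sin).const_mul (Real.sqrt 2 * p1)).neg.mul_const (s/p1)
    convert this using 1
    · rfl
    · rfl
    · rfl
    simp only [v]; ring
  have hr : ∀ y ∈ Set.Icc (0:ℝ) (Real.pi/2), HasDerivAt r (rd y) y :=
    fun y hy => ((hw1d _ hlam y hy).1).sub (hv y)
  have hrdD : ∀ y ∈ Set.Icc (0:ℝ) (Real.pi/2), HasDerivAt rd (rdd y) y := by
    intro y hy
    have := ((hw1d _ hlam y hy).2).sub (hvd y)
    convert this using 1
    · rfl
    · rfl
    · rfl
    simp only [rdd]; ring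
  have hG : ∀ y ∈ Set.Icc (0:ℝ) (Real.pi/2), HasDerivAt G (g y) y := by
    intro y hy
    exact ((hr y hy).mul (hr y hy)).add (((hrdD y hy).mul (hrdD y hy)).const_mul _)
  have hode : ∀ y ∈ Set.Icc (0:ℝ) (Real.pi/2),
      p1^2 * rdd y = -(q y * w1 (s^2) (y - Δ y)) - s^2 * r y := by
    intro y hy
    have h := hw1eq (s^2) hlam y hy
    have key : p1^2 * ((s/p1)^2 * v y) = s^2 * v y := by field_simp
    simp only [rdd, r]
    linear_combination h + key
  have hgq : ∀ y ∈ Set.Icc (0:ℝ) (Real.pi/2),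
      g y = -(2 * (q y * (rd y * w1 (s^2) (y - Δ y)))) / s^2 := by
    intro y hy
    have h := hode y hy
    simp only [g]
    field_simp
    linear_combination (2 * rd y) * h
  -- maximum of G
  have hGc : ContinuousOn G (Set.Icc (0:ℝ) (Real.pi/2)) :=
    fun y hy => ((hG y hy).continuousAt).continuousWithinAt
  obtain ⟨x₀, hx₀mem, hx₀max⟩ :=
    isCompact_Icc.exists_isMaxOn (Set.nonempty_Icc.2 hπ2.le) hGc
  have hGmax : ∀ y ∈ Set.Icc (0:ℝ) (Real.pi/2), G y ≤ G x₀ := fun y hy => hx₀max hy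
  have hGnonneg : ∀ y : ℝ, 0 ≤ G y := fun y =>
    add_nonneg (mul_self_nonneg _) (mul_nonneg (sq_nonneg _) (mul_self_nonneg _))
  set M := G x₀ with hM_def
  have hM0 : 0 ≤ M := hGnonneg x₀
  -- pointwise bounds
  have hrabs : ∀ y ∈ Set.Icc (0:ℝ) (Real.pi/2), |r y| ≤ Real.sqrt M := by
    intro y hy
    rw [← Real.sqrt_mul_self_eq_abs]
    apply Real.sqrt_le_sqrt
    have h3 : (0:ℝ) ≤ (p1/s)^2 * (rd y * rd y) := mul_nonneg (sq_nonneg _) (mul_self_nonneg _)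
    exact le_trans (le_add_of_nonneg_right h3) (hGmax y hy)
  have hvabs : ∀ y : ℝ, |v y| ≤ Real.sqrt 2 * p1 := by
    intro y
    simp only [v]
    rw [abs_mul, abs_mul, abs_of_nonneg (Real.sqrt_nonneg 2), abs_of_pos hp1]
    calc Real.sqrt 2 * p1 * |Real.cos (s * y / p1 + Real.pi/4)|
        ≤ Real.sqrt 2 * p1 * 1 := by
          gcongr; exact Real.abs_cos_le_one _
      _ = Real.sqrt 2 * p1 := by ring
  have hrdabs : ∀ y : ℝ, |rd y| ≤ (s/p1) * Real.sqrt (G y) := by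
    intro y
    have h1 : |p1/s * rd y| ≤ Real.sqrt (G y) := by
      rw [← Real.sqrt_mul_self_eq_abs]
      apply Real.sqrt_le_sqrt
      have h3 : (p1/s * rd y) * (p1/s * rd y) = (p1/s)^2 * (rd y * rd y) := by ring
      rw [h3]
      exact le_add_of_nonneg_left (mul_self_nonneg (r y))
    rw [abs_mul, abs_of_pos (by positivity : (0:ℝ) < p1/s)] at h1
    rw [show (s/p1) * Real.sqrt (G y) = Real.sqrt (G y) / (p1/s) by field_simp,
      le_div_iff₀ (by positivity : (0:ℝ) < p1/s)]
    linarith [h1]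
  -- K : the derivative bound for sqrt (G + ε)
  set K := Q / (p1 * s) * (Real.sqrt M + Real.sqrt 2 * p1) with hK_def
  have hK0 : 0 ≤ K := by
    apply mul_nonneg (div_nonneg hQ0 (by positivity))
    positivity
  -- the main estimate: for all b in Icc, sqrt (G b) ≤ K * (π/2)
  have hG0 : G 0 = 0 := by
    have hic := hw1ic (s^2) hlam
    have h2 : Real.sqrt 2 * Real.sqrt 2 = 2 := Real.mul_self_sqrt (by norm_num)
    have hr0 : r 0 = 0 := by
      simp only [hr_def, hv_def, mul_zero, zero_div, zero_add, Real.cos_pi_div_four]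
      rw [hic.1]
      nlinarith [h2]
    have hrd0 : rd 0 = 0 := by
      have hsq : Real.sqrt (s^2) = s := Real.sqrt_sq hsp.le
      simp only [hrd_def, hvd_def, mul_zero, zero_div, zero_add, Real.sin_pi_div_four]
      rw [hic.2, hsq]
      have key : Real.sqrt 2 * p1 * (Real.sqrt 2 / 2) * (s / p1) = s := by
        field_simp
        linear_combination h2
      nlinarith [key]
    simp only [hG_def, hr0, hrd0]
    ring
  have hstepA : ∀ b ∈ Set.Ico (0:ℝ) (Real.pi/2), ∀ ε : ℝ, 0 < ε →
      Real.sqrt (G b + ε) ≤ Real.sqrt ε + K * (Real.pi/2) := by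
    intro b hb ε hε
    have hsub : Set.Icc (0:ℝ) b ⊆ Set.Icc (0:ℝ) (Real.pi/2) :=
      Set.Icc_subset_Icc le_rfl hb.2.le
    have hsub2 : Set.Icc (0:ℝ) b ⊆ Set.Ico (0:ℝ) (Real.pi/2) :=
      fun y hy => ⟨hy.1, lt_of_le_of_lt hy.2 hb.2⟩
    have hHd : ∀ y ∈ Set.Icc (0:ℝ) b,
        HasDerivAt (fun z => Real.sqrt (G z + ε)) (g y / (2 * Real.sqrt (G y + ε))) y := by
      intro y hy
      have h1 : HasDerivAt (fun z => G z + ε) (g y) y := (hG y (hsub hy)).add_const ε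
      exact h1.sqrt (ne_of_gt (by linarith [hGnonneg y]))
    have hbound : ∀ y ∈ Set.Icc (0:ℝ) b, ‖g y / (2 * Real.sqrt (G y + ε))‖ ≤ K := by
      intro y hy
      have hyI : y ∈ Set.Ico (0:ℝ) (Real.pi/2) := hsub2 hy
      have hyc : y ∈ Set.Icc (0:ℝ) (Real.pi/2) := hsub hy
      have hΔy : 0 ≤ Δ y := hΔnonneg y (Or.inl hyI)
      have hrety : y - Δ y ∈ Set.Icc (0:ℝ) (Real.pi/2) :=
        ⟨hret1 y hyI, le_trans (by linarith [hyc.2]) hyc.2⟩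
      have hu1 : |q y| ≤ Q := hQ y hyc
      have hu3 : |w1 (s^2) (y - Δ y)| ≤ Real.sqrt M + Real.sqrt 2 * p1 := by
        have e : w1 (s^2) (y - Δ y) = r (y - Δ y) + v (y - Δ y) := by
          simp [hr_def]
        rw [e]
        exact le_trans (abs_add_le _ _) (add_le_add (hrabs _ hrety) (hvabs _))
      have hGε : (0:ℝ) < Real.sqrt (G y + ε) := Real.sqrt_pos.2 (by linarith [hGnonneg y])
      have hu2 : |rd y| ≤ (s/p1) * Real.sqrt (G y + ε) := by
        refine le_trans (hrdabs y) ?_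
        have : Real.sqrt (G y) ≤ Real.sqrt (G y + ε) := Real.sqrt_le_sqrt (by linarith)
        exact mul_le_mul_of_nonneg_left this (by positivity)
      rw [Real.norm_eq_abs, abs_div, abs_of_pos (by positivity : (0:ℝ) < 2 * Real.sqrt (G y + ε)),
        div_le_iff₀ (by positivity)]
      have e1 : |g y| = 2 * (|q y| * (|rd y| * |w1 (s^2) (y - Δ y)|)) / s^2 := by
        rw [hgq y hyc, abs_div, abs_neg, abs_of_pos (show (0:ℝ) < s^2 by positivity),
          abs_mul, abs_mul, abs_mul, abs_two]
      have e2 : 2 * (|q y| * (|rd y| * |w1 (s^2) (y - Δ y)|)) / s^2 ≤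
          2 * (Q * (((s/p1) * Real.sqrt (G y + ε)) * (Real.sqrt M + Real.sqrt 2 * p1))) / s^2 := by
        gcongr
      have e3 : 2 * (Q * (((s/p1) * Real.sqrt (G y + ε)) * (Real.sqrt M + Real.sqrt 2 * p1))) / s^2
          = K * (2 * Real.sqrt (G y + ε)) := by
        rw [hK_def]
        generalize Real.sqrt M + Real.sqrt 2 * p1 = A
        generalize Real.sqrt (G y + ε) = B
        field_simp
      rw [e1]
      linarith [e2, e3.ge, e3.le]
    have mvt := (convex_Icc (0:ℝ) b).norm_image_sub_le_of_norm_hasDerivWithin_le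
      (fun y hy => (hHd y hy).hasDerivWithinAt) hbound
      (Set.left_mem_Icc.2 hb.1) (Set.right_mem_Icc.2 hb.1)
    rw [Real.norm_eq_abs, Real.norm_eq_abs, sub_zero] at mvt
    have h4 : Real.sqrt (G b + ε) - Real.sqrt (G 0 + ε) ≤ K * b := by
      calc Real.sqrt (G b + ε) - Real.sqrt (G 0 + ε)
          ≤ |Real.sqrt (G b + ε) - Real.sqrt (G 0 + ε)| := le_abs_self _
        _ ≤ K * |b| := mvt
        _ = K * b := by rw [abs_of_nonneg hb.1]
    have h5 : Real.sqrt (G 0 + ε) = Real.sqrt ε := by rw [hG0, zero_add]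
    have h6 : K * b ≤ K * (Real.pi/2) := mul_le_mul_of_nonneg_left hb.2.le hK0
    linarith [h4, h5.le, h5.ge, h6]
  have hstepB : ∀ b ∈ Set.Ico (0:ℝ) (Real.pi/2), Real.sqrt (G b) ≤ K * (Real.pi/2) := by
    intro b hb
    have t1 : Filter.Tendsto (fun ε : ℝ => Real.sqrt (G b + ε))
        (nhdsWithin 0 (Set.Ioi 0)) (nhds (Real.sqrt (G b))) := by
      have hcont : ContinuousAt (fun ε : ℝ => Real.sqrt (G b + ε)) 0 :=
        (Real.continuous_sqrt.comp (continuous_const.add continuous_id)).continuousAt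
      have h5 : Filter.Tendsto (fun ε : ℝ => Real.sqrt (G b + ε))
          (nhdsWithin 0 (Set.Ioi 0)) (nhds (Real.sqrt (G b + 0))) :=
        hcont.tendsto.mono_left nhdsWithin_le_nhds
      simpa using h5
    have t2 : Filter.Tendsto (fun ε : ℝ => Real.sqrt ε + K * (Real.pi/2))
        (nhdsWithin 0 (Set.Ioi 0)) (nhds (0 + K * (Real.pi/2))) := by
      have h := Real.continuous_sqrt.continuousAt (x := (0:ℝ))
      have h2 := (h.tendsto.mono_left nhdsWithin_le_nhds).add
        (tendsto_const_nhds (x := K * (Real.pi/2)) (f := nhdsWithin (0:ℝ) (Set.Ioi 0)))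
      simpa using h2
    have hev : ∀ᶠ ε in nhdsWithin (0:ℝ) (Set.Ioi 0),
        Real.sqrt (G b + ε) ≤ Real.sqrt ε + K * (Real.pi/2) :=
      eventually_mem_nhdsWithin.mono (fun ε hε => hstepA b hb ε hε)
    have := le_of_tendsto_of_tendsto t1 t2 hev
    linarith [this]
  have hmain : ∀ b ∈ Set.Icc (0:ℝ) (Real.pi/2), Real.sqrt (G b) ≤ K * (Real.pi/2) := by
    intro b hb
    rcases lt_or_eq_of_le hb.2 with h | h
    · exact hstepB b ⟨hb.1, h⟩
    · subst h
      have hcG : ContinuousAt G (Real.pi/2) :=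
        (hG _ ⟨hπ2.le, le_refl _⟩).continuousAt
      have t : Filter.Tendsto (fun y => Real.sqrt (G y))
          (nhdsWithin (Real.pi/2) (Set.Iio (Real.pi/2))) (nhds (Real.sqrt (G (Real.pi/2)))) :=
        ((Real.continuous_sqrt.continuousAt.comp hcG).tendsto).mono_left nhdsWithin_le_nhds
      have hev : ∀ᶠ y in nhdsWithin (Real.pi/2) (Set.Iio (Real.pi/2)),
          Real.sqrt (G y) ≤ K * (Real.pi/2) := by
        filter_upwards [Ioo_mem_nhdsLT_of_mem
          (show Real.pi/2 ∈ Set.Ioc (0:ℝ) (Real.pi/2) from ⟨hπ2, le_refl _⟩)] with y hy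
        exact hstepB y ⟨hy.1.le, hy.2⟩
      exact le_of_tendsto t hev
  -- conclude
  have hMbound : Real.sqrt M ≤ Real.sqrt 2 * Q * Real.pi / s := by
    have h1 : Real.sqrt M ≤ K * (Real.pi/2) := hmain x₀ hx₀mem
    have hqps : Q * Real.pi ≤ p1 * s := by
      have h3 := mul_le_mul_of_nonneg_left hs hp1.le
      have e : p1 * (1 + Q * Real.pi / p1) = p1 + Q * Real.pi := by field_simp
      nlinarith [h3, e.le, e.ge, hp1]
    have h2 : Real.sqrt M * (2 * (p1 * s)) ≤ Q * (Real.sqrt M + Real.sqrt 2 * p1) * Real.pi := by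
      have h3 := mul_le_mul_of_nonneg_right h1 (show (0:ℝ) ≤ 2 * (p1 * s) by positivity)
      have e : K * (Real.pi/2) * (2 * (p1 * s)) =
          Q * (Real.sqrt M + Real.sqrt 2 * p1) * Real.pi := by
        rw [hK_def]
        generalize Real.sqrt M + Real.sqrt 2 * p1 = A
        field_simp
      linarith [h3, e.le, e.ge]
    rw [le_div_iff₀ hsp]
    nlinarith [h2, hqps, Real.sqrt_nonneg M,
      mul_nonneg (sub_nonneg.2 hqps) (Real.sqrt_nonneg M), hp1, hsp]
  have hfinal : |r x| ≤ Real.sqrt M := hrabs x hx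
  calc |w1 (s^2) x - Real.sqrt 2 * p1 * Real.cos (s * x / p1 + Real.pi/4)|
      = |r x| := rfl
    _ ≤ Real.sqrt M := hfinal
    _ ≤ Real.sqrt 2 * Q * Real.pi / s := hMbound
    _ ≤ (Real.sqrt 2 * Q * Real.pi + 1) / s := by gcongr; linarith
end
end

section
/- (Asymptotics (26) for w₁′.) There exist constants C > 0 and s₀ > 0 such that for all s ≥ s₀ and all x ∈ [0,π/2], |w₁′(x,s²) + √2·s·sin(s·x/p₁ + π/4)| ≤ C. -/
open Set Filter intervalIntegral

noncomputable section

lemma abs_le_of_sq_le' {a b : ℝ} (h : a^2 ≤ b^2) (hb : 0 ≤ b) : |a| ≤ b := by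
  rw [← Real.sqrt_sq_eq_abs, ← Real.sqrt_sq hb]; exact Real.sqrt_le_sqrt h

set_option maxHeartbeats 2000000 in
theorem stmt9
    (p1 p2 γ1 γ2 δ1 δ2 d : ℝ) (q Δ : ℝ → ℝ)
    (hp1 : 0 < p1) (hp2 : 0 < p2)
    (hδ1 : δ1 ≠ 0) (hδ2 : δ2 ≠ 0)
    (hγδ : γ1 * δ2 * p1 = γ2 * δ1 * p2)
    (hqc1 : ContinuousOn q (Set.Ico 0 (Real.pi/2)))
    (hqc2 : ContinuousOn q (Set.Ioc (Real.pi/2) Real.pi))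
    (hqlim1 : ∃ L : ℝ, Filter.Tendsto q (nhdsWithin (Real.pi/2) (Set.Iio (Real.pi/2))) (nhds L))
    (hqlim2 : ∃ L : ℝ, Filter.Tendsto q (nhdsWithin (Real.pi/2) (Set.Ioi (Real.pi/2))) (nhds L))
    (hΔc1 : ContinuousOn Δ (Set.Ico 0 (Real.pi/2)))
    (hΔc2 : ContinuousOn Δ (Set.Ioc (Real.pi/2) Real.pi))
    (hΔlim1 : ∃ L : ℝ, Filter.Tendsto Δ (nhdsWithin (Real.pi/2) (Set.Iio (Real.pi/2))) (nhds L))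
    (hΔlim2 : ∃ L : ℝ, Filter.Tendsto Δ (nhdsWithin (Real.pi/2) (Set.Ioi (Real.pi/2))) (nhds L))
    (hΔnonneg : ∀ x ∈ Set.Ico (0:ℝ) (Real.pi/2) ∪ Set.Ioc (Real.pi/2) Real.pi, 0 ≤ Δ x)
    (hret1 : ∀ x ∈ Set.Ico (0:ℝ) (Real.pi/2), 0 ≤ x - Δ x)
    (hret2 : ∀ x ∈ Set.Ioc (Real.pi/2) Real.pi, Real.pi/2 ≤ x - Δ x)
    (w1 w1' w1'' : ℝ → ℝ → ℝ)
    (hw1d : ∀ lam : ℝ, 0 < lam → ∀ x ∈ Set.Icc (0:ℝ) (Real.pi/2),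
      HasDerivAt (w1 lam) (w1' lam x) x ∧ HasDerivAt (w1' lam) (w1'' lam x) x)
    (hw1eq : ∀ lam : ℝ, 0 < lam → ∀ x ∈ Set.Icc (0:ℝ) (Real.pi/2),
      p1^2 * w1'' lam x + q x * w1 lam (x - Δ x) + lam * w1 lam x = 0)
    (hw1ic : ∀ lam : ℝ, 0 < lam → w1 lam 0 = p1 ∧ w1' lam 0 = -Real.sqrt lam)
    :
    ∃ C : ℝ, 0 < C ∧ ∃ s0 : ℝ, 0 < s0 ∧ ∀ s : ℝ, s0 ≤ s → ∀ x ∈ Set.Icc (0:ℝ) (Real.pi/2),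
      |w1' (s^2) x + Real.sqrt 2 * s * Real.sin (s * x / p1 + Real.pi/4)| ≤ C := by
  -- Step 0: a bound B for |q| on [0, π/2)
  obtain ⟨L, hL⟩ := hqlim1
  obtain ⟨δ, hδpos, hδ⟩ := Metric.tendsto_nhdsWithin_nhds.mp hL 1 one_pos
  obtain ⟨B1, hB1⟩ := (isCompact_Icc (a := (0:ℝ)) (b := Real.pi/2 - δ/2)).exists_bound_of_continuousOn
    (hqc1.mono (fun x hx => ⟨hx.1, by have := hx.2; linarith⟩))
  set B : ℝ := |B1| + |L| + 1 with hBdef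
  have hB0 : 0 ≤ B := by positivity
  have hqB : ∀ x ∈ Set.Ico (0:ℝ) (Real.pi/2), |q x| ≤ B := by
    intro x hx
    by_cases hc : x ≤ Real.pi/2 - δ/2
    · have h := hB1 x ⟨hx.1, hc⟩
      rw [Real.norm_eq_abs] at h
      have := le_abs_self B1
      have := abs_nonneg L
      rw [hBdef]; linarith
    · push_neg at hc
      have hd : dist x (Real.pi/2) < δ := by
        rw [Real.dist_eq, abs_of_nonpos (by linarith [hx.2])]
        linarith [hx.2]
      have h := hδ hx.2 hd
      rw [Real.dist_eq] at h
      have h2 := abs_sub_abs_le_abs_sub (q x) L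
      have := le_abs_self B1
      have := abs_nonneg B1
      rw [hBdef]; linarith
  refine ⟨B * Real.pi / p1 + 1, by positivity, 2 * Real.pi * B / p1 + 1, by positivity, ?_⟩
  intro s hs x hx
  have hπ := Real.pi_pos
  have hspos : 0 < s := lt_of_lt_of_le (by positivity) hs
  have hsp1 : 2 * Real.pi * B < s * p1 := by
    have h1 : (2 * Real.pi * B / p1 + 1) * p1 ≤ s * p1 :=
      mul_le_mul_of_nonneg_right hs hp1.le
    have h2 : (2 * Real.pi * B / p1 + 1) * p1 = 2 * Real.pi * B + p1 := by
      field_simp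
    rw [h2] at h1
    linarith
  have hlam : 0 < s^2 := by positivity
  set W := w1 (s^2) with hWdef
  set W' := w1' (s^2) with hW'def
  set W'' := w1'' (s^2) with hW''def
  have hW0 : W 0 = p1 := (hw1ic _ hlam).1
  have hW'0' : W' 0 = -s := by
    have h := (hw1ic _ hlam).2
    rw [Real.sqrt_sq hspos.le] at h
    exact h
  have hd : ∀ t ∈ Set.Icc (0:ℝ) (Real.pi/2),
      HasDerivAt W (W' t) t ∧ HasDerivAt W' (W'' t) t := hw1d _ hlam
  have heq : ∀ t ∈ Set.Icc (0:ℝ) (Real.pi/2),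
      p1^2 * W'' t + q t * W (t - Δ t) + s^2 * W t = 0 := hw1eq _ hlam
  -- Energy of W
  set E : ℝ → ℝ := fun t => s^2 * W t ^ 2 + p1^2 * W' t ^ 2 with hEdef
  have hE : ∀ t ∈ Set.Icc (0:ℝ) (Real.pi/2),
      HasDerivAt E (-(2 * q t * W' t * W (t - Δ t))) t := by
    intro t ht
    have h1 := (hd t ht).1
    have h2 := (hd t ht).2
    have h3 : HasDerivAt E
        (s^2 * ((2:ℕ) * W t ^ 1 * W' t) + p1^2 * ((2:ℕ) * W' t ^ 1 * W'' t)) t := by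
      simp only [hEdef]
      exact ((h1.pow 2).const_mul (s^2)).add ((h2.pow 2).const_mul (p1^2))
    convert h3 using 1
    have hq := heq t ht
    push_cast
    linear_combination (-2 * W' t) * hq
  have hEcontIcc : ∀ t ∈ Set.Icc (0:ℝ) (Real.pi/2), ContinuousAt E t :=
    fun t ht => (hE t ht).continuousAt
  have hE0 : E 0 = 2 * s^2 * p1^2 := by
    simp only [hEdef]; rw [hW0, hW'0']; ring
  -- Step 1: uniform energy bound  E ≤ 4 s² p1²
  have key1 : ∀ y ∈ Set.Icc (0:ℝ) (Real.pi/2), E y ≤ 4 * s^2 * p1^2 := by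
    by_contra hcon
    push_neg at hcon
    obtain ⟨z, hz, hzE⟩ := hcon
    set A := Set.Icc (0:ℝ) (Real.pi/2) ∩ E ⁻¹' (Set.Ici (4 * s^2 * p1^2)) with hAdef
    have hAne : A.Nonempty := ⟨z, hz, le_of_lt hzE⟩
    have hAclosed : IsClosed A :=
      ContinuousOn.preimage_isClosed_of_isClosed
        (fun t ht => (hEcontIcc t ht).continuousWithinAt) isClosed_Icc isClosed_Ici
    have hAbdd : BddBelow A := ⟨0, fun t ht => ht.1.1⟩
    set x₀ := sInf A with hx₀def
    have hx₀A : x₀ ∈ A := hAclosed.csInf_mem hAne hAbdd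
    have hx₀Icc : x₀ ∈ Set.Icc (0:ℝ) (Real.pi/2) := hx₀A.1
    have hlow : ∀ t, 0 ≤ t → t < x₀ → E t ≤ 4 * s^2 * p1^2 := by
      intro t ht0 htx
      by_contra h'
      push_neg at h'
      have htA : t ∈ A := ⟨⟨ht0, le_trans htx.le hx₀Icc.2⟩, le_of_lt h'⟩
      exact absurd (csInf_le hAbdd htA) (not_le.mpr htx)
    have hbound : ∀ t ∈ Set.Ico (0:ℝ) x₀,
        ‖-(2 * q t * W' t * W (t - Δ t))‖ ≤ 2 * B * (2 * s) * (2 * p1) := by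
      intro t ht
      have htI : t ∈ Set.Ico (0:ℝ) (Real.pi/2) := ⟨ht.1, lt_of_lt_of_le ht.2 hx₀Icc.2⟩
      have hqb := hqB t htI
      have hEt := hlow t ht.1 ht.2
      have hW't : |W' t| ≤ 2 * s := by
        apply abs_le_of_sq_le' _ (by positivity)
        simp only [hEdef] at hEt
        nlinarith [sq_nonneg (W t), sq_nonneg (s * W t), mul_pos hp1 hp1]
      have hy0 : 0 ≤ t - Δ t := hret1 t htI
      have hy1 : t - Δ t ≤ t := by
        have := hΔnonneg t (Or.inl htI); linarith
      have hEy := hlow (t - Δ t) hy0 (lt_of_le_of_lt hy1 ht.2)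
      have hWd : |W (t - Δ t)| ≤ 2 * p1 := by
        apply abs_le_of_sq_le' _ (by positivity)
        simp only [hEdef] at hEy
        nlinarith [sq_nonneg (W' (t - Δ t)), mul_pos hspos hspos]
      rw [Real.norm_eq_abs, abs_neg, abs_mul, abs_mul, abs_mul, abs_two]
      gcongr
    have hmvt := norm_image_sub_le_of_norm_deriv_right_le_segment
      (f := E) (a := 0) (b := x₀) (f' := fun t => -(2 * q t * W' t * W (t - Δ t)))
      (fun t ht => (hEcontIcc t ⟨ht.1, ht.2.trans hx₀Icc.2⟩).continuousWithinAt)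
      (fun t ht => (hE t ⟨ht.1, ht.2.le.trans hx₀Icc.2⟩).hasDerivWithinAt)
      hbound x₀ ⟨hx₀Icc.1, le_refl _⟩
    rw [Real.norm_eq_abs] at hmvt
    have h1 := (abs_le.mp hmvt).2
    have hK : (0:ℝ) ≤ 2 * B * (2 * s) * (2 * p1) := by positivity
    have h2 : 2 * B * (2 * s) * (2 * p1) * (x₀ - 0) ≤ 2 * B * (2 * s) * (2 * p1) * (Real.pi/2) := by
      apply mul_le_mul_of_nonneg_left _ hK
      linarith [hx₀Icc.2]
    have h3 : 4 * s^2 * p1^2 ≤ E x₀ := hx₀A.2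
    have h4 : (s * p1) * (2 * Real.pi * B) < (s * p1) * (s * p1) :=
      mul_lt_mul_of_pos_left hsp1 (mul_pos hspos hp1)
    clear_value x₀ A E W W' W'' B
    linarith [h1, h2, h3, hE0, h4]
  -- consequence: |W| ≤ 2 p1 on [0, π/2]
  have hWb : ∀ y ∈ Set.Icc (0:ℝ) (Real.pi/2), |W y| ≤ 2 * p1 := by
    intro y hy
    have hEy := key1 y hy
    apply abs_le_of_sq_le' _ (by positivity)
    simp only [hEdef] at hEy
    nlinarith [sq_nonneg (W' y), mul_pos hspos hspos]
  -- Step 2: comparison with the free solution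
  set D : ℝ → ℝ := fun y => W' y + s * Real.sin (s * y / p1) + s * Real.cos (s * y / p1)
    with hDdef
  set G : ℝ → ℝ := fun y =>
      s^2 * (W y - p1 * Real.cos (s * y / p1) + p1 * Real.sin (s * y / p1)) ^ 2
        + p1^2 * D y ^ 2 with hGdef
  have hGnonneg : ∀ y, 0 ≤ G y := by
    intro y; simp only [hGdef]; positivity
  have hθ : ∀ y : ℝ, HasDerivAt (fun z => s * z / p1) (s / p1) y := by
    intro y
    simpa using ((hasDerivAt_id y).const_mul s).div_const p1
  have hcos : ∀ y : ℝ, HasDerivAt (fun z => Real.cos (s * z / p1))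
      (-Real.sin (s * y / p1) * (s / p1)) y :=
    fun y => (Real.hasDerivAt_cos _).comp y (hθ y)
  have hsin : ∀ y : ℝ, HasDerivAt (fun z => Real.sin (s * z / p1))
      (Real.cos (s * y / p1) * (s / p1)) y :=
    fun y => (Real.hasDerivAt_sin _).comp y (hθ y)
  have hU : ∀ y ∈ Set.Icc (0:ℝ) (Real.pi/2),
      HasDerivAt (fun z => W z - p1 * Real.cos (s * z / p1) + p1 * Real.sin (s * z / p1))
        (D y) y := by
    intro y hy
    have h := (((hd y hy).1).sub ((hcos y).const_mul p1)).add ((hsin y).const_mul p1)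
    refine h.congr_deriv ?_
    simp only [hDdef]
    field_simp
    ring
  have hD' : ∀ y ∈ Set.Icc (0:ℝ) (Real.pi/2),
      HasDerivAt D (W'' y + s * (Real.cos (s * y / p1) * (s / p1))
        + s * (-Real.sin (s * y / p1) * (s / p1))) y := by
    intro y hy
    simp only [hDdef]
    exact (((hd y hy).2).add ((hsin y).const_mul s)).add ((hcos y).const_mul s)
  have hG : ∀ y ∈ Set.Icc (0:ℝ) (Real.pi/2),
      HasDerivAt G (-(2 * q y * D y * W (y - Δ y))) y := by
    intro y hy
    have h1 := hU y hy
    have h2 := hD' y hy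
    have h3 : HasDerivAt G
        (s^2 * ((2:ℕ) * (W y - p1 * Real.cos (s * y / p1) + p1 * Real.sin (s * y / p1)) ^ 1 * D y)
          + p1^2 * ((2:ℕ) * D y ^ 1 * (W'' y + s * (Real.cos (s * y / p1) * (s / p1))
            + s * (-Real.sin (s * y / p1) * (s / p1))))) y := by
      simp only [hGdef]
      exact ((h1.pow 2).const_mul (s^2)).add ((h2.pow 2).const_mul (p1^2))
    convert h3 using 1
    have hq := heq y hy
    have hDy : D y = W' y + s * Real.sin (s * y / p1) + s * Real.cos (s * y / p1) := by
      simp only [hDdef]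
    have hp1' : p1 * p1⁻¹ = 1 := mul_inv_cancel₀ hp1.ne'
    push_cast
    linear_combination (-2 * D y) * hq
      + (-2 * D y * s^2 * p1 * (Real.cos (s * y / p1) - Real.sin (s * y / p1))) * hp1'
  have hG0 : G 0 = 0 := by
    simp only [hGdef, hDdef]
    rw [hW0, hW'0']
    norm_num
  -- derivative bound for √(G + ε)
  have key2 : ∀ y ∈ Set.Icc (0:ℝ) (Real.pi/2), Real.sqrt (G y) ≤ 2 * B * y := by
    intro y hy
    have main : ∀ ε : ℝ, ε ∈ Set.Ioi (0:ℝ) →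
        Real.sqrt (G y + ε) ≤ Real.sqrt ε + 2 * B * y := by
      intro ε hε
      rw [Set.mem_Ioi] at hε
      have hGε : ∀ z, (0:ℝ) < G z + ε := fun z => by
        have := hGnonneg z; linarith
      have hf : ∀ z ∈ Set.Icc (0:ℝ) (Real.pi/2),
          HasDerivAt (fun w => Real.sqrt (G w + ε))
            (1 / (2 * Real.sqrt (G z + ε)) * (-(2 * q z * D z * W (z - Δ z)))) z := by
        intro z hz
        exact (Real.hasDerivAt_sqrt (hGε z).ne').comp z ((hG z hz).add_const ε)
      have hbound2 : ∀ z ∈ Set.Ico (0:ℝ) (Real.pi/2),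
          ‖1 / (2 * Real.sqrt (G z + ε)) * (-(2 * q z * D z * W (z - Δ z)))‖ ≤ 2 * B := by
        intro z hz
        set r := Real.sqrt (G z + ε) with hrdef
        have hr : 0 < r := Real.sqrt_pos.mpr (hGε z)
        have hDz : |D z| ≤ r / p1 := by
          rw [le_div_iff₀ hp1]
          have h1 : (|D z| * p1)^2 ≤ G z + ε := by
            rw [mul_pow, sq_abs]
            simp only [hGdef]
            nlinarith [sq_nonneg (s * (W z - p1 * Real.cos (s * z / p1)
              + p1 * Real.sin (s * z / p1))), hε.le]
          calc |D z| * p1 = Real.sqrt ((|D z| * p1)^2) := (Real.sqrt_sq (by positivity)).symm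
            _ ≤ Real.sqrt (G z + ε) := Real.sqrt_le_sqrt h1
        have hy0 : 0 ≤ z - Δ z := hret1 z hz
        have hy1 : z - Δ z ≤ z := by have := hΔnonneg z (Or.inl hz); linarith
        have hWd : |W (z - Δ z)| ≤ 2 * p1 :=
          hWb (z - Δ z) ⟨hy0, hy1.trans hz.2.le⟩
        have hqb := hqB z hz
        have habs : |(-(2 * q z * D z * W (z - Δ z)))| ≤ 2 * B * (r / p1) * (2 * p1) := by
          rw [abs_neg, abs_mul, abs_mul, abs_mul, abs_two]
          gcongr
        rw [Real.norm_eq_abs, abs_mul]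
        have h1r : |1 / (2 * r)| = 1 / (2 * r) := abs_of_pos (by positivity)
        rw [h1r]
        calc 1 / (2 * r) * |(-(2 * q z * D z * W (z - Δ z)))|
            ≤ 1 / (2 * r) * (2 * B * (r / p1) * (2 * p1)) := by
              apply mul_le_mul_of_nonneg_left habs (by positivity)
          _ = 2 * B := by field_simp
      have hmvt2 := norm_image_sub_le_of_norm_deriv_right_le_segment
        (f := fun w => Real.sqrt (G w + ε)) (a := 0) (b := Real.pi/2)
        (f' := fun z => 1 / (2 * Real.sqrt (G z + ε)) * (-(2 * q z * D z * W (z - Δ z))))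
        (fun z hz => (hf z hz).continuousAt.continuousWithinAt)
        (fun z hz => (hf z ⟨hz.1, hz.2.le⟩).hasDerivWithinAt)
        hbound2 y hy
      rw [Real.norm_eq_abs] at hmvt2
      have h1 := (abs_le.mp hmvt2).2
      simp only [hG0, zero_add] at h1
      linarith
    have t1 : Tendsto (fun ε : ℝ => Real.sqrt (G y + ε)) (nhdsWithin 0 (Set.Ioi 0))
        (nhds (Real.sqrt (G y))) := by
      have hcont : Continuous (fun ε : ℝ => Real.sqrt (G y + ε)) :=
        Real.continuous_sqrt.comp (continuous_const.add continuous_id)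
      have h := hcont.tendsto 0
      simp only [add_zero] at h
      exact h.mono_left nhdsWithin_le_nhds
    have t2 : Tendsto (fun ε : ℝ => Real.sqrt ε + 2 * B * y) (nhdsWithin 0 (Set.Ioi 0))
        (nhds (2 * B * y)) := by
      have hcont : Continuous (fun ε : ℝ => Real.sqrt ε + 2 * B * y) :=
        Real.continuous_sqrt.add continuous_const
      have h := hcont.tendsto 0
      simp only [Real.sqrt_zero, zero_add] at h
      exact h.mono_left nhdsWithin_le_nhds
    exact le_of_tendsto_of_tendsto t1 t2 (eventually_mem_nhdsWithin.mono main)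
  -- conclusion
  have hGx := key2 x hx
  have hDx : |D x| ≤ B * Real.pi / p1 + 1 := by
    have h1 : (|D x| * p1)^2 ≤ G x := by
      rw [mul_pow, sq_abs]
      simp only [hGdef]
      nlinarith [sq_nonneg (s * (W x - p1 * Real.cos (s * x / p1)
        + p1 * Real.sin (s * x / p1)))]
    have h2 : |D x| * p1 ≤ Real.sqrt (G x) := by
      calc |D x| * p1 = Real.sqrt ((|D x| * p1)^2) := (Real.sqrt_sq (by positivity)).symm
        _ ≤ Real.sqrt (G x) := Real.sqrt_le_sqrt h1
    have h3 : 2 * B * x ≤ B * Real.pi := by nlinarith [hx.2, hB0]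
    have h4 : |D x| * p1 ≤ B * Real.pi := by linarith
    have h5 : |D x| ≤ B * Real.pi / p1 := (le_div_iff₀ hp1).mpr h4
    linarith
  have hsin4 : Real.sqrt 2 * Real.sin (s * x / p1 + Real.pi/4)
      = Real.sin (s * x / p1) + Real.cos (s * x / p1) := by
    rw [Real.sin_add, Real.sin_pi_div_four, Real.cos_pi_div_four]
    have h2 : Real.sqrt 2 * Real.sqrt 2 = 2 := Real.mul_self_sqrt (by norm_num)
    linear_combination (Real.sin (s * x / p1) + Real.cos (s * x / p1)) / 2 * h2
  have hfin : W' x + Real.sqrt 2 * s * Real.sin (s * x / p1 + Real.pi/4) = D x := by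
    simp only [hDdef]
    linear_combination s * hsin4
  rw [hfin]
  exact hDx
end
end

section
/- (Asymptotics (27) for w₂.) There exist constants C > 0 and s₀ > 0 such that for all s ≥ s₀ and all x ∈ [π/2,π], |w₂(x,s²) − (√2·γ₁·p₁/δ₁)·cos( s·π(p₂−p₁)/(2p₁p₂) + s·x/p₂ + π/4 )| ≤ C/s. -/
open Set Filter intervalIntegral MeasureTheory


lemma aux_bdd_Ico (f : ℝ → ℝ) (a b L : ℝ) (hab : a < b)
    (hc : ContinuousOn f (Set.Ico a b))
    (hl : Filter.Tendsto f (nhdsWithin b (Set.Iio b)) (nhds L)) :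
    ∃ Q : ℝ, 0 ≤ Q ∧ ∀ x ∈ Set.Ico a b, |f x| ≤ Q := by
  have h1 : ∀ᶠ x in nhdsWithin b (Set.Iio b), |f x| < |L| + 1 :=
    (hl.abs).eventually_lt_const (lt_add_one |L|)
  obtain ⟨c, hcb, hsub⟩ := (mem_nhdsLT_iff_exists_Ioo_subset).1 h1
  set c' := max c a with hc'
  have hc'b : c' < b := max_lt hcb hab
  have hIccsub : Set.Icc a c' ⊆ Set.Ico a b := fun y hy => ⟨hy.1, lt_of_le_of_lt hy.2 hc'b⟩
  obtain ⟨C, hC⟩ := IsCompact.exists_bound_of_continuousOn isCompact_Icc (hc.mono hIccsub)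
  refine ⟨max (max C (|L|+1)) 0, le_max_right _ _, ?_⟩
  intro x hx
  rcases le_or_gt x c' with h | h
  · have : ‖f x‖ ≤ C := hC x ⟨hx.1, h⟩
    rw [Real.norm_eq_abs] at this
    exact this.trans ((le_max_left _ _).trans (le_max_left _ _))
  · have hxm : x ∈ Set.Ioo c b := ⟨lt_of_le_of_lt (le_max_left c a) h, hx.2⟩
    exact (le_of_lt (hsub hxm)).trans ((le_max_right _ _).trans (le_max_left _ _))

lemma aux_bdd_Ioc (f : ℝ → ℝ) (a b L : ℝ) (hab : a < b)
    (hc : ContinuousOn f (Set.Ioc a b))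
    (hl : Filter.Tendsto f (nhdsWithin a (Set.Ioi a)) (nhds L)) :
    ∃ Q : ℝ, 0 ≤ Q ∧ ∀ x ∈ Set.Ioc a b, |f x| ≤ Q := by
  have h1 : ∀ᶠ x in nhdsWithin a (Set.Ioi a), |f x| < |L| + 1 :=
    (hl.abs).eventually_lt_const (lt_add_one |L|)
  obtain ⟨c, hcb, hsub⟩ := (mem_nhdsGT_iff_exists_Ioo_subset).1 h1
  set c' := min c b with hc'
  have hc'b : a < c' := lt_min hcb hab
  have hIccsub : Set.Icc c' b ⊆ Set.Ioc a b := fun y hy => ⟨lt_of_lt_of_le hc'b hy.1, hy.2⟩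
  obtain ⟨C, hC⟩ := IsCompact.exists_bound_of_continuousOn isCompact_Icc (hc.mono hIccsub)
  refine ⟨max (max C (|L|+1)) 0, le_max_right _ _, ?_⟩
  intro x hx
  rcases le_or_gt c' x with h | h
  · have : ‖f x‖ ≤ C := hC x ⟨h, hx.2⟩
    rw [Real.norm_eq_abs] at this
    exact this.trans ((le_max_left _ _).trans (le_max_left _ _))
  · have hxm : x ∈ Set.Ioo a c := ⟨hx.1, lt_of_lt_of_le h (min_le_left c b)⟩
    exact (le_of_lt (hsub hxm)).trans ((le_max_right _ _).trans (le_max_left _ _))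

lemma aux_integrable_Ioo (g : ℝ → ℝ) (a b M : ℝ) (hab : a ≤ b)
    (hc : ContinuousOn g (Set.Ioo a b)) (hM : ∀ x ∈ Set.Ioo a b, |g x| ≤ M) :
    IntervalIntegrable g volume a b := by
  rw [intervalIntegrable_iff_integrableOn_Ioc_of_le hab]
  have h1 : MeasureTheory.IntegrableOn g (Set.Ioo a b) volume := by
    refine ⟨hc.aestronglyMeasurable measurableSet_Ioo, ?_⟩
    apply MeasureTheory.HasFiniteIntegral.restrict_of_bounded (C := M) measure_Ioo_lt_top
    rw [MeasureTheory.ae_restrict_iff' measurableSet_Ioo]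
    exact Filter.Eventually.of_forall (fun x hx => by rw [Real.norm_eq_abs]; exact hM x hx)
  exact h1.congr_set_ae (MeasureTheory.Ioo_ae_eq_Ioc).symm

lemma aux_tri (a1 a2 c1 s1 : ℝ) (hc : |c1| ≤ 1) (hs : |s1| ≤ 1) :
    |a1*c1 + a2*s1| ≤ |a1| + |a2| := by
  calc |a1*c1 + a2*s1| ≤ |a1*c1| + |a2*s1| := abs_add_le _ _
    _ ≤ |a1| + |a2| := by
        rw [abs_mul, abs_mul]
        nlinarith [abs_nonneg a1, abs_nonneg a2]

noncomputable section

lemma aux_core (p s a b G : ℝ) (w w' w'' g : ℝ → ℝ)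
    (hp : 0 < p) (hs : 0 < s) (hab : a ≤ b) (hG : 0 ≤ G)
    (hd : ∀ x ∈ Set.Icc a b, HasDerivAt w (w' x) x ∧ HasDerivAt w' (w'' x) x)
    (heq : ∀ x ∈ Set.Icc a b, p^2 * w'' x + g x + s^2 * w x = 0)
    (hgi : IntervalIntegrable g volume a b)
    (hgb : ∀ x ∈ Set.Ioo a b, |g x| ≤ G) :
    ∀ x ∈ Set.Icc a b, ∃ e1 e2 : ℝ,
      |e1| ≤ G*(b-a)/(p*s) ∧ |e2| ≤ G*(b-a)/(p*s) ∧
      w x = ((w a * Real.cos (s*a/p) - (p/s) * w' a * Real.sin (s*a/p)) + e1) * Real.cos (s*x/p)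
          + ((w a * Real.sin (s*a/p) + (p/s) * w' a * Real.cos (s*a/p)) + e2) * Real.sin (s*x/p)
      ∧
      w' x = (s/p) * (-((w a * Real.cos (s*a/p) - (p/s) * w' a * Real.sin (s*a/p)) + e1)
                * Real.sin (s*x/p)
          + ((w a * Real.sin (s*a/p) + (p/s) * w' a * Real.cos (s*a/p)) + e2)
                * Real.cos (s*x/p)) := by
  have hp' : p ≠ 0 := ne_of_gt hp
  have hs' : s ≠ 0 := ne_of_gt hs
  set A : ℝ → ℝ := fun t => w t * Real.cos (s*t/p) - (p/s) * w' t * Real.sin (s*t/p) with hA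
  set B : ℝ → ℝ := fun t => w t * Real.sin (s*t/p) + (p/s) * w' t * Real.cos (s*t/p) with hB
  have hlin : ∀ t : ℝ, HasDerivAt (fun t => s*t/p) (s/p) t := by
    intro t
    have := ((hasDerivAt_id t).const_mul s).div_const p
    simpa using this
  have hAd : ∀ t ∈ Set.Icc a b,
      HasDerivAt A ((1/(p*s)) * (Real.sin (s*t/p) * g t)) t := by
    intro t ht
    obtain ⟨h1, h2⟩ := hd t ht
    have hcos : HasDerivAt (fun t => Real.cos (s*t/p)) (-Real.sin (s*t/p) * (s/p)) t :=
      (hlin t).cos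
    have hsin : HasDerivAt (fun t => Real.sin (s*t/p)) (Real.cos (s*t/p) * (s/p)) t :=
      (hlin t).sin
    have h3 := (h1.mul hcos).sub ((h2.const_mul (p/s)).mul hsin)
    refine h3.congr_deriv ?_
    have hE := heq t ht
    have hw'' : w'' t = -(g t + s^2 * w t)/p^2 := by
      have hE := heq t ht
      field_simp
      linarith
    rw [hw'']
    field_simp
    ring
  have hBd : ∀ t ∈ Set.Icc a b,
      HasDerivAt B (-(1/(p*s)) * (Real.cos (s*t/p) * g t)) t := by
    intro t ht
    obtain ⟨h1, h2⟩ := hd t ht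
    have hcos : HasDerivAt (fun t => Real.cos (s*t/p)) (-Real.sin (s*t/p) * (s/p)) t :=
      (hlin t).cos
    have hsin : HasDerivAt (fun t => Real.sin (s*t/p)) (Real.cos (s*t/p) * (s/p)) t :=
      (hlin t).sin
    have h3 := (h1.mul hsin).add ((h2.const_mul (p/s)).mul hcos)
    refine h3.congr_deriv ?_
    have hw'' : w'' t = -(g t + s^2 * w t)/p^2 := by
      have hE := heq t ht
      field_simp
      linarith
    rw [hw'']
    field_simp
    ring
  -- a.e. bound helper
  have haeb : ∀ᵐ t : ℝ, t ≠ b := by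
    have : (volume : Measure ℝ) {b} = 0 := measure_singleton b
    rw [MeasureTheory.ae_iff]
    convert this using 2
    ext y
    simp
  intro x hx
  have hsub : Set.uIcc a x ⊆ Set.Icc a b := by
    rw [Set.uIcc_of_le hx.1]
    exact Set.Icc_subset_Icc le_rfl hx.2
  have hgix : IntervalIntegrable g volume a x :=
    hgi.mono_set (by rw [Set.uIcc_of_le hx.1, Set.uIcc_of_le hab]; exact Set.Icc_subset_Icc le_rfl hx.2)
  have hcsin : ContinuousOn (fun t => Real.sin (s*t/p)) (Set.uIcc a x) :=
    (Real.continuous_sin.comp ((continuous_const.mul continuous_id).div_const p)).continuousOn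
  have hccos : ContinuousOn (fun t => Real.cos (s*t/p)) (Set.uIcc a x) :=
    (Real.continuous_cos.comp ((continuous_const.mul continuous_id).div_const p)).continuousOn
  have hint1 : IntervalIntegrable (fun t => (1/(p*s)) * (Real.sin (s*t/p) * g t)) volume a x :=
    (hgix.continuousOn_mul hcsin).const_mul _
  have hint2 : IntervalIntegrable (fun t => -(1/(p*s)) * (Real.cos (s*t/p) * g t)) volume a x :=
    (hgix.continuousOn_mul hccos).const_mul _
  have hFTC1 := intervalIntegral.integral_eq_sub_of_hasDerivAt
    (f := A) (f' := fun t => (1/(p*s)) * (Real.sin (s*t/p) * g t))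
    (fun t ht => hAd t (hsub ht)) hint1
  have hFTC2 := intervalIntegral.integral_eq_sub_of_hasDerivAt
    (f := B) (f' := fun t => -(1/(p*s)) * (Real.cos (s*t/p) * g t))
    (fun t ht => hBd t (hsub ht)) hint2
  refine ⟨∫ t in a..x, (1/(p*s)) * (Real.sin (s*t/p) * g t),
          ∫ t in a..x, -(1/(p*s)) * (Real.cos (s*t/p) * g t), ?_, ?_, ?_, ?_⟩
  · have hb : ∀ᵐ t : ℝ, t ∈ Set.uIoc a x → |(1/(p*s)) * (Real.sin (s*t/p) * g t)| ≤ 1/(p*s) * G := by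
      filter_upwards [haeb] with t htb htI
      rw [Set.uIoc_of_le hx.1] at htI
      have htoo : t ∈ Set.Ioo a b := ⟨htI.1, lt_of_le_of_ne (le_trans htI.2 hx.2) htb⟩
      have := hgb t htoo
      rw [abs_mul, abs_mul]
      have h1 : |Real.sin (s*t/p)| ≤ 1 := Real.abs_sin_le_one _
      have h0 : |(1:ℝ)/(p*s)| = 1/(p*s) := abs_of_pos (by positivity)
      rw [h0]
      have : |Real.sin (s*t/p)| * |g t| ≤ 1 * G :=
        mul_le_mul h1 this (abs_nonneg _) zero_le_one
      nlinarith [le_of_lt (one_div_pos.mpr (mul_pos hp hs) : (0:ℝ) < 1/(p*s))]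
    have := intervalIntegral.norm_integral_le_of_norm_le_const_ae
      (f := fun t => (1/(p*s)) * (Real.sin (s*t/p) * g t)) (C := 1/(p*s)*G) (by
        filter_upwards [hb] with t ht hti
        rw [Real.norm_eq_abs]
        exact ht hti)
    rw [Real.norm_eq_abs] at this
    calc |∫ t in a..x, (1/(p*s)) * (Real.sin (s*t/p) * g t)| ≤ 1/(p*s)*G * |x - a| := this
      _ ≤ 1/(p*s)*G*(b-a) := by
          rw [abs_of_nonneg (by linarith [hx.1] : (0:ℝ) ≤ x - a)]
          exact mul_le_mul_of_nonneg_left (by linarith [hx.2]) (by positivity)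
      _ = G*(b-a)/(p*s) := by ring
  · have hb : ∀ᵐ t : ℝ, t ∈ Set.uIoc a x → |-(1/(p*s)) * (Real.cos (s*t/p) * g t)| ≤ 1/(p*s) * G := by
      filter_upwards [haeb] with t htb htI
      rw [Set.uIoc_of_le hx.1] at htI
      have htoo : t ∈ Set.Ioo a b := ⟨htI.1, lt_of_le_of_ne (le_trans htI.2 hx.2) htb⟩
      have hgt := hgb t htoo
      rw [abs_mul, abs_neg, abs_mul]
      have h1 : |Real.cos (s*t/p)| ≤ 1 := Real.abs_cos_le_one _
      have h0 : |(1:ℝ)/(p*s)| = 1/(p*s) := abs_of_pos (by positivity)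
      rw [h0]
      have : |Real.cos (s*t/p)| * |g t| ≤ 1 * G :=
        mul_le_mul h1 hgt (abs_nonneg _) zero_le_one
      nlinarith [le_of_lt (one_div_pos.mpr (mul_pos hp hs) : (0:ℝ) < 1/(p*s))]
    have := intervalIntegral.norm_integral_le_of_norm_le_const_ae
      (f := fun t => -(1/(p*s)) * (Real.cos (s*t/p) * g t)) (C := 1/(p*s)*G) (by
        filter_upwards [hb] with t ht hti
        rw [Real.norm_eq_abs]
        exact ht hti)
    rw [Real.norm_eq_abs] at this
    calc |∫ t in a..x, -(1/(p*s)) * (Real.cos (s*t/p) * g t)| ≤ 1/(p*s)*G * |x - a| := this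
      _ ≤ 1/(p*s)*G*(b-a) := by
          rw [abs_of_nonneg (by linarith [hx.1] : (0:ℝ) ≤ x - a)]
          exact mul_le_mul_of_nonneg_left (by linarith [hx.2]) (by positivity)
      _ = G*(b-a)/(p*s) := by ring
  · have hFTC1' : ∫ t in a..x, (1/(p*s)) * (Real.sin (s*t/p) * g t) = A x - A a := hFTC1
    have hAa : A a = w a * Real.cos (s*a/p) - (p/s) * w' a * Real.sin (s*a/p) := rfl
    have hBa : B a = w a * Real.sin (s*a/p) + (p/s) * w' a * Real.cos (s*a/p) := rfl
    have hFTC2' : ∫ t in a..x, -(1/(p*s)) * (Real.cos (s*t/p) * g t) = B x - B a := hFTC2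
    have hid : A x * Real.cos (s*x/p) + B x * Real.sin (s*x/p) = w x := by
      have hpc := Real.sin_sq_add_cos_sq (s*x/p)
      simp only [hA, hB]
      linear_combination (w x) * hpc
    rw [← hAa, ← hBa]
    have h1 : (A a + ∫ t in a..x, (1/(p*s)) * (Real.sin (s*t/p) * g t)) = A x := by
      rw [hFTC1']; ring
    have h2 : (B a + ∫ t in a..x, -(1/(p*s)) * (Real.cos (s*t/p) * g t)) = B x := by
      rw [hFTC2']; ring
    rw [h1, h2, hid]
  · have hFTC1' : ∫ t in a..x, (1/(p*s)) * (Real.sin (s*t/p) * g t) = A x - A a := hFTC1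
    have hAa : A a = w a * Real.cos (s*a/p) - (p/s) * w' a * Real.sin (s*a/p) := rfl
    have hBa : B a = w a * Real.sin (s*a/p) + (p/s) * w' a * Real.cos (s*a/p) := rfl
    have hFTC2' : ∫ t in a..x, -(1/(p*s)) * (Real.cos (s*t/p) * g t) = B x - B a := hFTC2
    have hid : (s/p) * (-(A x) * Real.sin (s*x/p) + B x * Real.cos (s*x/p)) = w' x := by
      have hpc := Real.sin_sq_add_cos_sq (s*x/p)
      simp only [hA, hB]
      field_simp
      linear_combination (p * w' x) * hpc
    rw [← hAa, ← hBa]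
    have h1 : (A a + ∫ t in a..x, (1/(p*s)) * (Real.sin (s*t/p) * g t)) = A x := by
      rw [hFTC1']; ring
    have h2 : (B a + ∫ t in a..x, -(1/(p*s)) * (Real.cos (s*t/p) * g t)) = B x := by
      rw [hFTC2']; ring
    rw [h1, h2, hid]

set_option maxHeartbeats 2000000 in
theorem stmt10
    (p1 p2 γ1 γ2 δ1 δ2 d : ℝ) (q Δ : ℝ → ℝ)
    (hp1 : 0 < p1) (hp2 : 0 < p2)
    (hδ1 : δ1 ≠ 0) (hδ2 : δ2 ≠ 0)
    (hγδ : γ1 * δ2 * p1 = γ2 * δ1 * p2)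
    (hqc1 : ContinuousOn q (Set.Ico 0 (Real.pi/2)))
    (hqc2 : ContinuousOn q (Set.Ioc (Real.pi/2) Real.pi))
    (hqlim1 : ∃ L : ℝ, Filter.Tendsto q (nhdsWithin (Real.pi/2) (Set.Iio (Real.pi/2))) (nhds L))
    (hqlim2 : ∃ L : ℝ, Filter.Tendsto q (nhdsWithin (Real.pi/2) (Set.Ioi (Real.pi/2))) (nhds L))
    (hΔc1 : ContinuousOn Δ (Set.Ico 0 (Real.pi/2)))
    (hΔc2 : ContinuousOn Δ (Set.Ioc (Real.pi/2) Real.pi))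
    (hΔlim1 : ∃ L : ℝ, Filter.Tendsto Δ (nhdsWithin (Real.pi/2) (Set.Iio (Real.pi/2))) (nhds L))
    (hΔlim2 : ∃ L : ℝ, Filter.Tendsto Δ (nhdsWithin (Real.pi/2) (Set.Ioi (Real.pi/2))) (nhds L))
    (hΔnonneg : ∀ x ∈ Set.Ico (0:ℝ) (Real.pi/2) ∪ Set.Ioc (Real.pi/2) Real.pi, 0 ≤ Δ x)
    (hret1 : ∀ x ∈ Set.Ico (0:ℝ) (Real.pi/2), 0 ≤ x - Δ x)
    (hret2 : ∀ x ∈ Set.Ioc (Real.pi/2) Real.pi, Real.pi/2 ≤ x - Δ x)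
    (w1 w1' w1'' : ℝ → ℝ → ℝ)
    (hw1d : ∀ lam : ℝ, 0 < lam → ∀ x ∈ Set.Icc (0:ℝ) (Real.pi/2),
      HasDerivAt (w1 lam) (w1' lam x) x ∧ HasDerivAt (w1' lam) (w1'' lam x) x)
    (hw1eq : ∀ lam : ℝ, 0 < lam → ∀ x ∈ Set.Icc (0:ℝ) (Real.pi/2),
      p1^2 * w1'' lam x + q x * w1 lam (x - Δ x) + lam * w1 lam x = 0)
    (hw1ic : ∀ lam : ℝ, 0 < lam → w1 lam 0 = p1 ∧ w1' lam 0 = -Real.sqrt lam)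
    (w2 w2' w2'' : ℝ → ℝ → ℝ)
    (hw2d : ∀ lam : ℝ, 0 < lam → ∀ x ∈ Set.Icc (Real.pi/2) Real.pi,
      HasDerivAt (w2 lam) (w2' lam x) x ∧ HasDerivAt (w2' lam) (w2'' lam x) x)
    (hw2eq : ∀ lam : ℝ, 0 < lam → ∀ x ∈ Set.Icc (Real.pi/2) Real.pi,
      p2^2 * w2'' lam x + q x * w2 lam (x - Δ x) + lam * w2 lam x = 0)
    (hw2ic : ∀ lam : ℝ, 0 < lam →
      w2 lam (Real.pi/2) = (γ1/δ1) * w1 lam (Real.pi/2) ∧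
      w2' lam (Real.pi/2) = (γ2/δ2) * w1' lam (Real.pi/2))
    :
    ∃ C : ℝ, 0 < C ∧ ∃ s0 : ℝ, 0 < s0 ∧ ∀ s : ℝ, s0 ≤ s → ∀ x ∈ Set.Icc (Real.pi/2) Real.pi,
      |w2 (s^2) x - (Real.sqrt 2 * γ1 * p1 / δ1) *
        Real.cos (s * Real.pi * (p2 - p1) / (2*p1*p2) + s * x / p2 + Real.pi/4)| ≤ C / s := by
  have hπ : (0:ℝ) < Real.pi := Real.pi_pos
  have hπ2 : (0:ℝ) < Real.pi/2 := by positivity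
  have hp1' : p1 ≠ 0 := ne_of_gt hp1
  have hp2' : p2 ≠ 0 := ne_of_gt hp2
  obtain ⟨L1, hL1⟩ := hqlim1
  obtain ⟨L2, hL2⟩ := hqlim2
  obtain ⟨Q1, hQ1n, hQ1⟩ := aux_bdd_Ico q 0 (Real.pi/2) L1 hπ2 hqc1 hL1
  obtain ⟨Q2, hQ2n, hQ2⟩ := aux_bdd_Ioc q (Real.pi/2) Real.pi L2 (by linarith) hqc2 hL2
  set ρ : ℝ := γ1/δ1 with hρ
  set K : ℝ := |ρ| * (2*p1 + 4*Real.pi*Q1) with hK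
  have hKn : 0 ≤ K := by positivity
  refine ⟨8*Real.pi*Q2*K/p2 + 4*Real.pi*(abs ρ)*Q1 + 1, by positivity,
    1 + 2*Real.pi*Q1/p1 + 2*Real.pi*Q2/p2, by positivity, ?_⟩
  intro s hs x hx
  have hs1 : (1:ℝ) ≤ s := by
    refine le_trans ?_ hs
    have h1 : (0:ℝ) ≤ 2*Real.pi*Q1/p1 := by positivity
    have h2 : (0:ℝ) ≤ 2*Real.pi*Q2/p2 := by positivity
    linarith
  have hs0 : (0:ℝ) < s := by linarith
  have hs0' : s ≠ 0 := ne_of_gt hs0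
  have hA1 : 2*Real.pi*Q1 ≤ p1*s := by
    have h1 : 2*Real.pi*Q1/p1 ≤ s := by
      refine le_trans ?_ hs
      have h2 : (0:ℝ) ≤ 2*Real.pi*Q2/p2 := by positivity
      linarith
    calc 2*Real.pi*Q1 = p1 * (2*Real.pi*Q1/p1) := by field_simp
      _ ≤ p1 * s := mul_le_mul_of_nonneg_left h1 hp1.le
  have hA2 : 2*Real.pi*Q2 ≤ p2*s := by
    have h1 : 2*Real.pi*Q2/p2 ≤ s := by
      refine le_trans ?_ hs
      have h2 : (0:ℝ) ≤ 2*Real.pi*Q1/p1 := by positivity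
      linarith
    calc 2*Real.pi*Q2 = p2 * (2*Real.pi*Q2/p2) := by field_simp
      _ ≤ p2 * s := mul_le_mul_of_nonneg_left h1 hp2.le
  set lam := s^2 with hlam
  have hlam0 : 0 < lam := by positivity
  have hsq : Real.sqrt lam = s := by rw [hlam]; exact Real.sqrt_sq hs0.le
  obtain ⟨hic1, hic2⟩ := hw1ic lam hlam0
  have hic2' : w1' lam 0 = -s := by rw [hic2, hsq]
  -- Stage 1
  have hw1cont : ContinuousOn (w1 lam) (Set.Icc 0 (Real.pi/2)) :=
    fun y hy => ((hw1d lam hlam0 y hy).1).continuousAt.continuousWithinAt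
  obtain ⟨z1, hz1m, hz1max⟩ := isCompact_Icc.exists_isMaxOn ⟨0, le_rfl, hπ2.le⟩ hw1cont.abs
  set M1 := |w1 lam z1| with hM1def
  have hM1 : ∀ y ∈ Set.Icc (0:ℝ) (Real.pi/2), |w1 lam y| ≤ M1 := fun y hy => hz1max hy
  have hM1n : (0:ℝ) ≤ M1 := abs_nonneg _
  set g1 : ℝ → ℝ := fun t => q t * w1 lam (t - Δ t) with hg1
  have hmaps1 : ∀ t ∈ Set.Ico (0:ℝ) (Real.pi/2), (t - Δ t) ∈ Set.Icc (0:ℝ) (Real.pi/2) := by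
    intro t ht
    refine ⟨hret1 t ht, ?_⟩
    have h0 := hΔnonneg t (Or.inl ht)
    linarith [ht.2.le]
  have hg1c : ContinuousOn g1 (Set.Ioo 0 (Real.pi/2)) := by
    apply ContinuousOn.mul (hqc1.mono Set.Ioo_subset_Ico_self)
    exact ContinuousOn.comp hw1cont
      ((continuousOn_id).sub (hΔc1.mono Set.Ioo_subset_Ico_self))
      (fun t ht => hmaps1 t (Set.Ioo_subset_Ico_self ht))
  have hg1b : ∀ t ∈ Set.Ioo (0:ℝ) (Real.pi/2), |g1 t| ≤ Q1 * M1 := by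
    intro t ht
    rw [abs_mul]
    exact mul_le_mul (hQ1 t (Set.Ioo_subset_Ico_self ht))
      (hM1 _ (hmaps1 t (Set.Ioo_subset_Ico_self ht))) (abs_nonneg _) hQ1n
  have hg1i : IntervalIntegrable g1 volume 0 (Real.pi/2) :=
    aux_integrable_Ioo _ _ _ _ hπ2.le hg1c hg1b
  have hcore1 := aux_core p1 s 0 (Real.pi/2) (Q1*M1) (w1 lam) (w1' lam) (w1'' lam) g1
    hp1 hs0 hπ2.le (by positivity) (hw1d lam hlam0) (fun y hy => hw1eq lam hlam0 y hy) hg1i hg1b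
  have hval0 : ∀ e1 e2 : ℝ,
      ((w1 lam 0 * Real.cos (s*0/p1) - p1/s * w1' lam 0 * Real.sin (s*0/p1)) + e1) = p1 + e1 ∧
      ((w1 lam 0 * Real.sin (s*0/p1) + p1/s * w1' lam 0 * Real.cos (s*0/p1)) + e2) = -p1 + e2 := by
    intro e1 e2
    have harg0 : s*(0:ℝ)/p1 = 0 := by ring
    rw [harg0, hic1, hic2', Real.cos_zero, Real.sin_zero]
    constructor
    · ring
    · field_simp
      ring
  obtain ⟨ez1, ez2, hez1, hez2, hezval, -⟩ := hcore1 z1 hz1m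
  obtain ⟨hA0, hB0⟩ := hval0 ez1 ez2
  rw [hA0, hB0] at hezval
  have habs_split : ∀ u v c' s' : ℝ, |c'| ≤ 1 → |s'| ≤ 1 →
      |(p1+u) * c' + (-p1+v) * s'| ≤ 2*p1 + (|u| + |v|) := by
    intro u v c' s' hc hsx
    calc |(p1+u) * c' + (-p1+v) * s'| ≤ |p1+u| + |-p1+v| := aux_tri _ _ _ _ hc hsx
      _ ≤ (p1 + |u|) + (p1 + |v|) := by
          have h1 : |p1+u| ≤ |p1| + |u| := abs_add_le _ _
          have h2 : |-p1+v| ≤ |-p1| + |v| := abs_add_le _ _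
          rw [abs_of_pos hp1] at h1
          rw [abs_neg, abs_of_pos hp1] at h2
          linarith
      _ = 2*p1 + (|u| + |v|) := by ring
  have hq1small : Q1*M1*(Real.pi/2-0)/(p1*s) ≤ M1/4 := by
    rw [div_le_iff₀ (by positivity)]
    linarith [mul_nonneg hM1n (sub_nonneg.2 hA1)]
  have hM1b : M1 ≤ 4*p1 := by
    have h1 : M1 ≤ 2*p1 + (|ez1| + |ez2|) := by
      rw [hM1def, hezval]
      exact habs_split _ _ _ _ (Real.abs_cos_le_one _) (Real.abs_sin_le_one _)
    have h2 := hez1.trans hq1small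
    have h3 := hez2.trans hq1small
    linarith
  obtain ⟨e1, e2, he1, he2, hval, hder⟩ := hcore1 (Real.pi/2) ⟨hπ2.le, le_rfl⟩
  obtain ⟨hA0', hB0'⟩ := hval0 e1 e2
  rw [hA0', hB0'] at hval hder
  have he1b : |e1| ≤ 2*Real.pi*Q1/s := by
    refine he1.trans ?_
    rw [div_le_div_iff₀ (by positivity) hs0]
    linarith [mul_nonneg (mul_nonneg (mul_nonneg hQ1n hs0.le) (sub_nonneg.2 hM1b)) hπ.le]
  have he2b : |e2| ≤ 2*Real.pi*Q1/s := by
    refine he2.trans ?_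
    rw [div_le_div_iff₀ (by positivity) hs0]
    linarith [mul_nonneg (mul_nonneg (mul_nonneg hQ1n hs0.le) (sub_nonneg.2 hM1b)) hπ.le]
  -- Stage 2
  obtain ⟨hic21, hic22⟩ := hw2ic lam hlam0
  have hw2cont : ContinuousOn (w2 lam) (Set.Icc (Real.pi/2) Real.pi) :=
    fun y hy => ((hw2d lam hlam0 y hy).1).continuousAt.continuousWithinAt
  obtain ⟨z2, hz2m, hz2max⟩ := isCompact_Icc.exists_isMaxOn ⟨Real.pi/2, le_rfl, by linarith⟩
    hw2cont.abs
  set M2 := |w2 lam z2| with hM2def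
  have hM2 : ∀ y ∈ Set.Icc (Real.pi/2) Real.pi, |w2 lam y| ≤ M2 := fun y hy => hz2max hy
  have hM2n : (0:ℝ) ≤ M2 := abs_nonneg _
  set g2 : ℝ → ℝ := fun t => q t * w2 lam (t - Δ t) with hg2
  have hmaps2 : ∀ t ∈ Set.Ioc (Real.pi/2) Real.pi, (t - Δ t) ∈ Set.Icc (Real.pi/2) Real.pi := by
    intro t ht
    refine ⟨hret2 t ht, ?_⟩
    have h0 := hΔnonneg t (Or.inr ht)
    linarith [ht.2]
  have hg2c : ContinuousOn g2 (Set.Ioo (Real.pi/2) Real.pi) := by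
    apply ContinuousOn.mul (hqc2.mono Set.Ioo_subset_Ioc_self)
    exact ContinuousOn.comp hw2cont
      ((continuousOn_id).sub (hΔc2.mono Set.Ioo_subset_Ioc_self))
      (fun t ht => hmaps2 t (Set.Ioo_subset_Ioc_self ht))
  have hg2b : ∀ t ∈ Set.Ioo (Real.pi/2) Real.pi, |g2 t| ≤ Q2 * M2 := by
    intro t ht
    rw [abs_mul]
    exact mul_le_mul (hQ2 t (Set.Ioo_subset_Ioc_self ht))
      (hM2 _ (hmaps2 t (Set.Ioo_subset_Ioc_self ht))) (abs_nonneg _) hQ2n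
  have hg2i : IntervalIntegrable g2 volume (Real.pi/2) Real.pi :=
    aux_integrable_Ioo _ _ _ _ (by linarith) hg2c hg2b
  have hcore2 := aux_core p2 s (Real.pi/2) Real.pi (Q2*M2) (w2 lam) (w2' lam) (w2'' lam) g2
    hp2 hs0 (by linarith) (by positivity) (hw2d lam hlam0) (fun y hy => hw2eq lam hlam0 y hy)
    hg2i hg2b
  -- initial data for stage 2
  have hW : w2 lam (Real.pi/2) =
      ρ * ((p1+e1) * Real.cos (s*(Real.pi/2)/p1) + (-p1+e2) * Real.sin (s*(Real.pi/2)/p1)) := by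
    rw [hic21, hval]
  have hD : p2/s * w2' lam (Real.pi/2) =
      ρ * (-(p1+e1) * Real.sin (s*(Real.pi/2)/p1) + (-p1+e2) * Real.cos (s*(Real.pi/2)/p1)) := by
    rw [hic22, hder, hρ]
    generalize Real.sin (s*(Real.pi/2)/p1) = S
    generalize Real.cos (s*(Real.pi/2)/p1) = Cc
    field_simp
    linear_combination (-(-((p1+e1) * S) + (-p1+e2) * Cc)) * hγδ
  
  have habs2 : |p1+e1| + |-p1+e2| ≤ 2*p1 + 4*Real.pi*Q1 := by
    have h1 : |p1+e1| ≤ |p1| + |e1| := abs_add_le _ _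
    have h2 : |-p1+e2| ≤ |-p1| + |e2| := abs_add_le _ _
    rw [abs_of_pos hp1] at h1
    rw [abs_neg, abs_of_pos hp1] at h2
    have hdl : 2*Real.pi*Q1/s ≤ 2*Real.pi*Q1 := div_le_self (by positivity) hs1
    linarith [he1b, he2b]
  have hWb : |w2 lam (Real.pi/2)| ≤ K := by
    rw [hW, abs_mul, hK]
    apply mul_le_mul_of_nonneg_left ?_ (abs_nonneg ρ)
    exact le_trans (aux_tri _ _ _ _ (Real.abs_cos_le_one _) (Real.abs_sin_le_one _)) habs2
  have hDb : |p2/s * w2' lam (Real.pi/2)| ≤ K := by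
    rw [hD, abs_mul, hK]
    apply mul_le_mul_of_nonneg_left ?_ (abs_nonneg ρ)
    refine le_trans (aux_tri _ _ _ _ (Real.abs_sin_le_one _) (Real.abs_cos_le_one _)) ?_
    rw [abs_neg]
    exact habs2
  set Ain : ℝ := w2 lam (Real.pi/2) * Real.cos (s*(Real.pi/2)/p2)
      - p2/s * w2' lam (Real.pi/2) * Real.sin (s*(Real.pi/2)/p2) with hAin
  set Bin : ℝ := w2 lam (Real.pi/2) * Real.sin (s*(Real.pi/2)/p2)
      + p2/s * w2' lam (Real.pi/2) * Real.cos (s*(Real.pi/2)/p2) with hBin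
  have hAinb : |Ain| ≤ 2*K := by
    have h := aux_tri (w2 lam (Real.pi/2)) (-(p2/s * w2' lam (Real.pi/2)))
      (Real.cos (s*(Real.pi/2)/p2)) (Real.sin (s*(Real.pi/2)/p2))
      (Real.abs_cos_le_one _) (Real.abs_sin_le_one _)
    rw [abs_neg] at h
    have heq : w2 lam (Real.pi/2) * Real.cos (s*(Real.pi/2)/p2)
        + -(p2/s * w2' lam (Real.pi/2)) * Real.sin (s*(Real.pi/2)/p2) = Ain := by
      rw [hAin]; ring
    rw [heq] at h
    linarith [hWb, hDb]
  have hBinb : |Bin| ≤ 2*K := by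
    have h := aux_tri (w2 lam (Real.pi/2)) (p2/s * w2' lam (Real.pi/2))
      (Real.sin (s*(Real.pi/2)/p2)) (Real.cos (s*(Real.pi/2)/p2))
      (Real.abs_sin_le_one _) (Real.abs_cos_le_one _)
    rw [← hBin] at h
    linarith [hWb, hDb]
  obtain ⟨f1, f2, hf1, hf2, hfval, -⟩ := hcore2 z2 hz2m
  have hq2small : Q2*M2*(Real.pi - Real.pi/2)/(p2*s) ≤ M2/4 := by
    rw [div_le_iff₀ (by positivity)]
    linarith [mul_nonneg hM2n (sub_nonneg.2 hA2)]
  have hM2b : M2 ≤ 8*K := by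
    have h1 : M2 ≤ |Ain + f1| + |Bin + f2| := by
      rw [hM2def, hfval]
      exact aux_tri _ _ _ _ (Real.abs_cos_le_one _) (Real.abs_sin_le_one _)
    have h2 : |Ain + f1| ≤ |Ain| + |f1| := abs_add_le _ _
    have h3 : |Bin + f2| ≤ |Bin| + |f2| := abs_add_le _ _
    linarith [hf1.trans hq2small, hf2.trans hq2small, hAinb, hBinb]
  obtain ⟨E1, E2, hE1, hE2, hvx, -⟩ := hcore2 x hx
  have hE1b : |E1| ≤ 4*Real.pi*Q2*K/(p2*s) := by
    refine hE1.trans ?_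
    rw [div_le_div_iff₀ (by positivity) (by positivity)]
    linarith [mul_nonneg (mul_nonneg (mul_nonneg (mul_pos hp2 hs0).le hπ.le) hQ2n)
      (sub_nonneg.2 hM2b)]
  have hE2b : |E2| ≤ 4*Real.pi*Q2*K/(p2*s) := by
    refine hE2.trans ?_
    rw [div_le_div_iff₀ (by positivity) (by positivity)]
    linarith [mul_nonneg (mul_nonneg (mul_nonneg (mul_pos hp2 hs0).le hπ.le) hQ2n)
      (sub_nonneg.2 hM2b)]
  have hphase : s * Real.pi * (p2 - p1) / (2*p1*p2) + s * x / p2 + Real.pi/4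
      = (s*(Real.pi/2)/p1 + (s*x/p2 - s*(Real.pi/2)/p2)) + Real.pi/4 := by
    field_simp
    ring
  rw [hphase]
  have h2 : Real.sqrt 2 * Real.sqrt 2 = 2 := Real.mul_self_sqrt (by norm_num)
  set ψ : ℝ := s*(Real.pi/2)/p1 + (s*x/p2 - s*(Real.pi/2)/p2) with hψ
  have hT : Real.sqrt 2 * γ1 * p1 / δ1 * Real.cos (ψ + Real.pi/4)
      = ρ * (p1 * Real.cos ψ - p1 * Real.sin ψ) := by
    rw [Real.cos_add, Real.cos_pi_div_four, Real.sin_pi_div_four, hρ]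
    generalize Real.cos ψ = Cc
    generalize Real.sin ψ = S
    field_simp
    linear_combination (γ1 * (Cc - S)) * h2
  have hkey : w2 lam x - Real.sqrt 2 * γ1 * p1 / δ1 * Real.cos (ψ + Real.pi/4)
      = E1 * Real.cos (s*x/p2) + E2 * Real.sin (s*x/p2)
        + ρ * (e1 * Real.cos ψ + e2 * Real.sin ψ) := by
    rw [hT, hvx, hAin, hBin, hW, hD, hψ]
    rw [Real.cos_add, Real.sin_add, Real.cos_sub, Real.sin_sub]
    ring
  rw [hkey]
  have htri1 := aux_tri E1 E2 (Real.cos (s*x/p2)) (Real.sin (s*x/p2))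
    (Real.abs_cos_le_one _) (Real.abs_sin_le_one _)
  have htri2 := aux_tri e1 e2 (Real.cos ψ) (Real.sin ψ)
    (Real.abs_cos_le_one _) (Real.abs_sin_le_one _)
  calc |E1 * Real.cos (s*x/p2) + E2 * Real.sin (s*x/p2)
        + ρ * (e1 * Real.cos ψ + e2 * Real.sin ψ)|
      ≤ |E1 * Real.cos (s*x/p2) + E2 * Real.sin (s*x/p2)|
        + |ρ * (e1 * Real.cos ψ + e2 * Real.sin ψ)| := abs_add_le _ _
    _ ≤ (|E1| + |E2|) + |ρ| * (|e1| + |e2|) := by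
        rw [abs_mul]
        have h3 := mul_le_mul_of_nonneg_left htri2 (abs_nonneg ρ)
        linarith [htri1]
    _ ≤ (4*Real.pi*Q2*K/(p2*s) + 4*Real.pi*Q2*K/(p2*s))
        + |ρ| * (2*Real.pi*Q1/s + 2*Real.pi*Q1/s) := by
        have h3 := mul_le_mul_of_nonneg_left (add_le_add he1b he2b) (abs_nonneg ρ)
        linarith [hE1b, hE2b]
    _ ≤ (8*Real.pi*Q2*K/p2 + 4*Real.pi*(abs ρ)*Q1 + 1)/s := by
        have hfin : (4*Real.pi*Q2*K/(p2*s) + 4*Real.pi*Q2*K/(p2*s))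
            + |ρ| * (2*Real.pi*Q1/s + 2*Real.pi*Q1/s)
            = (8*Real.pi*Q2*K/p2 + 4*Real.pi*(abs ρ)*Q1)/s := by
          field_simp
          ring
        rw [hfin]
        exact (div_le_div_iff_of_pos_right hs0).mpr (by linarith)
end
end
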